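/- arXiv:1311.1339 — 11 statements merged into one kernel-verified Lean document; each statement's English description precedes it below -/
import Mathlib

section
/- For every n ≥ 0, the code C_{N,K}(n) is a zero-padded zero-error code for DTPC(N,K), and every zero-padded zero-error code of length n for DTPC(N,K) has cardinality at most |C_{N,K}(n)|; that is, C_{N,K}(n) is a largest zero-padded zero-error code of length n. -/
/-- `Produces K x z`: the input sequence `x` (numbers of particles sent per slot) can
produce the output sequence `z` (of length `x.length + K`, numbers of particles received
per slot) through the channel DTPC(·, K): there are delays `d i j` (the number of
particles sent in slot `i` that are delayed by `j ∈ {0, …, K}` slots) accounting for all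
sent particles, such that the particles received in slot `t` are exactly those sent in
slot `i` and delayed by `j` slots with `i + j = t` (slots indexed from `0`). -/
def Produces (K : ℕ) (x z : List ℕ) : Prop :=
  z.length = x.length + K ∧
  ∃ d : ℕ → ℕ → ℕ,
    (∀ i < x.length, ∑ j ∈ Finset.range (K + 1), d i j = x.getD i 0) ∧
    (∀ t < x.length + K,
      z.getD t 0 =
        ∑ i ∈ Finset.range x.length, ∑ j ∈ Finset.range (K + 1),
          if i + j = t then d i j else 0)

/-- A code of length `n` for DTPC(N, K): a set of sequences over `{0, 1, …, N}` of length `n`. -/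
def IsCode (N n : ℕ) (C : Finset (List ℕ)) : Prop :=
  ∀ x ∈ C, x.length = n ∧ ∀ a ∈ x, a ≤ N

/-- Zero-error code for DTPC(N, K): for every `m ≥ 1`, no two distinct concatenations of
`m` codewords can produce the same channel output. -/
def IsZeroError (N K n : ℕ) (C : Finset (List ℕ)) : Prop :=
  IsCode N n C ∧
  ∀ L₁ L₂ : List (List ℕ),
    L₁.length = L₂.length → 1 ≤ L₁.length →
    (∀ w ∈ L₁, w ∈ C) → (∀ w ∈ L₂, w ∈ C) →
    L₁.flatten ≠ L₂.flatten →
    ∀ z : List ℕ, ¬ (Produces K L₁.flatten z ∧ Produces K L₂.flatten z)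

/-- Zero-padded code: every codeword ends with `min n K` zeros. -/
def IsZeroPadded (K n : ℕ) (C : Finset (List ℕ)) : Prop :=
  ∀ x ∈ C, List.replicate (min n K) 0 <:+ x

/-- The recursively defined codes `C_{N,K}(n)`: for `n ≤ K` the only codeword is `0^n`;
for `n > K`, `C_{N,K}(n) = (N ∘ C_{N,K}(n-1)) ∪ ⋃_{i<N} (i ∘ 0^K ∘ C_{N,K}(n-K-1))`. -/
def CNK (N K : ℕ) : ℕ → Finset (List ℕ)
  | n =>
    if _h : n ≤ K then {List.replicate n 0}
    else
      ((CNK N K (n - 1)).image fun v => N :: v) ∪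
        (Finset.range N).biUnion fun i =>
          (CNK N K (n - K - 1)).image fun v => (i :: List.replicate K 0) ++ v
  decreasing_by
    · omega
    · omega



section Aux
open Finset

/-- Prefix sums of a list (with default 0 beyond the end). -/
def Spre (w : List ℕ) (s : ℕ) : ℕ := ∑ i ∈ Finset.range s, w.getD i 0

lemma Spre_succ (w : List ℕ) (s : ℕ) : Spre w (s+1) = Spre w s + w.getD s 0 :=
  Finset.sum_range_succ _ _

lemma Spre_mono (w : List ℕ) {s t : ℕ} (h : s ≤ t) : Spre w s ≤ Spre w t :=
  Finset.sum_le_sum_of_subset (Finset.range_subset_range.2 h)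

lemma Spre_cons (a : ℕ) (w : List ℕ) (s : ℕ) : Spre (a :: w) (s+1) = a + Spre w s := by
  unfold Spre
  rw [Finset.sum_range_succ' (fun i => (a :: w).getD i 0) s]
  simp [List.getD_cons_succ, List.getD_cons_zero, Nat.add_comm]

lemma getD_replicate_zero (m r : ℕ) : (List.replicate m (0:ℕ)).getD r 0 = 0 := by
  induction m generalizing r with
  | zero => simp [List.getD_nil]
  | succ m ih =>
    cases r with
    | zero => simp [List.replicate_succ]
    | succ r => simp [List.replicate_succ, List.getD_cons_succ, ih]

lemma getD_tail (l : List ℕ) (r : ℕ) : l.tail.getD r 0 = l.getD (r+1) 0 := by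
  cases l with
  | nil => simp [List.getD_nil]
  | cons a l => simp [List.getD_cons_succ]

lemma getD_drop (l : List ℕ) : ∀ m i, (l.drop m).getD i 0 = l.getD (m + i) 0 := by
  induction l with
  | nil => simp [List.getD_nil]
  | cons a l ih =>
    intro m i
    cases m with
    | zero => simp
    | succ m => simpa [List.getD_cons_succ, Nat.succ_add] using ih m i

lemma getD_take (l : List ℕ) : ∀ m i, i < m → (l.take m).getD i 0 = l.getD i 0 := by
  induction l with
  | nil => simp [List.getD_nil]
  | cons a l ih =>
    intro m i hi
    cases m with
    | zero => omega
    | succ m =>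
      cases i with
      | zero => simp
      | succ i => simpa [List.getD_cons_succ] using ih m i (by omega)

lemma sum_eq_Spre (l : List ℕ) : l.sum = Spre l l.length := by
  induction l with
  | nil => simp [Spre]
  | cons a l ih => simp [List.length_cons, Spre_cons, ih]

lemma eq_of_getD {a b : List ℕ} (hl : a.length = b.length)
    (h : ∀ r < a.length, a.getD r 0 = b.getD r 0) : a = b := by
  apply List.ext_getElem hl
  intro i h1 h2
  have := h i h1
  rwa [List.getD_eq_getElem _ _ h1, List.getD_eq_getElem _ _ h2] at this

lemma getD_pad (K : ℕ) (w : List ℕ) (t : ℕ) :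
    (List.replicate K (0:ℕ) ++ w).getD t 0 = if t < K then 0 else w.getD (t - K) 0 := by
  split
  · rw [List.getD_append _ _ _ _ (by simpa using ‹t < K›), getD_replicate_zero]
  · rw [List.getD_append_right _ _ _ _ (by simp; omega)]
    simp

end Aux


/-- Column formula valid for all `t`. -/
lemma produces_col {K : ℕ} {x z : List ℕ} (h : Produces K x z) :
    ∃ d : ℕ → ℕ → ℕ,
      (∀ i < x.length, ∑ j ∈ Finset.range (K + 1), d i j = x.getD i 0) ∧
      (∀ t, z.getD t 0 =
        ∑ i ∈ Finset.range x.length, ∑ j ∈ Finset.range (K + 1),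
          if i + j = t then d i j else 0) := by
  obtain ⟨hlen, d, hrow, hcol⟩ := h
  refine ⟨d, hrow, fun t => ?_⟩
  rcases Nat.lt_or_ge t (x.length + K) with ht | ht
  · exact hcol t ht
  · rw [List.getD_eq_default _ _ (by omega)]
    rw [eq_comm, Finset.sum_eq_zero]
    intro i hi
    rw [Finset.sum_eq_zero]
    intro j hj
    simp only [Finset.mem_range] at hi hj
    have : i + j ≠ t := by omega
    simp [this]

lemma Spre_sum_ite {K : ℕ} (d : ℕ → ℕ → ℕ) (n s : ℕ) :
    (∑ t ∈ Finset.range s, ∑ i ∈ Finset.range n, ∑ j ∈ Finset.range (K+1),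
      if i + j = t then d i j else 0)
    = ∑ i ∈ Finset.range n, ∑ j ∈ Finset.range (K+1),
        if i + j < s then d i j else 0 := by
  rw [Finset.sum_comm]
  refine Finset.sum_congr rfl fun i _ => ?_
  rw [Finset.sum_comm]
  refine Finset.sum_congr rfl fun j _ => ?_
  rcases Nat.lt_or_ge (i+j) s with h | h
  · rw [if_pos h, Finset.sum_eq_single (i+j)]
    · simp
    · intro b _ hb
      exact if_neg (fun hh => hb hh.symm)
    · intro hm
      exact absurd (Finset.mem_range.2 h) hm
  · rw [if_neg (by omega), Finset.sum_eq_zero]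
    intro b hb
    simp only [Finset.mem_range] at hb
    rw [if_neg (by omega)]

lemma produces_upper {K : ℕ} {x z : List ℕ} (h : Produces K x z) (s : ℕ) :
    Spre z s ≤ Spre x s := by
  obtain ⟨d, hrow, hcol⟩ := produces_col h
  have hz : Spre z s = ∑ i ∈ Finset.range x.length, ∑ j ∈ Finset.range (K+1),
      if i + j < s then d i j else 0 := by
    unfold Spre
    rw [← Spre_sum_ite]
    exact Finset.sum_congr rfl fun t _ => hcol t
  rw [hz]
  calc ∑ i ∈ Finset.range x.length, ∑ j ∈ Finset.range (K+1),
        (if i + j < s then d i j else 0)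
      ≤ ∑ i ∈ Finset.range x.length, (if i < s then x.getD i 0 else 0) := by
        refine Finset.sum_le_sum fun i hi => ?_
        simp only [Finset.mem_range] at hi
        by_cases his : i < s
        · simp only [his, if_true]
          rw [← hrow i hi]
          exact Finset.sum_le_sum fun j _ => by split <;> omega
        · have : ∀ j ∈ Finset.range (K+1), (if i + j < s then d i j else 0) = 0 := by
            intro j _
            have : ¬ (i + j < s) := by omega
            simp [this]
          rw [Finset.sum_congr rfl this]
          simp
    _ ≤ Spre x s := by
        unfold Spre
        rw [← Finset.sum_filter]
        apply Finset.sum_le_sum_of_subset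
        intro i hi
        simp only [Finset.mem_filter, Finset.mem_range] at hi ⊢
        exact hi.2

lemma produces_lower {K : ℕ} {x z : List ℕ} (h : Produces K x z) (s : ℕ) :
    Spre x (s - K) ≤ Spre z s := by
  obtain ⟨d, hrow, hcol⟩ := produces_col h
  have hz : Spre z s = ∑ i ∈ Finset.range x.length, ∑ j ∈ Finset.range (K+1),
      if i + j < s then d i j else 0 := by
    unfold Spre
    rw [← Spre_sum_ite]
    exact Finset.sum_congr rfl fun t _ => hcol t
  rw [hz]
  have h1 : Spre x (s-K) = Spre x (min (s-K) x.length) := by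
    rcases Nat.le_total (s-K) x.length with h' | h'
    · rw [min_eq_left h']
    · rw [min_eq_right h']
      unfold Spre
      rw [← Finset.sum_subset (Finset.range_subset_range.2 h')]
      intro i _ hi
      simp only [Finset.mem_range, not_lt] at hi
      exact List.getD_eq_default _ _ hi
  rw [h1]
  calc Spre x (min (s-K) x.length)
      = ∑ i ∈ Finset.range (min (s-K) x.length), ∑ j ∈ Finset.range (K+1), d i j := by
        unfold Spre
        refine Finset.sum_congr rfl fun i hi => ?_
        simp only [Finset.mem_range] at hi
        exact (hrow i (by omega)).symm
    _ = ∑ i ∈ Finset.range (min (s-K) x.length), ∑ j ∈ Finset.range (K+1),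
          (if i + j < s then d i j else 0) := by
        refine Finset.sum_congr rfl fun i hi => Finset.sum_congr rfl fun j hj => ?_
        simp only [Finset.mem_range] at hi hj
        have : i + j < s := by omega
        simp [this]
    _ ≤ _ := by
        apply Finset.sum_le_sum_of_subset
        apply Finset.range_subset_range.2
        omega

/-- The core distinguishability contradiction. -/
lemma confusion_contradiction {K : ℕ} {x y z : List ℕ} {t : ℕ}
    (hx : Produces K x z) (hy : Produces K y z)
    (hpre : ∀ r < t, x.getD r 0 = y.getD r 0)
    (hlt : x.getD t 0 < y.getD t 0)
    (hzero : ∀ j, 1 ≤ j → j ≤ K → x.getD (t+j) 0 = 0) : False := by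
  have hxt : Spre x (t+1+K) = Spre x (t+1) := by
    have gen : ∀ m, m ≤ K → Spre x (t+1+m) = Spre x (t+1) := by
      intro m
      induction m with
      | zero => intro _; rfl
      | succ m ih =>
        intro hm
        have e : Spre x (t+1+(m+1)) = Spre x (t+1+m) + x.getD (t+1+m) 0 := Spre_succ _ _
        have hz : x.getD (t+1+m) 0 = 0 := by
          have := hzero (m+1) (by omega) (by omega)
          rwa [show t+(m+1) = t+1+m by omega] at this
        rw [e, hz, ih (by omega), Nat.add_zero]
    exact gen K (le_refl _)
  have hpx : Spre x t = Spre y t :=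
    Finset.sum_congr rfl fun r hr => hpre r (Finset.mem_range.1 hr)
  have e1 : Spre x (t+1) = Spre x t + x.getD t 0 := Spre_succ _ _
  have e2 : Spre y (t+1) = Spre y t + y.getD t 0 := Spre_succ _ _
  have l1 : Spre z (t+1+K) ≤ Spre x (t+1+K) := produces_upper hx _
  have l2 : Spre y (t+1+K-K) ≤ Spre z (t+1+K) := produces_lower hy _
  rw [show t+1+K-K = t+1 by omega] at l2
  omega


lemma CNK_def (N K n : ℕ) : CNK N K n =
    if n ≤ K then {List.replicate n 0}
    else
      ((CNK N K (n - 1)).image fun v => N :: v) ∪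
        (Finset.range N).biUnion fun i =>
          (CNK N K (n - K - 1)).image fun v => (i :: List.replicate K 0) ++ v := by
  rw [CNK]
  by_cases h : n ≤ K <;> simp [h]

lemma mem_CNK_base {N K n : ℕ} (hn : n ≤ K) {u : List ℕ} :
    u ∈ CNK N K n ↔ u = List.replicate n 0 := by
  rw [CNK_def, if_pos hn, Finset.mem_singleton]

lemma mem_CNK_rec {N K n : ℕ} (hn : ¬ n ≤ K) {u : List ℕ} :
    u ∈ CNK N K n ↔
      (∃ v ∈ CNK N K (n-1), u = N :: v) ∨
      (∃ i < N, ∃ v ∈ CNK N K (n-K-1), u = i :: (List.replicate K 0 ++ v)) := by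
  rw [CNK_def, if_neg hn, Finset.mem_union, Finset.mem_image, Finset.mem_biUnion]
  constructor
  · rintro (⟨v, hv, rfl⟩ | ⟨i, hi, h⟩)
    · exact Or.inl ⟨v, hv, rfl⟩
    · rw [Finset.mem_image] at h
      obtain ⟨v, hv, rfl⟩ := h
      exact Or.inr ⟨i, Finset.mem_range.1 hi, v, hv, by simp⟩
  · rintro (⟨v, hv, rfl⟩ | ⟨i, hi, v, hv, rfl⟩)
    · exact Or.inl ⟨v, hv, rfl⟩
    · refine Or.inr ⟨i, Finset.mem_range.2 hi, ?_⟩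
      rw [Finset.mem_image]
      exact ⟨v, hv, by simp⟩

lemma CNK_length {N K : ℕ} : ∀ n, ∀ u ∈ CNK N K n, u.length = n := by
  intro n
  induction n using Nat.strong_induction_on with
  | _ n ih =>
    intro u hu
    by_cases hn : n ≤ K
    · rw [mem_CNK_base hn] at hu
      simp [hu]
    · rw [mem_CNK_rec hn] at hu
      rcases hu with ⟨v, hv, rfl⟩ | ⟨i, hi, v, hv, rfl⟩
      · have := ih (n-1) (by omega) v hv
        simp [this]; omega
      · have := ih (n-K-1) (by omega) v hv
        simp [this]; omega

lemma CNK_le {N K : ℕ} : ∀ n, ∀ u ∈ CNK N K n, ∀ a ∈ u, a ≤ N := by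
  intro n
  induction n using Nat.strong_induction_on with
  | _ n ih =>
    intro u hu
    by_cases hn : n ≤ K
    · rw [mem_CNK_base hn] at hu
      subst hu
      intro a ha
      rw [List.eq_of_mem_replicate ha]
      exact Nat.zero_le _
    · rw [mem_CNK_rec hn] at hu
      rcases hu with ⟨v, hv, rfl⟩ | ⟨i, hi, v, hv, rfl⟩
      · intro a ha
        rcases List.mem_cons.1 ha with rfl | ha
        · exact le_refl _
        · exact ih (n-1) (by omega) v hv a ha
      · intro a ha
        rcases List.mem_cons.1 ha with rfl | ha
        · omega
        · rcases List.mem_append.1 ha with ha | ha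
          · rw [List.eq_of_mem_replicate ha]; exact Nat.zero_le _
          · exact ih (n-K-1) (by omega) v hv a ha

lemma replicate_suffix_replicate {a b : ℕ} (h : a ≤ b) :
    List.replicate a (0:ℕ) <:+ List.replicate b 0 := by
  refine ⟨List.replicate (b-a) 0, ?_⟩
  rw [← List.replicate_add]
  congr 1
  omega

lemma CNK_padded {N K : ℕ} : ∀ n, ∀ u ∈ CNK N K n, List.replicate (min n K) 0 <:+ u := by
  intro n
  induction n using Nat.strong_induction_on with
  | _ n ih =>
    intro u hu
    by_cases hn : n ≤ K
    · rw [mem_CNK_base hn] at hu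
      subst hu
      exact replicate_suffix_replicate (by omega)
    · rw [mem_CNK_rec hn] at hu
      have hmin : min n K = K := by omega
      rw [hmin]
      rcases hu with ⟨v, hv, rfl⟩ | ⟨i, hi, v, hv, rfl⟩
      · have hp := ih (n-1) (by omega) v hv
        rw [min_eq_right (by omega : K ≤ n-1)] at hp
        exact hp.trans (List.suffix_cons N v)
      · by_cases h2 : n - K - 1 ≤ K
        · rw [mem_CNK_base h2] at hv
          subst hv
          refine List.IsSuffix.trans (replicate_suffix_replicate (by omega : K ≤ K + (n-K-1))) ?_
          rw [List.replicate_add]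
          exact List.suffix_cons i _
        · have hp := ih (n-K-1) (by omega) v hv
          rw [min_eq_right (by omega : K ≤ n-K-1)] at hp
          refine hp.trans ?_
          exact (List.suffix_append _ v).trans (List.suffix_cons i _)

lemma getD_block (i K : ℕ) (v : List ℕ) (r : ℕ) :
    (i :: (List.replicate K 0 ++ v)).getD r 0 =
      if r = 0 then i else if r ≤ K then 0 else v.getD (r - K - 1) 0 := by
  cases r with
  | zero => simp
  | succ r =>
    rw [List.getD_cons_succ]
    rcases Nat.lt_or_ge r K with h | h
    · rw [List.getD_append _ _ _ _ (by simpa using h), getD_replicate_zero,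
        if_neg (by omega), if_pos (by omega)]
    · rw [List.getD_append_right _ _ _ _ (by simpa using h),
        if_neg (by omega), if_neg (by omega), List.length_replicate]
      congr 1
      omega

lemma getD_block_mid {i K : ℕ} {v : List ℕ} {r : ℕ} (h1 : 1 ≤ r) (h2 : r ≤ K) :
    (i :: (List.replicate K 0 ++ v)).getD r 0 = 0 := by
  rw [getD_block, if_neg (by omega), if_pos h2]

lemma getD_block_high {i K : ℕ} {v : List ℕ} {r : ℕ} (h : K < r) :
    (i :: (List.replicate K 0 ++ v)).getD r 0 = v.getD (r - K - 1) 0 := by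
  rw [getD_block, if_neg (by omega), if_neg (by omega)]

/-- Structural lemma: at the first difference of two codewords, the smaller one is
followed by `K` zeros inside the word. -/
lemma CNK_first_diff {N K : ℕ} : ∀ n, ∀ u ∈ CNK N K n, ∀ v ∈ CNK N K n, ∀ q,
    (∀ r < q, u.getD r 0 = v.getD r 0) → u.getD q 0 < v.getD q 0 →
    q + K < n ∧ ∀ j, 1 ≤ j → j ≤ K → u.getD (q + j) 0 = 0 := by
  intro n
  induction n using Nat.strong_induction_on with
  | _ n ih =>
    intro u hu v hv q hpre hlt
    by_cases hn : n ≤ K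
    · rw [mem_CNK_base hn] at hu hv
      subst hu; subst hv
      rw [getD_replicate_zero] at hlt
      omega
    · rw [mem_CNK_rec hn] at hu hv
      rcases hu with ⟨u', hu', rfl⟩ | ⟨i, hi, u', hu', rfl⟩ <;>
        rcases hv with ⟨v', hv', rfl⟩ | ⟨i', hi', v', hv', rfl⟩
      · -- N :: u' vs N :: v'
        cases q with
        | zero => simp at hlt
        | succ q =>
          have hpre' : ∀ r < q, u'.getD r 0 = v'.getD r 0 := by
            intro r hr
            have := hpre (r+1) (by omega)
            simpa [List.getD_cons_succ] using this
          have hlt' : u'.getD q 0 < v'.getD q 0 := by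
            simpa [List.getD_cons_succ] using hlt
          obtain ⟨h1, h2⟩ := ih (n-1) (by omega) u' hu' v' hv' q hpre' hlt'
          refine ⟨by omega, fun j hj1 hj2 => ?_⟩
          rw [show q + 1 + j = (q + j) + 1 by omega, List.getD_cons_succ]
          exact h2 j hj1 hj2
      · -- N :: u' vs i' :: 0^K ++ v'
        cases q with
        | zero =>
          simp only [List.getD_cons_zero] at hlt
          omega
        | succ q =>
          have := hpre 0 (by omega)
          simp only [List.getD_cons_zero] at this
          omega
      · -- i :: 0^K ++ u' vs N :: v'
        cases q with
        | zero =>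
          refine ⟨by omega, fun j hj1 hj2 => ?_⟩
          rw [show 0 + j = j by omega, getD_block_mid hj1 hj2]
        | succ q =>
          have := hpre 0 (by omega)
          simp only [List.getD_cons_zero] at this
          omega
      · -- i :: 0^K ++ u' vs i' :: 0^K ++ v'
        cases q with
        | zero =>
          refine ⟨by omega, fun j hj1 hj2 => ?_⟩
          rw [show 0 + j = j by omega, getD_block_mid hj1 hj2]
        | succ q =>
          rcases Nat.lt_or_ge q K with hqK | hqK
          · rw [getD_block_mid (by omega) (by omega),
              getD_block_mid (by omega) (by omega)] at hlt
            omega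
          · -- q + 1 ≥ K + 1 : recurse
            have hpre' : ∀ r < q - K, u'.getD r 0 = v'.getD r 0 := by
              intro r hr
              have := hpre (r + K + 1) (by omega)
              rw [getD_block_high (by omega), getD_block_high (by omega)] at this
              simpa [show r + K + 1 - K - 1 = r by omega] using this
            have hlt' : u'.getD (q - K) 0 < v'.getD (q - K) 0 := by
              rw [getD_block_high (by omega), getD_block_high (by omega)] at hlt
              simpa [show q + 1 - K - 1 = q - K by omega] using hlt
            obtain ⟨h1, h2⟩ := ih (n-K-1) (by omega) u' hu' v' hv' (q-K) hpre' hlt'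
            refine ⟨by omega, fun j hj1 hj2 => ?_⟩
            rw [getD_block_high (by omega),
              show q + 1 + j - K - 1 = q - K + j by omega]
            exact h2 j hj1 hj2

lemma first_diff : ∀ (a b : List ℕ), a.length = b.length → a ≠ b →
    ∃ q < a.length, (∀ r < q, a.getD r 0 = b.getD r 0) ∧ a.getD q 0 ≠ b.getD q 0 := by
  intro a
  induction a with
  | nil =>
    intro b hl hne
    cases b with
    | nil => exact absurd rfl hne
    | cons x y => simp at hl
  | cons x a ih =>
    intro b hl hne
    cases b with
    | nil => simp at hl
    | cons y b =>
      by_cases hxy : x = y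
      · subst hxy
        have hne' : a ≠ b := fun h => hne (by rw [h])
        obtain ⟨q, hq, hpre, hd⟩ := ih b (by simpa using hl) hne'
        refine ⟨q+1, by simp; omega, ?_, by simpa [List.getD_cons_succ] using hd⟩
        intro r hr
        cases r with
        | zero => simp
        | succ r => simpa [List.getD_cons_succ] using hpre r (by omega)
      · exact ⟨0, by simp, fun r hr => by omega, by simpa using hxy⟩

lemma flatten_length {N K n : ℕ} : ∀ (L : List (List ℕ)), (∀ w ∈ L, w ∈ CNK N K n) →
    L.flatten.length = L.length * n := by
  intro L
  induction L with
  | nil => simp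
  | cons u T ih =>
    intro h
    have hu : u.length = n := CNK_length n u (h u (by simp))
    simp only [List.flatten_cons, List.length_append, List.length_cons, hu,
      ih (fun w hw => h w (by simp [hw]))]
    ring

/-- Zeros after the first difference, at the level of flattened concatenations. -/
lemma flatten_zeros {N K n : ℕ} : ∀ (L₁ L₂ : List (List ℕ)),
    (∀ w ∈ L₁, w ∈ CNK N K n) → (∀ w ∈ L₂, w ∈ CNK N K n) →
    L₁.length = L₂.length → ∀ q,
    (∀ r < q, L₁.flatten.getD r 0 = L₂.flatten.getD r 0) →
    L₁.flatten.getD q 0 < L₂.flatten.getD q 0 →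
    ∀ j, 1 ≤ j → j ≤ K → L₁.flatten.getD (q+j) 0 = 0 := by
  intro L₁
  induction L₁ with
  | nil =>
    intro L₂ h1 h2 hl q hpre hlt
    have : L₂ = [] := List.length_eq_zero_iff.1 hl.symm
    subst this
    simp [List.getD_nil] at hlt
  | cons u T₁ ih =>
    intro L₂ h1 h2 hl q hpre hlt j hj1 hj2
    cases L₂ with
    | nil => simp at hl
    | cons v T₂ =>
      have hu : u ∈ CNK N K n := h1 u (by simp)
      have hv : v ∈ CNK N K n := h2 v (by simp)
      have hul : u.length = n := CNK_length n u hu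
      have hvl : v.length = n := CNK_length n v hv
      simp only [List.flatten_cons] at hpre hlt ⊢
      rcases Nat.lt_or_ge q n with hq | hq
      · -- first difference inside the heads
        have hpre' : ∀ r < q, u.getD r 0 = v.getD r 0 := by
          intro r hr
          have := hpre r hr
          rwa [List.getD_append _ _ _ _ (by omega), List.getD_append _ _ _ _ (by omega)] at this
        have hlt' : u.getD q 0 < v.getD q 0 := by
          rwa [List.getD_append _ _ _ _ (by omega), List.getD_append _ _ _ _ (by omega)] at hlt
        obtain ⟨hK, hz⟩ := CNK_first_diff n u hu v hv q hpre' hlt'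
        rw [List.getD_append _ _ _ _ (by omega)]
        exact hz j hj1 hj2
      · -- heads are equal; recurse on the tails
        have huv : u = v := by
          apply eq_of_getD (by omega)
          intro r hr
          have := hpre r (by omega)
          rwa [List.getD_append _ _ _ _ (by omega), List.getD_append _ _ _ _ (by omega)] at this
        subst huv
        have hpre' : ∀ r < q - n, T₁.flatten.getD r 0 = T₂.flatten.getD r 0 := by
          intro r hr
          have := hpre (n + r) (by omega)
          rwa [List.getD_append_right _ _ _ _ (by omega), List.getD_append_right _ _ _ _ (by omega),
            hul, Nat.add_sub_cancel_left] at this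
        have hlt' : T₁.flatten.getD (q-n) 0 < T₂.flatten.getD (q-n) 0 := by
          rwa [List.getD_append_right _ _ _ _ (by omega), List.getD_append_right _ _ _ _ (by omega),
            hul] at hlt
        have := ih T₂ (fun w hw => h1 w (by simp [hw])) (fun w hw => h2 w (by simp [hw]))
          (by simpa using hl) (q-n) hpre' hlt' j hj1 hj2
        rw [List.getD_append_right _ _ _ _ (by omega), hul,
          show q + j - n = q - n + j by omega]
        exact this

/-- `C_{N,K}(n)` is a zero-error code. -/
lemma CNK_zero_error (N K n : ℕ) : IsZeroError N K n (CNK N K n) := by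
  constructor
  · intro u hu
    exact ⟨CNK_length n u hu, CNK_le n u hu⟩
  · intro L₁ L₂ hlen hm h1 h2 hne z ⟨p1, p2⟩
    have hxl : L₁.flatten.length = L₂.flatten.length := by
      rw [flatten_length L₁ h1, flatten_length L₂ h2, hlen]
    obtain ⟨q, hq, hpre, hd⟩ := first_diff L₁.flatten L₂.flatten hxl hne
    rcases Nat.lt_or_ge (L₁.flatten.getD q 0) (L₂.flatten.getD q 0) with hlt | hge
    · exact confusion_contradiction p1 p2 hpre hlt
        (flatten_zeros L₁ L₂ h1 h2 hlen q hpre hlt)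
    · have hlt : L₂.flatten.getD q 0 < L₁.flatten.getD q 0 := by omega
      have hpre' : ∀ r < q, L₂.flatten.getD r 0 = L₁.flatten.getD r 0 :=
        fun r hr => (hpre r hr).symm
      exact confusion_contradiction p2 p1 hpre' hlt
        (flatten_zeros L₂ L₁ h2 h1 hlen.symm q hpre' hlt)

/-- Remove `c` particles greedily from the left of a list. -/
def removeCnt : ℕ → List ℕ → List ℕ
  | _, [] => []
  | c, a :: l => (a - c) :: removeCnt (c - a) l

@[simp] lemma removeCnt_length (c : ℕ) (l : List ℕ) : (removeCnt c l).length = l.length := by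
  induction l generalizing c with
  | nil => rfl
  | cons a l ih => simp [removeCnt, ih]

lemma removeCnt_getD_le (c : ℕ) (l : List ℕ) (i : ℕ) :
    (removeCnt c l).getD i 0 ≤ l.getD i 0 := by
  induction l generalizing c i with
  | nil => simp [removeCnt]
  | cons a l ih =>
    cases i with
    | zero => simp [removeCnt]
    | succ i => simpa [removeCnt, List.getD_cons_succ] using ih (c-a) i

lemma removeCnt_Spre (c : ℕ) (l : List ℕ) : ∀ m, Spre (removeCnt c l) m = Spre l m - c := by
  induction l generalizing c with
  | nil =>
    intro m
    have h0 : Spre ([]:List ℕ) m = 0 := Finset.sum_eq_zero fun i _ => List.getD_nil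
    show Spre [] m = Spre [] m - c
    rw [h0]
    omega
  | cons a l ih =>
    intro m
    cases m with
    | zero => simp [Spre]
    | succ m =>
      rw [show removeCnt c (a :: l) = (a-c) :: removeCnt (c-a) l from rfl,
        Spre_cons, Spre_cons, ih (c-a) m]
      omega

lemma sum_sub_of_le (f g : ℕ → ℕ) (s : Finset ℕ) (h : ∀ i ∈ s, g i ≤ f i) :
    ∑ i ∈ s, (f i - g i) = ∑ i ∈ s, f i - ∑ i ∈ s, g i := by
  induction s using Finset.induction_on with
  | empty => simp
  | insert _ _ hx ih =>
    rename_i a s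
    rw [Finset.sum_insert hx, Finset.sum_insert hx, Finset.sum_insert hx,
      ih (fun i hi => h i (Finset.mem_insert_of_mem hi))]
    have h1 := h a (Finset.mem_insert_self a s)
    have h2 : ∑ i ∈ s, g i ≤ ∑ i ∈ s, f i :=
      Finset.sum_le_sum fun i hi => h i (Finset.mem_insert_of_mem hi)
    omega

lemma produces_zero (K m : ℕ) :
    Produces K (List.replicate m 0) (List.replicate K 0 ++ List.replicate m 0) := by
  refine ⟨by simp [Nat.add_comm], fun _ _ => 0, ?_, ?_⟩
  · intro i _
    simp [getD_replicate_zero]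
  · intro t _
    rw [getD_pad]
    simp [getD_replicate_zero]

lemma sum_range_add' (f : ℕ → ℕ) (a b : ℕ) :
    ∑ i ∈ Finset.range (a+b), f i
      = (∑ i ∈ Finset.range a, f i) + ∑ i ∈ Finset.range b, f (a+i) := by
  induction b with
  | zero => simp
  | succ b ih =>
    rw [show a+(b+1) = (a+b)+1 by omega, Finset.sum_range_succ, ih, Finset.sum_range_succ]
    omega

lemma produces_block (K : ℕ) (p : List ℕ) (hp : p.length = K + 1) :
    Produces K p (List.replicate K 0 ++ (p.sum :: List.replicate K 0)) := by
  refine ⟨by simp [hp]; omega, fun i j => if i + j = K then p.getD i 0 else 0, ?_, ?_⟩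
  · intro i hi
    beta_reduce
    rw [hp] at hi
    have hone : ∀ i, i < K + 1 → (∑ j ∈ Finset.range (K+1),
        if i + j = K then p.getD i 0 else 0) = p.getD i 0 := by
      intro i hi
      rw [Finset.sum_eq_single (K - i)]
      · rw [if_pos (show i + (K - i) = K by omega)]
      · intro b _ hb
        exact if_neg (fun hc => hb (by omega))
      · intro h
        exact absurd (Finset.mem_range.2 (by omega)) h
    exact hone i hi
  · intro t _
    beta_reduce
    rw [getD_pad, hp]
    by_cases htK : t = K
    · rw [htK, if_neg (by omega), Nat.sub_self, List.getD_cons_zero]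
      have he : (∑ i ∈ Finset.range (K+1), ∑ j ∈ Finset.range (K+1),
          if i + j = K then (if i + j = K then p.getD i 0 else 0) else 0)
        = ∑ i ∈ Finset.range (K+1), ∑ j ∈ Finset.range (K+1),
          if i + j = K then p.getD i 0 else 0 :=
        Finset.sum_congr rfl fun i _ => Finset.sum_congr rfl fun j _ => by
          by_cases h : i + j = K <;> simp [h]
      rw [he]
      have hone : ∀ i ∈ Finset.range (K+1),
          (∑ j ∈ Finset.range (K+1), if i + j = K then p.getD i 0 else 0) = p.getD i 0 := by
        intro i hi
        simp only [Finset.mem_range] at hi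
        rw [Finset.sum_eq_single (K - i)]
        · rw [if_pos (show i + (K - i) = K by omega)]
        · intro b _ hb
          exact if_neg (fun hc => hb (by omega))
        · intro h
          exact absurd (Finset.mem_range.2 (by omega)) h
      rw [Finset.sum_congr rfl hone, sum_eq_Spre, hp]
      rfl
    · have hz : (∑ i ∈ Finset.range (K+1), ∑ j ∈ Finset.range (K+1),
          if i + j = t then (if i + j = K then p.getD i 0 else 0) else 0) = 0 := by
        refine Finset.sum_eq_zero fun i _ => Finset.sum_eq_zero fun j _ => ?_
        by_cases h : i + j = t
        · rw [if_pos h, if_neg (by omega)]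
        · rw [if_neg h]
      rw [hz]
      split
      · rfl
      · rw [show t - K = (t - K - 1) + 1 by omega, List.getD_cons_succ, getD_replicate_zero]

lemma produces_append {K : ℕ} {x₁ x₂ w₁ w₂ : List ℕ}
    (hx : Produces K x₁ (List.replicate K 0 ++ w₁))
    (hy : Produces K x₂ (List.replicate K 0 ++ w₂)) :
    Produces K (x₁ ++ x₂) (List.replicate K 0 ++ (w₁ ++ w₂)) := by
  have hw₁ : w₁.length = x₁.length := by
    have := hx.1; simp only [List.length_append, List.length_replicate] at this; omega
  have hw₂ : w₂.length = x₂.length := by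
    have := hy.1; simp only [List.length_append, List.length_replicate] at this; omega
  obtain ⟨d₁, hrow₁, hcol₁⟩ := produces_col hx
  obtain ⟨d₂, hrow₂, hcol₂⟩ := produces_col hy
  set n₁ := x₁.length with hn₁
  set n₂ := x₂.length with hn₂
  refine ⟨by simp only [List.length_append, List.length_replicate]; omega,
    fun i j => if i < n₁ then d₁ i j else d₂ (i - n₁) j, ?_, ?_⟩
  · intro i hi
    beta_reduce
    rw [List.length_append] at hi
    by_cases h : i < n₁
    · rw [List.getD_append _ _ _ _ h,
        Finset.sum_congr rfl (fun j (_ : j ∈ Finset.range (K+1)) => if_pos h)]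
      exact hrow₁ i h
    · rw [List.getD_append_right _ _ _ _ (by omega),
        Finset.sum_congr rfl (fun j (_ : j ∈ Finset.range (K+1)) => if_neg h)]
      exact hrow₂ (i - n₁) (by omega)
  · intro t _
    beta_reduce
    rw [List.length_append, sum_range_add']
    have hA : (∑ i ∈ Finset.range n₁, ∑ j ∈ Finset.range (K+1),
        if i + j = t then (if i < n₁ then d₁ i j else d₂ (i - n₁) j) else 0)
        = (List.replicate K 0 ++ w₁).getD t 0 := by
      rw [hcol₁ t]
      refine Finset.sum_congr rfl fun i hi => Finset.sum_congr rfl fun j _ => ?_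
      simp only [Finset.mem_range] at hi
      rw [if_pos hi]
    have hB : (∑ i ∈ Finset.range n₂, ∑ j ∈ Finset.range (K+1),
        if n₁ + i + j = t then (if n₁ + i < n₁ then d₁ (n₁+i) j else d₂ (n₁ + i - n₁) j) else 0)
        = if n₁ ≤ t then (List.replicate K 0 ++ w₂).getD (t - n₁) 0 else 0 := by
      by_cases hn : n₁ ≤ t
      · rw [if_pos hn, hcol₂ (t - n₁)]
        refine Finset.sum_congr rfl fun i _ => Finset.sum_congr rfl fun j _ => ?_
        have hc : ¬ (n₁ + i < n₁) := by omega
        rw [if_neg hc, Nat.add_sub_cancel_left]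
        by_cases h : n₁ + i + j = t
        · rw [if_pos h, if_pos (show i + j = t - n₁ by omega)]
        · rw [if_neg h, if_neg (show ¬ (i + j = t - n₁) by omega)]
      · rw [if_neg hn]
        refine Finset.sum_eq_zero fun i _ => Finset.sum_eq_zero fun j _ => ?_
        rw [if_neg (show ¬ (n₁ + i + j = t) by omega)]
    rw [hA, hB, getD_pad, getD_pad, getD_pad]
    rcases Nat.lt_or_ge t K with h1 | h1
    · rw [if_pos h1, if_pos h1]
      by_cases hn : n₁ ≤ t
      · rw [if_pos hn, if_pos (show t - n₁ < K by omega)]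
      · rw [if_neg hn]
    · have hK : ¬ (t < K) := by omega
      rw [if_neg hK, if_neg hK]
      rcases Nat.lt_or_ge (t - K) n₁ with h2 | h2
      · rw [List.getD_append _ _ _ _ (show t - K < w₁.length by omega)]
        by_cases hn : n₁ ≤ t
        · rw [if_pos hn, if_pos (show t - n₁ < K by omega), Nat.add_zero]
        · rw [if_neg hn, Nat.add_zero]
      · rw [List.getD_append_right _ _ _ _ (show w₁.length ≤ t - K by omega), hw₁,
          List.getD_eq_default w₁ _ (show w₁.length ≤ t - K by omega), Nat.zero_add,
          if_pos (show n₁ ≤ t by omega), if_neg (show ¬ (t - n₁ < K) by omega)]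
        congr 1
        omega

lemma produces_head {K N : ℕ} {u v w' : List ℕ} {r : ℕ → ℕ}
    (hlen : v.length = u.length) (hn : K < u.length)
    (hdecomp : ∀ i, u.getD i 0 = r i + v.getD i 0)
    (hsupp : ∀ i, K < i → r i = 0)
    (hsum : ∑ i ∈ Finset.range (K+1), r i = N)
    (hv0 : v.getD 0 0 = 0)
    (hP : Produces K v.tail (List.replicate K 0 ++ w')) :
    Produces K u (List.replicate K 0 ++ (N :: w')) := by
  have hw' : w'.length = u.length - 1 := by
    have := hP.1
    simp only [List.length_append, List.length_replicate, List.length_tail] at this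
    omega
  obtain ⟨d', hrow', hcol'⟩ := produces_col hP
  have htl : v.tail.length = u.length - 1 := by rw [List.length_tail, hlen]
  refine ⟨by simp only [List.length_append, List.length_replicate, List.length_cons]; omega,
    fun i j => (if i ≤ K ∧ i + j = K then r i else 0) +
      (if 1 ≤ i then d' (i-1) j else 0), ?_, ?_⟩
  · intro i hi
    beta_reduce
    rw [Finset.sum_add_distrib]
    have e1 : (∑ j ∈ Finset.range (K+1), if i ≤ K ∧ i + j = K then r i else 0)
        = if i ≤ K then r i else 0 := by
      by_cases hiK : i ≤ K
      · rw [if_pos hiK, Finset.sum_eq_single (K - i)]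
        · rw [if_pos ⟨hiK, by omega⟩]
        · intro b _ hb
          exact if_neg (fun hc => hb (by omega))
        · intro h
          exact absurd (Finset.mem_range.2 (by omega)) h
      · rw [if_neg hiK]
        exact Finset.sum_eq_zero fun j _ => if_neg (fun hc => hiK hc.1)
    rw [e1]
    cases i with
    | zero =>
      have e2 : (∑ j ∈ Finset.range (K+1), if 1 ≤ (0:ℕ) then d' (0-1) j else 0) = 0 :=
        Finset.sum_eq_zero fun j _ => if_neg (by omega)
      rw [e2, if_pos (Nat.zero_le K), hdecomp 0, hv0]
    | succ i =>
      have e2 : (∑ j ∈ Finset.range (K+1), if 1 ≤ i+1 then d' (i+1-1) j else 0)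
          = ∑ j ∈ Finset.range (K+1), d' i j := by
        refine Finset.sum_congr rfl fun j _ => ?_
        rw [if_pos (by omega)]
        congr 1
      rw [e2, hrow' i (by omega), getD_tail, hdecomp (i+1)]
      by_cases hiK : i + 1 ≤ K
      · rw [if_pos hiK]
      · rw [if_neg hiK, hsupp (i+1) (by omega)]
  · intro t _
    beta_reduce
    have hsplitterm : ∀ i j, (if i + j = t then
        ((if i ≤ K ∧ i + j = K then r i else 0) + (if 1 ≤ i then d' (i-1) j else 0)) else 0)
        = (if i + j = t then (if i ≤ K ∧ i + j = K then r i else 0) else 0)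
          + (if i + j = t then (if 1 ≤ i then d' (i-1) j else 0) else 0) := by
      intro i j
      by_cases h : i + j = t <;> simp [h]
    rw [Finset.sum_congr rfl (fun i (_ : i ∈ Finset.range u.length) =>
      Finset.sum_congr rfl (fun j (_ : j ∈ Finset.range (K+1)) => hsplitterm i j))]
    rw [Finset.sum_congr rfl (fun i (_ : i ∈ Finset.range u.length) =>
      Finset.sum_add_distrib), Finset.sum_add_distrib]
    have hA : (∑ i ∈ Finset.range u.length, ∑ j ∈ Finset.range (K+1),
        if i + j = t then (if i ≤ K ∧ i + j = K then r i else 0) else 0)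
        = if t = K then N else 0 := by
      by_cases ht : t = K
      · rw [if_pos ht, ← hsum]
        rw [show (Finset.range u.length) = Finset.range (K+1) ∪ Finset.Ico (K+1) u.length by
          simp only [Finset.range_eq_Ico]
          exact (Finset.Ico_union_Ico_eq_Ico (by omega) (by omega)).symm]
        rw [Finset.sum_union (by
          rw [Finset.range_eq_Ico]
          exact Finset.Ico_disjoint_Ico_consecutive 0 (K+1) u.length)]
        have hz2 : (∑ i ∈ Finset.Ico (K+1) u.length, ∑ j ∈ Finset.range (K+1),
            if i + j = t then (if i ≤ K ∧ i + j = K then r i else 0) else 0) = 0 := by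
          refine Finset.sum_eq_zero fun i hi => Finset.sum_eq_zero fun j _ => ?_
          simp only [Finset.mem_Ico] at hi
          by_cases h : i + j = t
          · rw [if_pos h, if_neg (fun hc => by omega)]
          · rw [if_neg h]
        rw [hz2, Nat.add_zero]
        refine Finset.sum_congr rfl fun i hi => ?_
        simp only [Finset.mem_range] at hi
        rw [Finset.sum_eq_single (K - i)]
        · rw [if_pos (by omega), if_pos ⟨by omega, by omega⟩]
        · intro b _ hb
          by_cases h : i + b = t
          · rw [if_pos h, if_neg (fun hc => hb (by omega))]
          · rw [if_neg h]
        · intro h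
          exact absurd (Finset.mem_range.2 (by omega)) h
      · rw [if_neg ht]
        refine Finset.sum_eq_zero fun i _ => Finset.sum_eq_zero fun j _ => ?_
        by_cases h : i + j = t
        · rw [if_pos h, if_neg (fun hc => by omega)]
        · rw [if_neg h]
    have hB : (∑ i ∈ Finset.range u.length, ∑ j ∈ Finset.range (K+1),
        if i + j = t then (if 1 ≤ i then d' (i-1) j else 0) else 0)
        = if 1 ≤ t then (List.replicate K 0 ++ w').getD (t-1) 0 else 0 := by
      rw [show u.length = 1 + (u.length - 1) by omega, sum_range_add']
      have h0 : (∑ i ∈ Finset.range 1, ∑ j ∈ Finset.range (K+1),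
          if i + j = t then (if 1 ≤ i then d' (i-1) j else 0) else 0) = 0 := by
        refine Finset.sum_eq_zero fun i hi => Finset.sum_eq_zero fun j _ => ?_
        simp only [Finset.mem_range] at hi
        have : i = 0 := by omega
        subst this
        by_cases h : 0 + j = t
        · rw [if_pos h, if_neg (by omega)]
        · rw [if_neg h]
      rw [h0, Nat.zero_add]
      by_cases ht : 1 ≤ t
      · rw [if_pos ht, hcol' (t-1), htl]
        refine Finset.sum_congr rfl fun i _ => Finset.sum_congr rfl fun j _ => ?_
        rw [if_pos (by omega : 1 ≤ 1 + i), show 1 + i - 1 = i by omega]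
        by_cases h : 1 + i + j = t
        · rw [if_pos h, if_pos (by omega)]
        · rw [if_neg h, if_neg (by omega)]
      · rw [if_neg ht]
        refine Finset.sum_eq_zero fun i _ => Finset.sum_eq_zero fun j _ => ?_
        rw [if_neg (by omega : ¬ (1 + i + j = t))]
    rw [hA, hB, getD_pad]
    rcases Nat.lt_or_ge t K with h1 | h1
    · rw [if_pos h1, if_neg (by omega)]
      by_cases ht : 1 ≤ t
      · rw [if_pos ht, getD_pad, if_pos (by omega)]
      · rw [if_neg ht]
    · rcases Nat.eq_or_lt_of_le h1 with h2 | h2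
      · rw [if_neg (show ¬ t < K by omega), show t - K = 0 by omega, List.getD_cons_zero,
          if_pos (show t = K by omega)]
        by_cases ht : 1 ≤ t
        · rw [if_pos ht, getD_pad, if_pos (show t - 1 < K by omega)]
          omega
        · rw [if_neg ht]
          omega
      · rw [if_neg (show ¬ t < K by omega), if_neg (show ¬ t = K by omega),
          if_pos (show 1 ≤ t by omega), getD_pad, if_neg (show ¬ t - 1 < K by omega),
          show t - K = (t - K - 1) + 1 by omega, List.getD_cons_succ,
          show t - 1 - K = t - K - 1 by omega, Nat.zero_add]

/-- The canonical form of a zero-padded word: the codeword of `CNK` that it is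
confusable with. -/
def tau (N K : ℕ) (u : List ℕ) : List ℕ :=
  if h : u.length ≤ K then List.replicate u.length 0
  else if N ≤ Spre u (K+1)
    then N :: tau N K ((removeCnt N u).tail)
    else Spre u (K+1) :: (List.replicate K 0 ++ tau N K (u.drop (K+1)))
termination_by u.length
decreasing_by
  · simp only [List.length_tail, removeCnt_length]
    omega
  · simp only [List.length_drop]
    omega

lemma tau_base {N K : ℕ} {u : List ℕ} (h : u.length ≤ K) :
    tau N K u = List.replicate u.length 0 := by
  rw [tau, dif_pos h]

lemma tau_rec1 {N K : ℕ} {u : List ℕ} (h : ¬ u.length ≤ K) (h2 : N ≤ Spre u (K+1)) :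
    tau N K u = N :: tau N K ((removeCnt N u).tail) := by
  rw [tau, dif_neg h, if_pos h2]

lemma tau_rec2 {N K : ℕ} {u : List ℕ} (h : ¬ u.length ≤ K) (h2 : ¬ N ≤ Spre u (K+1)) :
    tau N K u = Spre u (K+1) :: (List.replicate K 0 ++ tau N K (u.drop (K+1))) := by
  rw [tau, dif_neg h, if_neg h2]

lemma tau_mem (N K : ℕ) : ∀ n (u : List ℕ), u.length = n →
    (∀ i, u.getD i 0 ≤ N) → (∀ i, n ≤ i + K → u.getD i 0 = 0) →
    tau N K u ∈ CNK N K n := by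
  intro n
  induction n using Nat.strong_induction_on with
  | _ n ih =>
    intro u hu hb hz
    by_cases h : u.length ≤ K
    · rw [tau_base h, hu, mem_CNK_base (by omega)]
    · rw [mem_CNK_rec (by omega : ¬ n ≤ K)]
      by_cases h2 : N ≤ Spre u (K+1)
      · left
        rw [tau_rec1 h h2]
        refine ⟨tau N K ((removeCnt N u).tail), ?_, rfl⟩
        refine ih (n-1) (by omega) _ (by simp [List.length_tail]; omega) ?_ ?_
        · intro i
          rw [getD_tail]
          exact le_trans (removeCnt_getD_le _ _ _) (hb (i+1))
        · intro i hi
          rw [getD_tail]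
          have := hz (i+1) (by omega)
          have h3 := removeCnt_getD_le N u (i+1)
          omega
      · right
        rw [tau_rec2 h h2]
        refine ⟨Spre u (K+1), by omega, tau N K (u.drop (K+1)), ?_, ?_⟩
        · refine ih (n-K-1) (by omega) _ (by simp [List.length_drop]; omega) ?_ ?_
          · intro i
            rw [getD_drop]
            exact hb _
          · intro i hi
            rw [getD_drop]
            exact hz _ (by omega)
        · rfl

lemma tau_length (N K : ℕ) (u : List ℕ) (hb : ∀ i, u.getD i 0 ≤ N)
    (hz : ∀ i, u.length ≤ i + K → u.getD i 0 = 0) : (tau N K u).length = u.length :=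
  CNK_length u.length _ (tau_mem N K u.length u rfl hb hz)

lemma tau_produces (N K : ℕ) : ∀ n (u : List ℕ), u.length = n →
    (∀ i, u.getD i 0 ≤ N) → (∀ i, n ≤ i + K → u.getD i 0 = 0) →
    Produces K u (List.replicate K 0 ++ tau N K u) := by
  intro n
  induction n using Nat.strong_induction_on with
  | _ n ih =>
    intro u hu hb hz
    by_cases h : u.length ≤ K
    · have hu0 : u = List.replicate n 0 := by
        apply eq_of_getD (by simp [hu])
        intro r _
        rw [getD_replicate_zero]
        exact hz r (by omega)
      rw [tau_base h, hu]
      rw [hu0]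
      exact produces_zero K n
    · by_cases h2 : N ≤ Spre u (K+1)
      · -- head block `N`
        rw [tau_rec1 h h2]
        obtain ⟨v, hv⟩ : ∃ v, v = removeCnt N u := ⟨_, rfl⟩
        rw [← hv]
        have hvl : v.length = n := by rw [hv, removeCnt_length, hu]
        have hS : ∀ m, Spre v m = Spre u m - N := by rw [hv]; exact removeCnt_Spre N u
        have hle : ∀ i, v.getD i 0 ≤ u.getD i 0 := by rw [hv]; exact removeCnt_getD_le N u
        have hP : Produces K v.tail (List.replicate K 0 ++ tau N K v.tail) := by
          refine ih (n-1) (by omega) _ (by simp [List.length_tail, hvl]) ?_ ?_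
          · intro i
            rw [getD_tail]
            exact le_trans (hle (i+1)) (hb (i+1))
          · intro i hi
            rw [getD_tail]
            have := hz (i+1) (by omega)
            have h3 := hle (i+1)
            omega
        refine produces_head (r := fun i => u.getD i 0 - v.getD i 0) (by omega) (by omega) ?_ ?_ ?_ ?_ hP
        · intro i
          beta_reduce
          have := hle i
          omega
        · intro i hiK
          beta_reduce
          have e1 := hS i
          have e2 := hS (i+1)
          have s1 := Spre_succ u i
          have s2 := Spre_succ v i
          have hm : Spre u (K+1) ≤ Spre u i := Spre_mono u (by omega)
          omega
        · have hsub : (∑ i ∈ Finset.range (K+1), (u.getD i 0 - v.getD i 0))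
              = Spre u (K+1) - Spre v (K+1) := by
            rw [sum_sub_of_le _ _ _ (fun i _ => hle i)]
            rfl
          beta_reduce
          rw [hsub, hS (K+1)]
          omega
        · have e1 := hS 1
          have s1 : Spre u 1 = Spre u 0 + u.getD 0 0 := Spre_succ u 0
          have s2 : Spre v 1 = Spre v 0 + v.getD 0 0 := Spre_succ v 0
          have h0 : Spre u 0 = 0 := Finset.sum_range_zero _
          have h0' : Spre v 0 = 0 := Finset.sum_range_zero _
          have := hb 0
          omega
      · -- small block
        rw [tau_rec2 h h2]
        have hp : (u.take (K+1)).length = K + 1 := by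
          rw [List.length_take]
          omega
        have hsum_p : (u.take (K+1)).sum = Spre u (K+1) := by
          rw [sum_eq_Spre, hp]
          exact Finset.sum_congr rfl fun i hi =>
            getD_take u (K+1) i (Finset.mem_range.1 hi)
        have hblock := produces_block K (u.take (K+1)) hp
        rw [hsum_p] at hblock
        have hdrop : Produces K (u.drop (K+1)) (List.replicate K 0 ++ tau N K (u.drop (K+1))) := by
          refine ih (n-K-1) (by omega) _ (by simp [List.length_drop]; omega) ?_ ?_
          · intro i
            rw [getD_drop]
            exact hb _
          · intro i hi
            rw [getD_drop]
            exact hz _ (by omega)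
        have := produces_append hblock hdrop
        rw [List.take_append_drop] at this
        rw [show (Spre u (K+1) :: List.replicate K 0) ++ tau N K (u.drop (K+1))
            = Spre u (K+1) :: (List.replicate K 0 ++ tau N K (u.drop (K+1))) from rfl] at this
        exact this

lemma zp_getD {K n : ℕ} {u : List ℕ} (hs : List.replicate (min n K) 0 <:+ u)
    (hl : u.length = n) : ∀ i, n ≤ i + K → u.getD i 0 = 0 := by
  obtain ⟨pre, hpre⟩ := hs
  intro i hi
  rcases Nat.lt_or_ge i n with h | h
  · have hplen : pre.length = n - min n K := by
      have := congrArg List.length hpre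
      simp only [List.length_append, List.length_replicate] at this
      omega
    rw [← hpre, List.getD_append_right _ _ _ _ (by omega), getD_replicate_zero]
  · exact List.getD_eq_default _ _ (by omega)

lemma code_getD_le {N : ℕ} {u : List ℕ} (h : ∀ a ∈ u, a ≤ N) (i : ℕ) :
    u.getD i 0 ≤ N := by
  rcases Nat.lt_or_ge i u.length with hi | hi
  · rw [List.getD_eq_getElem _ _ hi]
    exact h _ (List.getElem_mem hi)
  · rw [List.getD_eq_default _ _ hi]
    exact Nat.zero_le N

/-- `C_{N,K}(n)` is a zero-padded zero-error code for DTPC(N, K), and it is a largest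
such code: every zero-padded zero-error code of length `n` has cardinality at most
`|C_{N,K}(n)|`. -/
theorem CNK_largest_zero_padded_zero_error_code (N K : ℕ) (hN : 1 ≤ N) (n : ℕ) :
    (IsZeroPadded K n (CNK N K n) ∧ IsZeroError N K n (CNK N K n)) ∧
      ∀ C : Finset (List ℕ), IsZeroPadded K n C → IsZeroError N K n C →
        C.card ≤ (CNK N K n).card := by
  refine ⟨⟨fun u hu => CNK_padded n u hu, CNK_zero_error N K n⟩, ?_⟩
  intro C hzp hze
  apply Finset.card_le_card_of_injOn (tau N K)
  · intro u hu
    obtain ⟨hul, hub⟩ := hze.1 u hu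
    exact tau_mem N K n u hul (code_getD_le hub) (zp_getD (hzp u hu) hul)
  · intro u hu' v hv' htau
    have hu : u ∈ C := hu'
    have hv : v ∈ C := hv'
    by_contra hne
    obtain ⟨hul, hub⟩ := hze.1 u hu
    obtain ⟨hvl, hvb⟩ := hze.1 v hv
    have h1 : Produces K u (List.replicate K 0 ++ tau N K u) :=
      tau_produces N K n u hul (code_getD_le hub) (zp_getD (hzp u hu) hul)
    have h2 : Produces K v (List.replicate K 0 ++ tau N K v) :=
      tau_produces N K n v hvl (code_getD_le hvb) (zp_getD (hzp v hv) hvl)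
    rw [← htau] at h2
    refine hze.2 [u] [v] rfl (by simp) ?_ ?_ ?_ (List.replicate K 0 ++ tau N K u) ?_
    · intro w hw
      rw [List.mem_singleton] at hw
      rwa [hw]
    · intro w hw
      rw [List.mem_singleton] at hw
      rwa [hw]
    · simpa using hne
    · constructor
      · simpa using h1
      · simpa using h2
end

section
/- Let C be a zero-padded zero-error code of length n > K for DTPC(N,K). Then there exists a zero-padded zero-error code D of length n for DTPC(N,K) with |D| = |C| such that every codeword of D either begins with the symbol N, or begins with the prefix i ∘ 0^K for some i ∈ {0,1,…,N−1}. -/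
namespace DTPCAux

def psum (l : List ℕ) (t : ℕ) : ℕ := ∑ s ∈ Finset.range t, l.getD s 0

lemma psum_zero (l : List ℕ) : psum l 0 = 0 := by simp [psum]

lemma psum_succ (l : List ℕ) (t : ℕ) : psum l (t + 1) = psum l t + l.getD t 0 :=
  Finset.sum_range_succ _ _

lemma psum_mono (l : List ℕ) : Monotone (psum l) := fun _ _ h =>
  Finset.sum_le_sum_of_subset (Finset.range_subset_range.2 h)

lemma psum_stable (l : List ℕ) {a t : ℕ} (h0 : ∀ s, a ≤ s → l.getD s 0 = 0) (h : a ≤ t) :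
    psum l t = psum l a :=
  (Finset.sum_subset (Finset.range_subset_range.2 h)
    (fun s _ hns => h0 s (by simpa using hns))).symm

lemma psum_of_len_le (l : List ℕ) {t : ℕ} (h : l.length ≤ t) : psum l t = psum l l.length :=
  psum_stable l (fun _ hs => List.getD_eq_default _ _ hs) h

lemma getD_le {N : ℕ} {x : List ℕ} (h : ∀ a ∈ x, a ≤ N) (t : ℕ) : x.getD t 0 ≤ N := by
  rcases lt_or_ge t x.length with ht | ht
  · rw [List.getD_eq_getElem _ _ ht]; exact h _ (List.getElem_mem ht)
  · rw [List.getD_eq_default _ _ ht]; exact Nat.zero_le N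

lemma psum_append_left (w A : List ℕ) {t : ℕ} (h : t ≤ w.length) :
    psum (w ++ A) t = psum w t := by
  refine Finset.sum_congr rfl fun s hs => ?_
  have hs' : s < w.length := lt_of_lt_of_le (Finset.mem_range.1 hs) h
  rw [List.getD_append _ _ _ _ hs']

lemma psum_append_right (w A : List ℕ) (s : ℕ) :
    psum (w ++ A) (w.length + s) = psum w w.length + psum A s := by
  induction s with
  | zero => simpa [psum_zero] using psum_append_left w A le_rfl
  | succ s ih =>
      have h : w.length + (s + 1) = (w.length + s) + 1 := rfl
      rw [h, psum_succ, ih, psum_succ, List.getD_append_right _ _ _ _ (Nat.le_add_right _ _)]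
      simp [Nat.add_sub_cancel_left, Nat.add_assoc]

lemma tele (a b : ℕ) (W : ℕ → ℕ) (hW : Monotone W) (m : ℕ) :
    ∑ j ∈ Finset.range m, (min b (W (j + 1)) - max a (W j)) = min b (W m) - max a (W 0) := by
  induction m with
  | zero => simp
  | succ m ih =>
      rw [Finset.sum_range_succ, ih]
      have h1 : W 0 ≤ W m := hW (Nat.zero_le m)
      have h2 : W m ≤ W (m + 1) := hW (Nat.le_succ m)
      omega


lemma psum_le_len (l : List ℕ) (t : ℕ) : psum l t ≤ psum l l.length := by
  rcases le_total t l.length with h | h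
  · exact psum_mono l h
  · exact le_of_eq (psum_of_len_le l h)

lemma produces_of_bounds (K : ℕ) (x : List ℕ) (Z : ℕ → ℕ) (hm : Monotone Z) (h0 : Z 0 = 0)
    (hup : ∀ t, Z t ≤ psum x t) (hlo : ∀ t, psum x t ≤ Z (t + K)) :
    Produces K x ((List.range (x.length + K)).map fun t => Z (t + 1) - Z t) := by
  refine ⟨by simp, fun i j => min (Z (i + j + 1)) (psum x (i + 1)) - max (Z (i + j)) (psum x i), ?_, ?_⟩
  · intro i hi
    have ht := tele (psum x i) (psum x (i + 1)) (fun u => Z (u + i))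
      (fun a b h => hm (by omega)) (K + 1)
    have hre : ∀ j ∈ Finset.range (K + 1),
        min (Z (i + j + 1)) (psum x (i + 1)) - max (Z (i + j)) (psum x i)
        = min (psum x (i + 1)) ((fun u => Z (u + i)) (j + 1)) - max (psum x i) ((fun u => Z (u + i)) j) := by
      intro j _
      have e1 : i + j + 1 = j + 1 + i := by omega
      have e2 : i + j = j + i := by omega
      simp only []
      rw [e1, e2, Nat.min_comm, Nat.max_comm]
    rw [Finset.sum_congr rfl hre, ht]
    have hZhi : psum x (i + 1) ≤ Z (K + 1 + i) := by
      have := hlo (i + 1)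
      have e : i + 1 + K = K + 1 + i := by omega
      rwa [e] at this
    have hZlo : Z (0 + i) ≤ psum x i := by simpa using hup i
    have := psum_succ x i
    have hg : x.getD i 0 ≤ psum x (i+1) := by omega
    omega
  · intro t ht
    have hgetD : ((List.range (x.length + K)).map fun t => Z (t + 1) - Z t).getD t 0
        = Z (t + 1) - Z t := by
      rw [List.getD_eq_getElem _ _ (by simpa using ht)]
      simp
    rw [hgetD]
    have key : ∀ i ∈ Finset.range x.length,
        (∑ j ∈ Finset.range (K + 1), if i + j = t then
            min (Z (i + j + 1)) (psum x (i + 1)) - max (Z (i + j)) (psum x i) else 0)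
        = min (Z (t + 1)) (psum x (i + 1)) - max (Z t) (psum x i) := by
      intro i _
      rcases le_or_gt i t with hit | hit
      · rcases le_or_gt t (i + K) with htk | htk
        · -- exactly one j works: j = t - i
          rw [Finset.sum_eq_single (t - i)]
          · have e : i + (t - i) = t := by omega
            rw [e, if_pos rfl]
          · intro j _ hj
            rw [if_neg (by omega)]
          · intro h
            exact absurd (Finset.mem_range.2 (by omega)) h
        · -- i + K < t : all terms 0, RHS 0 too
          rw [Finset.sum_eq_zero (fun j hj => by
            rw [if_neg (by have := Finset.mem_range.1 hj; omega)])]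
          have h1 : psum x (i + 1) ≤ psum x (t - K) := psum_mono x (by omega)
          have h2 : psum x (t - K) ≤ Z t := by
            have := hlo (t - K)
            have e : t - K + K = t := by omega
            rwa [e] at this
          omega
      · -- t < i : all terms 0, RHS 0
        rw [Finset.sum_eq_zero (fun j hj => by rw [if_neg (by omega)])]
        have h1 : Z (t + 1) ≤ psum x (t + 1) := hup (t + 1)
        have h2 : psum x (t + 1) ≤ psum x i := psum_mono x (by omega)
        omega
    rw [Finset.sum_congr rfl key]
    have ht2 := tele (Z t) (Z (t + 1)) (psum x) (psum_mono x) x.length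
    rw [ht2]
    have h1 : Z (t + 1) ≤ psum x x.length := le_trans (hup (t + 1)) (psum_le_len x (t + 1))
    have h2 : Z t ≥ 0 := Nat.zero_le _
    have h3 : psum x 0 = 0 := psum_zero x
    have h4 : Z t ≤ Z (t + 1) := hm (Nat.le_succ t)
    omega

lemma bounds_of_produces {K : ℕ} {x z : List ℕ} (h : Produces K x z) :
    (∀ t, psum z t ≤ psum x t) ∧ (∀ s, psum x s ≤ psum z (s + K)) := by
  obtain ⟨hlen, d, hd, hz⟩ := h
  have hzval : ∀ T, T ≤ x.length + K → psum z T =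
      ∑ i ∈ Finset.range x.length, ∑ j ∈ Finset.range (K + 1),
        if i + j < T then d i j else 0 := by
    intro T hT
    unfold psum
    rw [Finset.sum_congr rfl (fun t ht' =>
      hz t (lt_of_lt_of_le (Finset.mem_range.1 ht') hT))]
    rw [Finset.sum_comm]
    refine Finset.sum_congr rfl fun i _ => ?_
    rw [Finset.sum_comm]
    refine Finset.sum_congr rfl fun j _ => ?_
    rw [Finset.sum_ite_eq (Finset.range T) (i + j) (fun _ => d i j)]
    simp
  constructor
  · intro T
    rcases le_or_gt T (x.length + K) with hT | hT
    · rw [hzval T hT]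
      calc ∑ i ∈ Finset.range x.length, ∑ j ∈ Finset.range (K + 1),
              (if i + j < T then d i j else 0)
          ≤ ∑ i ∈ Finset.range x.length, ∑ j ∈ Finset.range (K + 1),
              (if i < T then d i j else 0) := by
            refine Finset.sum_le_sum fun i _ => Finset.sum_le_sum fun j _ => ?_
            split_ifs <;> omega
        _ = ∑ i ∈ Finset.range x.length, (if i < T then x.getD i 0 else 0) := by
            refine Finset.sum_congr rfl fun i hi => ?_
            by_cases hiT : i < T
            · simp only [if_pos hiT]; exact hd i (Finset.mem_range.1 hi)
            · simp [hiT]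
        _ ≤ psum x T := by
            unfold psum
            rw [← Finset.sum_filter]
            refine Finset.sum_le_sum_of_subset fun i hi => ?_
            simp only [Finset.mem_filter, Finset.mem_range] at hi ⊢
            exact hi.2
    · have h1 : psum z T = psum z z.length := psum_of_len_le z (by omega)
      have h2 := hzval (x.length + K) le_rfl
      rw [hlen] at h1
      rw [h1, h2]
      calc _ ≤ ∑ i ∈ Finset.range x.length, ∑ j ∈ Finset.range (K + 1), d i j := by
              refine Finset.sum_le_sum fun i _ => Finset.sum_le_sum fun j _ => ?_
              split_ifs <;> omega
        _ = ∑ i ∈ Finset.range x.length, x.getD i 0 := by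
              exact Finset.sum_congr rfl fun i hi => hd i (Finset.mem_range.1 hi)
        _ = psum x x.length := rfl
        _ ≤ psum x T := psum_mono x (by omega)
  · intro S
    rcases le_or_gt S x.length with hS | hS
    · have : psum x S = ∑ i ∈ Finset.range S, ∑ j ∈ Finset.range (K + 1), d i j := by
        unfold psum
        exact Finset.sum_congr rfl fun i hi => (hd i (by have := Finset.mem_range.1 hi; omega)).symm
      rw [this, hzval (S + K) (by omega)]
      calc ∑ i ∈ Finset.range S, ∑ j ∈ Finset.range (K + 1), d i j
          = ∑ i ∈ Finset.range S, ∑ j ∈ Finset.range (K + 1),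
              (if i + j < S + K then d i j else 0) := by
            refine Finset.sum_congr rfl fun i hi => Finset.sum_congr rfl fun j hj => ?_
            rw [if_pos (by have := Finset.mem_range.1 hi; have := Finset.mem_range.1 hj; omega)]
        _ ≤ _ := by
            refine Finset.sum_le_sum_of_subset_of_nonneg
              (Finset.range_subset_range.2 hS) fun i _ _ => ?_
            positivity
    · have h1 : psum x S = psum x x.length := psum_of_len_le x (by omega)
      have h2 : psum x x.length ≤ psum z (x.length + K) := by
        rw [hzval (x.length + K) le_rfl]
        refine le_of_eq ?_
        calc psum x x.length = ∑ i ∈ Finset.range x.length, ∑ j ∈ Finset.range (K + 1), d i j :=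
              Finset.sum_congr rfl fun i hi => (hd i (Finset.mem_range.1 hi)).symm
          _ = ∑ i ∈ Finset.range x.length, ∑ j ∈ Finset.range (K + 1),
                (if i + j < x.length + K then d i j else 0) := by
              refine Finset.sum_congr rfl fun i hi => Finset.sum_congr rfl fun j hj => ?_
              rw [if_pos (by have := Finset.mem_range.1 hi; have := Finset.mem_range.1 hj; omega)]
      calc psum x S = psum x x.length := h1
        _ ≤ psum z (x.length + K) := h2
        _ ≤ psum z (S + K) := psum_mono z (by omega)


/-- The "gap" (non-confusability certificate) relation. -/
def Gp (K : ℕ) (x y : List ℕ) : Prop :=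
  ∃ s, psum y (s + K) < psum x s ∨ psum x (s + K) < psum y s

lemma Gp_irrefl {K : ℕ} {x : List ℕ} : ¬ Gp K x x := by
  rintro ⟨s, h | h⟩ <;> exact absurd (psum_mono x (Nat.le_add_right s K)) (by omega)

/-- A word of length n that is zero from position n-K on. -/
def Pad (K n : ℕ) (w : List ℕ) : Prop :=
  w.length = n ∧ ∀ t, n - K ≤ t → w.getD t 0 = 0

lemma Pad.psum_stable' {K n : ℕ} {w : List ℕ} (h : Pad K n w) {t : ℕ} (ht : n - K ≤ t) :
    psum w t = psum w (n - K) := psum_stable w h.2 ht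

lemma Pad.psum_le {K n : ℕ} {w : List ℕ} (h : Pad K n w) (t : ℕ) :
    psum w t ≤ psum w (n - K) := by
  rcases le_total t (n - K) with ht | ht
  · exact psum_mono w ht
  · exact le_of_eq (h.psum_stable' ht)

/-- lifting a gap over a common prefix -/
lemma Gp_append {K : ℕ} (w A B : List ℕ) (h : Gp K A B) : Gp K (w ++ A) (w ++ B) := by
  obtain ⟨s, h | h⟩ := h
  · refine ⟨w.length + s, Or.inl ?_⟩
    have e : w.length + s + K = w.length + (s + K) := by omega
    rw [e, psum_append_right, psum_append_right]
    omega
  · refine ⟨w.length + s, Or.inr ?_⟩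
    have e : w.length + s + K = w.length + (s + K) := by omega
    rw [e, psum_append_right, psum_append_right]
    omega

/-- one-sided gap for distinct heads lifts to the appended words -/
lemma Gp_head {K n : ℕ} (hKn : K < n) {x y : List ℕ} (A B : List ℕ)
    (hx : Pad K n x) (hy : Pad K n y) {s : ℕ} (h : psum y (s + K) < psum x s) :
    ∃ s', psum (y ++ B) (s' + K) < psum (x ++ A) s' := by
  rcases le_or_gt (s + K) n with hsK | hsK
  · refine ⟨s, ?_⟩
    have hxl := hx.1
    have hyl := hy.1
    rw [psum_append_left x A (by omega), psum_append_left y B (by omega)]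
    exact h
  · -- use witness n - K
    have h1 : psum y (s + K) = psum y n := by
      rcases le_or_gt n (s + K) with h' | h'
      · rw [psum_of_len_le y (by rw [hy.1]; omega), hy.1]
      · omega
    have h2 : psum x s ≤ psum x (n - K) := hx.psum_le s
    refine ⟨n - K, ?_⟩
    have e : n - K + K = n := by omega
    rw [e, psum_append_left x A (by rw [hx.1]; omega), psum_append_left y B (by rw [hy.1])]
    omega

lemma gp_flatten {K n : ℕ} (hKn : K < n) :
    ∀ L₁ L₂ : List (List ℕ), L₁.length = L₂.length →
    (∀ w ∈ L₁, Pad K n w) → (∀ w ∈ L₂, Pad K n w) →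
    (∀ x ∈ L₁, ∀ y ∈ L₂, x ≠ y → Gp K x y) →
    L₁.flatten ≠ L₂.flatten → Gp K L₁.flatten L₂.flatten := by
  intro L₁
  induction L₁ with
  | nil =>
      intro L₂ hl _ _ _ hne
      have : L₂ = [] := List.length_eq_zero_iff.1 hl.symm
      simp [this] at hne
  | cons x T₁ ih =>
      intro L₂ hl h1 h2 hp hne
      obtain ⟨y, T₂, rfl⟩ : ∃ y T₂, L₂ = y :: T₂ := by
        cases L₂ with
        | nil => simp at hl
        | cons y T₂ => exact ⟨y, T₂, rfl⟩
      have hx : Pad K n x := h1 x (by simp)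
      have hy : Pad K n y := h2 y (by simp)
      rw [List.flatten_cons, List.flatten_cons]
      by_cases hxy : x = y
      · subst hxy
        have hTne : T₁.flatten ≠ T₂.flatten := by
          intro hT
          rw [List.flatten_cons, List.flatten_cons, hT] at hne
          exact hne rfl
        have hg := ih T₂ (by simpa using hl) (fun w hw => h1 w (by simp [hw]))
          (fun w hw => h2 w (by simp [hw]))
          (fun a ha b hb hab => hp a (by simp [ha]) b (by simp [hb]) hab) hTne
        exact Gp_append x _ _ hg
      · obtain ⟨s, hc | hc⟩ := hp x (by simp) y (by simp) hxy
        · obtain ⟨s', hs'⟩ := Gp_head hKn T₁.flatten T₂.flatten hx hy hc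
          exact ⟨s', Or.inl hs'⟩
        · obtain ⟨s', hs'⟩ := Gp_head hKn T₂.flatten T₁.flatten hy hx hc
          exact ⟨s', Or.inr hs'⟩


/-- the canonicalizing prefix-sum profile -/
def Gf (N K : ℕ) (x : List ℕ) (t : ℕ) : ℕ :=
  max (psum x t) (min (N * t) (psum x (K + 1)))

/-- the canonicalizing map on codewords -/
def fmap (N K n : ℕ) (x : List ℕ) : List ℕ :=
  (List.range n).map fun t => Gf N K x (t + 1) - Gf N K x t

lemma Gf_mono (N K : ℕ) (x : List ℕ) : Monotone (Gf N K x) := by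
  intro a b h
  exact max_le_max (psum_mono x h) (min_le_min (Nat.mul_le_mul_left N h) le_rfl)

lemma Gf_zero (N K : ℕ) (x : List ℕ) : Gf N K x 0 = 0 := by
  simp [Gf, psum_zero]

lemma Gf_step {N K : ℕ} {x : List ℕ} (hN : ∀ a ∈ x, a ≤ N) (t : ℕ) :
    Gf N K x (t + 1) ≤ Gf N K x t + N := by
  have h1 : psum x (t + 1) ≤ psum x t + N := by
    rw [psum_succ]; have := getD_le hN t; omega
  have h2 : N * (t + 1) = N * t + N := by ring
  unfold Gf
  omega

lemma Gf_ge_psum (N K : ℕ) (x : List ℕ) (t : ℕ) : psum x t ≤ Gf N K x t := le_max_left _ _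

lemma length_fmap (N K n : ℕ) (x : List ℕ) : (fmap N K n x).length = n := by simp [fmap]

lemma getD_fmap (N K n : ℕ) (x : List ℕ) {t : ℕ} (ht : t < n) :
    (fmap N K n x).getD t 0 = Gf N K x (t + 1) - Gf N K x t := by
  rw [List.getD_eq_getElem _ _ (by simpa [length_fmap] using ht)]
  simp [fmap]

lemma psum_fmap (N K n : ℕ) (x : List ℕ) {t : ℕ} (ht : t ≤ n) :
    psum (fmap N K n x) t = Gf N K x t := by
  induction t with
  | zero => rw [psum_zero, Gf_zero]
  | succ t ih =>
      show psum (fmap N K n x) (t + 1) = Gf N K x (t + 1)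
      rw [psum_succ, ih (by omega), getD_fmap N K n x (by omega : t < n)]
      have := Gf_mono N K x (show t ≤ t + 1 by omega)
      omega

lemma psum_fmap_ge (N K n : ℕ) (x : List ℕ) {t : ℕ} (ht : n ≤ t) :
    psum (fmap N K n x) t = Gf N K x n := by
  rw [psum_of_len_le _ (by rw [length_fmap]; exact ht), length_fmap, psum_fmap N K n x le_rfl]

section Bundle

variable {N K n : ℕ} {x : List ℕ}

/-- S is below the saturated value -/
lemma S_le_pad (hp : Pad K n x) : psum x (K + 1) ≤ psum x (n - K) := hp.psum_le _

lemma Gf_high (hp : Pad K n x) {t : ℕ} (ht : n - K ≤ t) :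
    Gf N K x t = psum x (n - K) := by
  unfold Gf
  have h1 : psum x t = psum x (n - K) := hp.psum_stable' ht
  have h2 : psum x (K + 1) ≤ psum x (n - K) := S_le_pad hp
  omega

/-- one-sided gap preservation -/
lemma gp_fmap_one (hKn : K < n) {y : List ℕ} (hpx : Pad K n x) (hpy : Pad K n y)
    {s : ℕ} (h : psum y (s + K) < psum x s) :
    ∃ s', psum (fmap N K n y) (s' + K) < psum (fmap N K n x) s' := by
  have hs1 : 1 ≤ s := by
    by_contra h'
    have : s = 0 := by omega
    subst this
    rw [psum_zero] at h
    omega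
  -- reduce to s ≤ n
  obtain ⟨s, hs1, hsn, h⟩ : ∃ s, 1 ≤ s ∧ s ≤ n ∧ psum y (s + K) < psum x s := by
    rcases le_or_gt s n with hsn | hsn
    · exact ⟨s, hs1, hsn, h⟩
    · refine ⟨n, by omega, le_rfl, ?_⟩
      have e1 : psum x s = psum x n := by
        rw [psum_of_len_le x (by rw [hpx.1]; omega), hpx.1]
      have e2 : psum y (n + K) ≤ psum y (s + K) := psum_mono y (by omega)
      omega
  refine ⟨s, ?_⟩
  have hxval : psum x s ≤ psum (fmap N K n x) s := by
    rw [psum_fmap N K n x hsn]; exact Gf_ge_psum N K x s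
  have hyval : psum (fmap N K n y) (s + K) ≤ psum y (s + K) := by
    rcases le_or_gt (s + K) n with hsk | hsk
    · rw [psum_fmap N K n y hsk]
      unfold Gf
      have h2 : psum y (K + 1) ≤ psum y (s + K) := psum_mono y (by omega)
      omega
    · rw [psum_fmap_ge N K n y (by omega)]
      unfold Gf
      have h1 : psum y (K + 1) ≤ psum y (n - K) := S_le_pad hpy
      have h2 : psum y (n - K) ≤ psum y n := psum_mono y (by omega)
      have h3 : psum y n ≤ psum y (s + K) := psum_mono y (by omega)
      omega
  omega

lemma gp_fmap (hKn : K < n) {y : List ℕ} (hpx : Pad K n x) (hpy : Pad K n y)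
    (h : Gp K x y) : Gp K (fmap N K n x) (fmap N K n y) := by
  obtain ⟨s, h | h⟩ := h
  · obtain ⟨s', hs'⟩ := gp_fmap_one hKn hpx hpy h
    exact ⟨s', Or.inl hs'⟩
  · obtain ⟨s', hs'⟩ := gp_fmap_one hKn hpy hpx h
    exact ⟨s', Or.inr hs'⟩

/-- padding of the image -/
lemma pad_fmap (hKn : K < n) (hpx : Pad K n x) : Pad K n (fmap N K n x) := by
  refine ⟨length_fmap N K n x, fun t ht => ?_⟩
  rcases lt_or_ge t n with htn | htn
  · rw [getD_fmap N K n x htn, Gf_high hpx (by omega), Gf_high hpx (by omega)]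
    omega
  · exact List.getD_eq_default _ _ (by rw [length_fmap]; exact htn)

lemma suffix_fmap (hKn : K < n) (hpx : Pad K n x) :
    List.replicate (min n K) 0 <:+ fmap N K n x := by
  have hmin : min n K = K := min_eq_right (le_of_lt hKn)
  rw [hmin]
  have hdrop : (fmap N K n x).drop (n - K) = List.replicate K 0 := by
    apply List.ext_getElem
    · rw [List.length_drop, length_fmap, List.length_replicate]; omega
    · intro i h1 h2
      have hlt : n - K + i < n := by
        rw [List.length_drop, length_fmap] at h1; omega
      have hlt' : n - K + i < (fmap N K n x).length := by rw [length_fmap]; exact hlt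
      rw [List.getElem_drop, List.getElem_replicate,
        ← List.getD_eq_getElem _ 0 hlt', getD_fmap N K n x hlt,
        Gf_high hpx (by omega), Gf_high hpx (by omega)]
      omega
  exact ⟨(fmap N K n x).take (n - K), by rw [← hdrop]; exact List.take_append_drop _ _⟩

/-- entries of the image are ≤ N -/
lemma le_fmap (hN : ∀ a ∈ x, a ≤ N) : ∀ a ∈ fmap N K n x, a ≤ N := by
  intro a ha
  rw [fmap, List.mem_map] at ha
  obtain ⟨t, _, rfl⟩ := ha
  have := Gf_step (K := K) hN t
  omega

/-- canonical form of the image -/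
lemma canonical_fmap (hN : 1 ≤ N) (hKn : K < n) (hNx : ∀ a ∈ x, a ≤ N) :
    (∃ v : List ℕ, fmap N K n x = N :: v) ∨
      ∃ i < N, ∃ v : List ℕ, fmap N K n x = (i :: List.replicate K 0) ++ v := by
  set S := psum x (K + 1) with hS
  rcases le_or_gt N S with hc | hc
  · -- starts with N
    left
    have hne : fmap N K n x ≠ [] := by
      intro h
      have := length_fmap N K n x
      rw [h] at this
      simp at this
      omega
    obtain ⟨a, v, hav⟩ := List.exists_cons_of_ne_nil hne
    have ha : a = N := by
      have h0 : (fmap N K n x).getD 0 0 = a := by rw [hav]; rfl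
      rw [getD_fmap N K n x (by omega : 0 < n)] at h0
      have hG1 : Gf N K x 1 = N := by
        unfold Gf
        have h1 : psum x 1 ≤ N := by
          rw [psum_succ, psum_zero]
          have := getD_le hNx 0
          omega
        have h2 : N * 1 = N := by ring
        omega
      rw [Gf_zero, hG1] at h0
      omega
    rw [ha] at hav
    exact ⟨v, hav⟩
  · -- starts with S followed by K zeros
    right
    have hGmid : ∀ t, 1 ≤ t → t ≤ K + 1 → Gf N K x t = S := by
      intro t h1t htK
      unfold Gf
      have h1 : psum x t ≤ S := psum_mono x htK
      have h2 : N * 1 ≤ N * t := Nat.mul_le_mul_left N h1t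
      omega
    have htake : (fmap N K n x).take (K + 1) = S :: List.replicate K 0 := by
      apply List.ext_getElem
      · rw [List.length_take, length_fmap, List.length_cons, List.length_replicate]
        omega
      · intro i h1 h2
        have hiK : i < K + 1 := by
          rw [List.length_take, length_fmap] at h1; omega
        have hin : i < n := by omega
        have hin' : i < (fmap N K n x).length := by rw [length_fmap]; exact hin
        rw [List.getElem_take, ← List.getD_eq_getElem _ 0 hin', getD_fmap N K n x hin]
        rcases Nat.eq_zero_or_pos i with hi0 | hi0
        · subst hi0
          rw [Gf_zero, hGmid 1 le_rfl (by omega), List.getElem_cons]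
          simp
        · have e : (S :: List.replicate K 0)[i] = 0 := by
            rw [List.getElem_cons]
            rw [dif_neg (by omega)]
            exact List.getElem_replicate ..
          rw [e, hGmid (i + 1) (by omega) (by omega), hGmid i (by omega) (by omega)]
          omega
    refine ⟨S, hc, (fmap N K n x).drop (K + 1), ?_⟩
    have := List.take_append_drop (K + 1) (fmap N K n x)
    rw [htake] at this
    rw [← this]
    simp

end Bundle

/-- Extract padding info from the zero-padded hypothesis. -/
lemma pad_of_suffix {K n : ℕ} (hKn : K < n) {x : List ℕ} (hlen : x.length = n)
    (h : List.replicate (min n K) 0 <:+ x) : Pad K n x := by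
  refine ⟨hlen, fun t ht => ?_⟩
  obtain ⟨u, hu⟩ := h
  have hmin : min n K = K := min_eq_right (le_of_lt hKn)
  rw [hmin] at hu
  have hul : u.length = n - K := by
    have := congrArg List.length hu
    simp at this
    omega
  rcases lt_or_ge t x.length with htl | htl
  · rw [← hu, List.getD_append_right _ _ _ _ (by omega)]
    have hrep : ∀ s, (List.replicate K (0:ℕ)).getD s 0 = 0 := by
      intro s
      rcases lt_or_ge s K with hs | hs
      · rw [List.getD_eq_getElem _ _ (by simpa using hs)]
        exact List.getElem_replicate ..
      · exact List.getD_eq_default _ _ (by simpa using hs)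
    exact hrep _
  · exact List.getD_eq_default _ _ htl

/-- Distinct codewords of a zero-error code have a gap. -/
lemma gp_of_zero_error {N K n : ℕ} {C : Finset (List ℕ)} (hze : IsZeroError N K n C)
    {x y : List ℕ} (hx : x ∈ C) (hy : y ∈ C) (hxy : x ≠ y) : Gp K x y := by
  by_contra hg
  have hlenx : x.length = n := (hze.1 x hx).1
  have hleny : y.length = n := (hze.1 y hy).1
  have hng : ∀ s, psum x s ≤ psum y (s + K) ∧ psum y s ≤ psum x (s + K) := by
    intro s
    constructor
    · by_contra h'; exact hg ⟨s, Or.inl (by omega)⟩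
    · by_contra h'; exact hg ⟨s, Or.inr (by omega)⟩
  set Z : ℕ → ℕ := fun t => min (psum x t) (psum y t) with hZ
  have hmono : Monotone Z := fun a b h =>
    le_min ((min_le_left _ _).trans (psum_mono x h)) ((min_le_right _ _).trans (psum_mono y h))
  have h0 : Z 0 = 0 := by simp [hZ, psum_zero]
  have hzx := produces_of_bounds K x Z hmono h0 (fun t => min_le_left _ _)
    (fun t => le_min (psum_mono x (Nat.le_add_right t K)) (hng t).1)
  have hzy := produces_of_bounds K y Z hmono h0 (fun t => min_le_right _ _)
    (fun t => le_min (hng t).2 (psum_mono y (Nat.le_add_right t K)))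
  rw [hlenx] at hzx
  rw [hleny] at hzy
  have hfl : [x].flatten = x := by simp
  have hfly : [y].flatten = y := by simp
  refine hze.2 [x] [y] rfl (by simp) (by simp [hx]) (by simp [hy]) (by simpa using hxy)
    ((List.range (n + K)).map fun t => Z (t + 1) - Z t) ⟨?_, ?_⟩
  · rw [hfl]; exact hzx
  · rw [hfly]; exact hzy

/-- A pairwise-gapped code is zero-error. -/
lemma zero_error_of_pairwise {N K n : ℕ} (hKn : K < n) {D : Finset (List ℕ)}
    (hcode : IsCode N n D) (hpad : ∀ w ∈ D, Pad K n w)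
    (hpair : ∀ x ∈ D, ∀ y ∈ D, x ≠ y → Gp K x y) : IsZeroError N K n D := by
  refine ⟨hcode, ?_⟩
  rintro L₁ L₂ hlen hpos h1 h2 hne z ⟨hz1, hz2⟩
  have hg := gp_flatten hKn L₁ L₂ hlen (fun w hw => hpad w (h1 w hw))
    (fun w hw => hpad w (h2 w hw))
    (fun a ha b hb hab => hpair a (h1 a ha) b (h2 b hb) hab) hne
  obtain ⟨s, h | h⟩ := hg
  · have b1 := (bounds_of_produces hz1).2 s
    have b2 := (bounds_of_produces hz2).1 (s + K)
    omega
  · have b1 := (bounds_of_produces hz2).2 s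
    have b2 := (bounds_of_produces hz1).1 (s + K)
    omega


end DTPCAux

open DTPCAux in
/-- From any zero-padded zero-error code `C` of length `n > K` one can obtain a
zero-padded zero-error code `D` of the same size all of whose codewords begin either
with the symbol `N` or with a prefix `i ∘ 0^K` for some `i ∈ {0, …, N-1}`. -/
theorem exists_zero_error_code_of_canonical_form (N K n : ℕ) (hN : 1 ≤ N) (hn : K < n)
    (C : Finset (List ℕ)) (hpad : IsZeroPadded K n C) (hze : IsZeroError N K n C) :
    ∃ D : Finset (List ℕ), IsZeroPadded K n D ∧ IsZeroError N K n D ∧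
      D.card = C.card ∧
      ∀ x ∈ D, (∃ v : List ℕ, x = N :: v) ∨
        ∃ i < N, ∃ v : List ℕ, x = (i :: List.replicate K 0) ++ v := by
  classical
  have hpadC : ∀ x ∈ C, Pad K n x := fun x hx =>
    pad_of_suffix hn (hze.1 x hx).1 (hpad x hx)
  have hgpC : ∀ x ∈ C, ∀ y ∈ C, x ≠ y → Gp K x y := fun x hx y hy hxy =>
    gp_of_zero_error hze hx hy hxy
  refine ⟨C.image (fmap N K n), ?_, ?_, ?_, ?_⟩
  · -- zero padded
    intro u hu
    obtain ⟨x, hx, rfl⟩ := Finset.mem_image.1 hu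
    exact suffix_fmap hn (hpadC x hx)
  · -- zero error
    refine zero_error_of_pairwise hn ?_ ?_ ?_
    · intro u hu
      obtain ⟨x, hx, rfl⟩ := Finset.mem_image.1 hu
      exact ⟨length_fmap N K n x, le_fmap (hze.1 x hx).2⟩
    · intro u hu
      obtain ⟨x, hx, rfl⟩ := Finset.mem_image.1 hu
      exact pad_fmap hn (hpadC x hx)
    · intro u hu v hv huv
      obtain ⟨x, hx, rfl⟩ := Finset.mem_image.1 hu
      obtain ⟨y, hy, rfl⟩ := Finset.mem_image.1 hv
      have hxy : x ≠ y := by rintro rfl; exact huv rfl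
      exact gp_fmap hn (hpadC x hx) (hpadC y hy) (hgpC x hx y hy hxy)
  · -- cardinality
    apply Finset.card_image_of_injOn
    intro x hx y hy hmapeq
    by_contra hxy
    have hg := gp_fmap (N := N) hn (hpadC x hx) (hpadC y hy) (hgpC x hx y hy hxy)
    rw [hmapeq] at hg
    exact Gp_irrefl hg
  · -- canonical form
    intro u hu
    obtain ⟨x, hx, rfl⟩ := Finset.mem_image.1 hu
    exact canonical_fmap hN hn (hze.1 x hx).2
end

section
/- Let n > K and let D be a zero-padded code of length n for DTPC(N,K) such that every codeword of D either begins with the symbol N, or begins with the prefix i ∘ 0^K for some i ∈ {0,1,…,N−1}. Then D is a zero-error code if and only if the code D^{⟨N⟩} = {v ∈ {0,…,N}^{n−1} : N ∘ v ∈ D} of length n−1 and the codes D^{⟨i∘0^K⟩} = {v ∈ {0,…,N}^{n−K−1} : i ∘ 0^K ∘ v ∈ D} of length n−K−1 for i = 0,1,…,N−1 are all zero-error codes for DTPC(N,K). -/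
/-- The code obtained from `D` by keeping the codewords with prefix `u` and removing
this prefix from them: `D^{⟨u⟩} = {v : u ∘ v ∈ D}`. -/
def stripPrefix (u : List ℕ) (D : Finset (List ℕ)) : Finset (List ℕ) :=
  (D.filter fun x => u <+: x).image fun x => x.drop u.length

def pre (x : List ℕ) (t : ℕ) : ℕ := ∑ k ∈ Finset.range t, x.getD k 0

lemma pre_succ (x : List ℕ) (t : ℕ) : pre x (t+1) = pre x t + x.getD t 0 :=
  Finset.sum_range_succ _ _

lemma pre_eq_sum_take (x : List ℕ) (t : ℕ) : pre x t = (x.take t).sum := by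
  induction t with
  | zero => simp [pre]
  | succ t ih =>
    rw [pre_succ, ih, List.take_succ, List.sum_append, List.getD_eq_getElem?_getD]
    cases h : x[t]? <;> simp [h]

lemma pre_mono (x : List ℕ) : Monotone (pre x) := by
  intro a b h
  exact Finset.sum_le_sum_of_subset (Finset.range_subset_range.2 h)

lemma pre_cap (x : List ℕ) {t : ℕ} (h : x.length ≤ t) : pre x t = x.sum := by
  rw [pre_eq_sum_take, List.take_of_length_le h]

lemma sum_card_inter_Ioc (A : Finset ℕ) (f : ℕ → ℕ) (hf : Monotone f) (m : ℕ) :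
    ∑ j ∈ Finset.range m, (A ∩ Finset.Ioc (f j) (f (j+1))).card
      = (A ∩ Finset.Ioc (f 0) (f m)).card := by
  induction m with
  | zero => simp
  | succ m ih =>
    rw [Finset.sum_range_succ, ih,
      ← Finset.Ioc_union_Ioc_eq_Ioc (hf (Nat.zero_le m)) (hf (Nat.le_succ m)),
      Finset.inter_union_distrib_left, Finset.card_union_of_disjoint]
    refine Finset.disjoint_left.2 fun a ha hb => ?_
    simp only [Finset.mem_inter, Finset.mem_Ioc] at ha hb
    omega

lemma sum_card_inter_Ioc_off (A : Finset ℕ) (g : ℕ → ℕ) (hg : Monotone g) (i m : ℕ) :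
    ∑ j ∈ Finset.range m, (A ∩ Finset.Ioc (g (i+j)) (g (i+j+1))).card
      = (A ∩ Finset.Ioc (g i) (g (i+m))).card := by
  induction m with
  | zero => simp
  | succ m ih =>
    rw [Finset.sum_range_succ, ih,
      ← Finset.Ioc_union_Ioc_eq_Ioc (hg (by omega : i ≤ i+m)) (hg (by omega : i+m ≤ i+(m+1))),
      Finset.inter_union_distrib_left, Finset.card_union_of_disjoint]
    · rfl
    · refine Finset.disjoint_left.2 fun a ha hb => ?_
      simp only [Finset.mem_inter, Finset.mem_Ioc] at ha hb
      omega

lemma pre_zero (x : List ℕ) : pre x 0 = 0 := by simp [pre]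

lemma produces_iff (K : ℕ) (x z : List ℕ) :
    Produces K x z ↔ z.length = x.length + K ∧
      ∀ t, pre z t ≤ pre x t ∧ pre x t ≤ pre z (t + K) := by
  set n := x.length with hn
  constructor
  · rintro ⟨hlen, d, hd, hz⟩
    refine ⟨hlen, ?_⟩
    have hzsum : ∀ t ≤ n + K, pre z t =
        ∑ i ∈ Finset.range n, ∑ j ∈ Finset.range (K+1),
          if i + j < t then d i j else 0 := by
      intro t ht
      have h1 : pre z t = ∑ s ∈ Finset.range t, ∑ i ∈ Finset.range n,
          ∑ j ∈ Finset.range (K+1), if i + j = s then d i j else 0 :=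
        Finset.sum_congr rfl fun s hs => hz s (lt_of_lt_of_le (Finset.mem_range.1 hs) ht)
      rw [h1, Finset.sum_comm]
      refine Finset.sum_congr rfl fun i _ => ?_
      rw [Finset.sum_comm]
      refine Finset.sum_congr rfl fun j _ => ?_
      simp [Finset.sum_ite_eq, Finset.mem_range]
    have hxsum : ∀ t, pre x t =
        ∑ i ∈ Finset.range n, ∑ j ∈ Finset.range (K+1),
          if i < t then d i j else 0 := by
      intro t
      have h3 : pre x t = ∑ i ∈ Finset.range (min t n), x.getD i 0 := by
        rcases le_total t n with h | h
        · rw [min_eq_left h]; rfl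
        · rw [min_eq_right h, pre_cap x h]; exact (pre_cap x le_rfl).symm
      have h4 : (Finset.range n).filter (fun i => i < t) = Finset.range (min t n) := by
        ext a; simp only [Finset.mem_filter, Finset.mem_range]; omega
      rw [h3, ← h4, Finset.sum_filter]
      refine Finset.sum_congr rfl fun i hi => ?_
      by_cases h : i < t
      · simp only [if_pos h]
        exact (hd i (Finset.mem_range.1 hi)).symm
      · simp [h]
    have key1 : ∀ t ≤ n + K, pre z t ≤ pre x t := by
      intro t ht
      rw [hzsum t ht, hxsum t]
      exact Finset.sum_le_sum fun i _ => Finset.sum_le_sum fun j _ => by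
        split_ifs <;> omega
    have key2 : ∀ t ≤ n, pre x t ≤ pre z (t + K) := by
      intro t ht
      rw [hzsum (t+K) (by omega), hxsum t]
      refine Finset.sum_le_sum fun i _ => Finset.sum_le_sum fun j hj => ?_
      have hjK := Finset.mem_range.1 hj
      split_ifs <;> omega
    have hfull : pre z (n + K) = pre x n := by
      rw [hzsum (n+K) le_rfl, hxsum n]
      refine Finset.sum_congr rfl fun i hi => Finset.sum_congr rfl fun j hj => ?_
      have h1 := Finset.mem_range.1 hi
      have h2 := Finset.mem_range.1 hj
      rw [if_pos (by omega), if_pos (by omega)]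
    intro t
    constructor
    · rcases le_or_gt t (n+K) with h | h
      · exact key1 t h
      · calc pre z t = pre z (n+K) := by rw [pre_cap z (by omega), pre_cap z (by omega)]
          _ ≤ pre x (n+K) := key1 _ le_rfl
          _ ≤ pre x t := pre_mono x (by omega)
    · rcases le_or_gt t n with h | h
      · exact key2 t h
      · calc pre x t = pre x n := by rw [pre_cap x (by omega), pre_cap x le_rfl]
          _ = pre z (n+K) := hfull.symm
          _ ≤ pre z (t+K) := pre_mono z (by omega)
  · rintro ⟨hlen, hcond⟩
    refine ⟨hlen, fun i j =>
      ((Finset.Ioc (pre x i) (pre x (i+1))) ∩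
        (Finset.Ioc (pre z (i+j)) (pre z (i+j+1)))).card, ?_, ?_⟩
    · intro i hi
      rw [sum_card_inter_Ioc_off (Finset.Ioc (pre x i) (pre x (i+1))) (pre z)
        (pre_mono z) i (K+1)]
      have hsub : Finset.Ioc (pre x i) (pre x (i+1)) ⊆
          Finset.Ioc (pre z i) (pre z (i+(K+1))) := by
        apply Finset.Ioc_subset_Ioc
        · exact (hcond i).1
        · have h2 := (hcond (i+1)).2
          rwa [show i+1+K = i+(K+1) by omega] at h2
      rw [Finset.inter_eq_left.2 hsub, Nat.card_Ioc, pre_succ]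
      omega
    · intro t ht
      have inner : ∀ i ∈ Finset.range n,
          (∑ j ∈ Finset.range (K+1), if i + j = t then
            ((Finset.Ioc (pre x i) (pre x (i+1))) ∩
              (Finset.Ioc (pre z (i+j)) (pre z (i+j+1)))).card else 0)
          = ((Finset.Ioc (pre z t) (pre z (t+1))) ∩
              (Finset.Ioc (pre x i) (pre x (i+1)))).card := by
        intro i hi
        by_cases hit : i ≤ t ∧ t ≤ i + K
        · rw [Finset.sum_eq_single_of_mem (t - i)
            (Finset.mem_range.2 (by omega))
            (fun b _ hb => by rw [if_neg]; omega)]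
          rw [if_pos (by omega)]
          have h5 : i + (t - i) = t := by omega
          rw [h5, Finset.inter_comm]
        · rw [Finset.sum_eq_zero (fun j hj => by
            have := Finset.mem_range.1 hj
            rw [if_neg]; omega)]
          symm
          rw [Finset.card_eq_zero, Finset.eq_empty_iff_forall_notMem]
          intro a ha
          simp only [Finset.mem_inter, Finset.mem_Ioc] at ha
          rcases Nat.lt_or_ge t i with hc | hc
          · have h6 : pre z (t+1) ≤ pre x (t+1) := (hcond (t+1)).1
            have h7 : pre x (t+1) ≤ pre x i := pre_mono x (by omega)
            omega
          · have h9 : pre x (i+1) ≤ pre z (i+1+K) := (hcond (i+1)).2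
            have h10 : pre z (i+1+K) ≤ pre z t := pre_mono z (by omega)
            omega
      rw [Finset.sum_congr rfl inner,
        sum_card_inter_Ioc (Finset.Ioc (pre z t) (pre z (t+1))) (pre x) (pre_mono x) n]
      have hsub : Finset.Ioc (pre z t) (pre z (t+1)) ⊆
          Finset.Ioc (pre x 0) (pre x n) := by
        apply Finset.Ioc_subset_Ioc
        · rw [pre_zero]; exact Nat.zero_le _
        · have h11 : pre z (t+1) ≤ pre z (n+K) := pre_mono z (by omega)
          have h12 : pre z (n+K) ≤ pre x (n+K) := (hcond (n+K)).1
          have h13 : pre x (n+K) = pre x n := by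
            rw [pre_cap x (by omega), pre_cap x le_rfl]
          omega
      rw [Finset.inter_eq_left.2 hsub, Nat.card_Ioc, pre_succ]
      omega

lemma pre_le_sum (x : List ℕ) (t : ℕ) : pre x t ≤ x.sum := by
  rcases le_total t x.length with h | h
  · exact (pre_mono x h).trans_eq (pre_cap x le_rfl)
  · exact (pre_cap x h).le

lemma pre_replicate_zero (k t : ℕ) : pre (List.replicate k 0) t = 0 := by
  rw [pre_eq_sum_take, List.take_replicate]
  simp

lemma pre_append (u v : List ℕ) (t : ℕ) :
    pre (u ++ v) t = pre u t + pre v (t - u.length) := by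
  rw [pre_eq_sum_take, pre_eq_sum_take, pre_eq_sum_take,
    List.take_append, List.sum_append]

lemma pre_cons (a : ℕ) (x : List ℕ) (t : ℕ) : pre (a :: x) (t+1) = a + pre x t := by
  have h : (a::x) = [a] ++ x := rfl
  rw [h, pre_append]
  simp [pre_cap (x := [a]) (t := t+1) (by simp)]

lemma pre_padded {K : ℕ} {a : List ℕ} (h : List.replicate K 0 <:+ a) {t : ℕ}
    (ht : a.length - K ≤ t) : pre a t = a.sum := by
  obtain ⟨c, rfl⟩ := h
  rw [pre_append, pre_replicate_zero, add_zero, List.sum_append]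
  have hlen : c.length ≤ t := by simp only [List.length_append, List.length_replicate] at ht; omega
  rw [pre_cap c hlen]
  simp

def Conf (K : ℕ) (x y : List ℕ) : Prop :=
  x.length = y.length ∧ ∀ t, pre x t ≤ pre y (t + K) ∧ pre y t ≤ pre x (t + K)

lemma Conf.symm {K : ℕ} {x y : List ℕ} (h : Conf K x y) : Conf K y x :=
  ⟨h.1.symm, fun t => ⟨(h.2 t).2, (h.2 t).1⟩⟩

lemma Conf.refl (K : ℕ) (u : List ℕ) : Conf K u u :=
  ⟨rfl, fun t => ⟨pre_mono u (by omega), pre_mono u (by omega)⟩⟩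

lemma Conf.sum_eq {K : ℕ} {x y : List ℕ} (h : Conf K x y) : x.sum = y.sum := by
  have hl := h.1
  have h1 := (h.2 x.length).1
  have h2 := (h.2 y.length).2
  rw [pre_cap x le_rfl, pre_cap y (by omega)] at h1
  rw [pre_cap y le_rfl, pre_cap x (by omega)] at h2
  omega

lemma conf_of_produces {K : ℕ} {x y z : List ℕ} (hx : Produces K x z) (hy : Produces K y z) :
    Conf K x y := by
  rw [produces_iff] at hx hy
  refine ⟨by omega, fun t => ?_⟩
  exact ⟨(hx.2 t).2.trans (hy.2 (t+K)).1, (hy.2 t).2.trans (hx.2 (t+K)).1⟩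

lemma produces_of_Q (K : ℕ) (x : List ℕ) (Q : ℕ → ℕ) (L : ℕ) (hL : L = x.length + K)
    (hmono : Monotone Q)
    (h1 : ∀ t, Q t ≤ pre x t) (h2 : ∀ t, pre x t ≤ Q (min (t + K) L)) :
    Produces K x (List.ofFn (n := L) fun t => Q (t.1 + 1) - Q t.1) := by
  set z := List.ofFn (n := L) fun t : Fin L => Q (t.1 + 1) - Q t.1 with hz
  have hzlen : z.length = L := List.length_ofFn
  have hQ0 : Q 0 = 0 := Nat.le_zero.1 ((h1 0).trans_eq (pre_zero x))
  have hgetD : ∀ t < L, z.getD t 0 = Q (t + 1) - Q t := by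
    intro t ht
    rw [List.getD_eq_getElem z 0 (by omega)]
    simp [hz]
  have hpre1 : ∀ t ≤ L, pre z t = Q t := by
    intro t
    induction t with
    | zero => intro _; rw [pre_zero, hQ0]
    | succ t ih =>
      intro h
      have hm := hmono (Nat.le_add_right t 1)
      rw [pre_succ, ih (by omega), hgetD t (by omega)]
      omega
  have hpre2 : ∀ t, pre z t = Q (min t L) := by
    intro t
    rcases le_total t L with h | h
    · rw [min_eq_left h]; exact hpre1 t h
    · rw [min_eq_right h, ← hpre1 L le_rfl, pre_cap z (by omega), pre_cap z (by omega)]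
  rw [produces_iff]
  refine ⟨by omega, fun t => ?_⟩
  constructor
  · rw [hpre2]
    exact ((h1 _).trans (pre_mono x (min_le_left _ _)))
  · rw [hpre2]
    exact h2 t

lemma conf_exists {K : ℕ} {x y : List ℕ} (h : Conf K x y) :
    ∃ z, Produces K x z ∧ Produces K y z := by
  set Q : ℕ → ℕ := fun t => min (pre x t) (pre y t) with hQ
  have hmono : Monotone Q := fun a b hab =>
    le_min ((min_le_left _ _).trans (pre_mono x hab)) ((min_le_right _ _).trans (pre_mono y hab))
  have hsum := h.sum_eq
  have hlen := h.1
  refine ⟨List.ofFn (n := x.length + K) fun t => Q (t.1 + 1) - Q t.1, ?_, ?_⟩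
  · refine produces_of_Q K x Q _ rfl hmono (fun t => min_le_left _ _) (fun t => ?_)
    rcases le_total t x.length with hc | hc
    · rw [min_eq_left (by omega)]
      exact le_min (pre_mono x (by omega)) (h.2 t).1
    · rw [min_eq_right (by omega), pre_cap x hc]
      refine le_min ?_ ?_
      · exact (pre_cap x (by omega)).ge
      · rw [pre_cap y (by omega)]; omega
  · refine produces_of_Q K y Q _ (by omega) hmono (fun t => min_le_right _ _) (fun t => ?_)
    rcases le_total t y.length with hc | hc
    · rw [min_eq_left (by omega)]
      exact le_min (h.2 t).2 (pre_mono y (by omega))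
    · rw [min_eq_right (by omega), pre_cap y hc]
      refine le_min ?_ ?_
      · rw [pre_cap x (by omega)]; omega
      · exact (pre_cap y (by omega)).ge

lemma conf_append {K : ℕ} {x y x' y' : List ℕ} (h : Conf K x y) (h' : Conf K x' y') :
    Conf K (x ++ x') (y ++ y') := by
  have hl := h.1
  have hl' := h'.1
  have hs := h.sum_eq
  have key : ∀ (a b a' b' : List ℕ), a.length = b.length → a.sum = b.sum →
      (∀ t, pre a t ≤ pre b (t + K)) → (∀ t, pre a' t ≤ pre b' (t + K)) →
      ∀ t, pre (a ++ a') t ≤ pre (b ++ b') (t + K) := by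
    intro a b a' b' hab habs hc hc' t
    rw [pre_append, pre_append]
    rcases lt_or_ge t a.length with hc1 | hc1
    · have e0 : t - a.length = 0 := by omega
      rw [e0, pre_zero, add_zero]
      exact (hc t).trans (Nat.le_add_right _ _)
    · have e1 : pre a t = a.sum := pre_cap a hc1
      have e2 : pre b (t + K) = b.sum := pre_cap b (by omega)
      have h3 := hc' (t - a.length)
      rw [show t - a.length + K = t + K - b.length by omega] at h3
      omega
  exact ⟨by simp [hl, hl'], fun t =>
    ⟨key x y x' y' hl hs (fun s => (h.2 s).1) (fun s => (h'.2 s).1) t,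
     key y x y' x' hl.symm hs.symm (fun s => (h.2 s).2) (fun s => (h'.2 s).2) t⟩⟩

lemma conf_prepend {K : ℕ} (u : List ℕ) {v w : List ℕ} (h : Conf K v w) :
    Conf K (u ++ v) (u ++ w) :=
  conf_append (Conf.refl K u) h

lemma conf_strip {K : ℕ} (u : List ℕ) {v w : List ℕ} (h : Conf K (u ++ v) (u ++ w)) :
    Conf K v w := by
  have hl : v.length = w.length := by
    have := h.1; simp only [List.length_append] at this; omega
  refine ⟨hl, fun t => ?_⟩
  have h1 := (h.2 (u.length + t)).1
  have h2 := (h.2 (u.length + t)).2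
  have f1 : pre (u ++ v) (u.length + t) = u.sum + pre v t := by
    rw [pre_append, pre_cap u (by omega), show u.length + t - u.length = t by omega]
  have f2 : pre (u ++ w) (u.length + t) = u.sum + pre w t := by
    rw [pre_append, pre_cap u (by omega), show u.length + t - u.length = t by omega]
  have f3 : pre (u ++ v) (u.length + t + K) = u.sum + pre v (t + K) := by
    rw [pre_append, pre_cap u (by omega), show u.length + t + K - u.length = t + K by omega]
  have f4 : pre (u ++ w) (u.length + t + K) = u.sum + pre w (t + K) := by
    rw [pre_append, pre_cap u (by omega), show u.length + t + K - u.length = t + K by omega]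
  omega

lemma conf_split {K : ℕ} {a b X Y : List ℕ} (hl : a.length = b.length) (hK : K ≤ a.length)
    (ha : List.replicate K 0 <:+ a) (hb : List.replicate K 0 <:+ b)
    (h : Conf K (a ++ X) (b ++ Y)) : Conf K a b ∧ Conf K X Y := by
  have hsum : a.sum = b.sum := by
    have h1 := (h.2 (a.length - K)).1
    have h2 := (h.2 (a.length - K)).2
    have f1 : pre (a ++ X) (a.length - K) = a.sum := by
      rw [pre_append, pre_padded ha (by omega), show a.length - K - a.length = 0 by omega,
        pre_zero, add_zero]
    have f2 : pre (b ++ Y) (a.length - K) = b.sum := by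
      rw [pre_append, pre_padded hb (by omega), show a.length - K - b.length = 0 by omega,
        pre_zero, add_zero]
    have f3 : pre (b ++ Y) (a.length - K + K) = b.sum := by
      rw [pre_append, pre_padded hb (by omega), show a.length - K + K - b.length = 0 by omega,
        pre_zero, add_zero]
    have f4 : pre (a ++ X) (a.length - K + K) = a.sum := by
      rw [pre_append, pre_padded ha (by omega), show a.length - K + K - a.length = 0 by omega,
        pre_zero, add_zero]
    omega
  have hXY : ∀ t, pre X t ≤ pre Y (t + K) ∧ pre Y t ≤ pre X (t + K) := by
    intro t
    have h1 := (h.2 (a.length + t)).1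
    have h2 := (h.2 (a.length + t)).2
    have f1 : pre (a ++ X) (a.length + t) = a.sum + pre X t := by
      rw [pre_append, pre_cap a (by omega), show a.length + t - a.length = t by omega]
    have f2 : pre (b ++ Y) (a.length + t) = b.sum + pre Y t := by
      rw [pre_append, pre_cap b (by omega), show a.length + t - b.length = t by omega]
    have f3 : pre (a ++ X) (a.length + t + K) = a.sum + pre X (t + K) := by
      rw [pre_append, pre_cap a (by omega), show a.length + t + K - a.length = t + K by omega]
    have f4 : pre (b ++ Y) (a.length + t + K) = b.sum + pre Y (t + K) := by
      rw [pre_append, pre_cap b (by omega), show a.length + t + K - b.length = t + K by omega]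
    omega
  have hab : ∀ t, pre a t ≤ pre b (t + K) ∧ pre b t ≤ pre a (t + K) := by
    intro t
    rcases le_total (t + K) a.length with hc | hc
    · have h1 := (h.2 t).1
      have h2 := (h.2 t).2
      have f1 : pre (a ++ X) t = pre a t := by
        rw [pre_append, show t - a.length = 0 by omega, pre_zero, add_zero]
      have f2 : pre (b ++ Y) t = pre b t := by
        rw [pre_append, show t - b.length = 0 by omega, pre_zero, add_zero]
      have f3 : pre (a ++ X) (t + K) = pre a (t + K) := by
        rw [pre_append, show t + K - a.length = 0 by omega, pre_zero, add_zero]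
      have f4 : pre (b ++ Y) (t + K) = pre b (t + K) := by
        rw [pre_append, show t + K - b.length = 0 by omega, pre_zero, add_zero]
      omega
    · have e1 : pre b (t + K) = b.sum := pre_padded hb (by omega)
      have e2 : pre a (t + K) = a.sum := pre_padded ha (by omega)
      have e3 := pre_le_sum a t
      have e4 := pre_le_sum b t
      omega
  have hlXY : X.length = Y.length := by
    have := h.1; simp only [List.length_append] at this; omega
  exact ⟨⟨hl, hab⟩, ⟨hlXY, hXY⟩⟩

lemma pre_one_cons (a : ℕ) (x : List ℕ) : pre (a :: x) 1 = a := by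
  have := pre_cons a x 0
  simpa [pre_zero] using this

lemma pre_low (j K : ℕ) (w : List ℕ) :
    pre ((j :: List.replicate K 0) ++ w) (K + 1) = j := by
  rw [List.cons_append, pre_cons, pre_append, pre_replicate_zero, List.length_replicate,
    Nat.sub_self, pre_zero]
  omega

lemma conf_N_vs_low {K N j : ℕ} {v w : List ℕ} (hj : j < N)
    (h : Conf K (N :: v) ((j :: List.replicate K 0) ++ w)) : False := by
  have h1 := (h.2 1).1
  rw [show (1:ℕ) + K = K + 1 by omega] at h1
  have g1 := pre_one_cons N v
  have g2 := pre_low j K w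
  omega

lemma conf_low_eq {K i j : ℕ} {v w : List ℕ}
    (h : Conf K ((i :: List.replicate K 0) ++ v) ((j :: List.replicate K 0) ++ w)) :
    i = j := by
  have h1 := (h.2 1).1
  have h2 := (h.2 1).2
  rw [show (1:ℕ) + K = K + 1 by omega] at h1 h2
  have g1 : pre ((i :: List.replicate K 0) ++ v) 1 = i := by
    rw [List.cons_append]; exact pre_one_cons i _
  have g2 : pre ((j :: List.replicate K 0) ++ w) 1 = j := by
    rw [List.cons_append]; exact pre_one_cons j _
  have g3 := pre_low j K w
  have g4 := pre_low i K v
  omega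

lemma mem_stripPrefix {u v : List ℕ} {D : Finset (List ℕ)} :
    v ∈ stripPrefix u D ↔ u ++ v ∈ D := by
  constructor
  · rintro hv
    simp only [stripPrefix, Finset.mem_image, Finset.mem_filter] at hv
    obtain ⟨x, ⟨hxD, hpre⟩, hdrop⟩ := hv
    obtain ⟨r, rfl⟩ := hpre
    rw [List.drop_left] at hdrop
    rw [← hdrop]
    exact hxD
  · intro hv
    simp only [stripPrefix, Finset.mem_image, Finset.mem_filter]
    exact ⟨u ++ v, ⟨hv, List.prefix_append u v⟩, List.drop_left⟩

lemma suffix_of_suffix_le {α : Type*} {l₁ l₂ l₃ : List α} (h1 : l₁ <:+ l₃) (h2 : l₂ <:+ l₃)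
    (h : l₁.length ≤ l₂.length) : l₁ <:+ l₂ := by
  rw [← List.reverse_prefix] at h1 h2 ⊢
  exact List.prefix_of_prefix_length_le h1 h2 (by simpa using h)

lemma flatten_inj {n : ℕ} : ∀ L₁ L₂ : List (List ℕ), L₁.length = L₂.length →
    (∀ w ∈ L₁, w.length = n) → (∀ w ∈ L₂, w.length = n) →
    L₁.flatten = L₂.flatten → L₁ = L₂ := by
  intro L₁
  induction L₁ with
  | nil =>
    intro L₂ hlen _ _ _
    cases L₂ with
    | nil => rfl
    | cons b T => simp at hlen
  | cons a T ih =>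
    intro L₂ hlen h1 h2 hfl
    cases L₂ with
    | nil => simp at hlen
    | cons b T₂ =>
      simp only [List.flatten_cons] at hfl
      have hab : a = b ∧ T.flatten = T₂.flatten := by
        apply List.append_inj hfl
        rw [h1 a (by simp), h2 b (by simp)]
      rw [hab.1, ih T₂ (by simpa using hlen) (fun w hw => h1 w (by simp [hw]))
        (fun w hw => h2 w (by simp [hw])) hab.2]

lemma lift_conf {K : ℕ} (u : List ℕ) {ℓ : ℕ} (hK : K ≤ ℓ) :
    ∀ (V W : List (List ℕ)), V.length = W.length →
    (∀ w ∈ V, w.length = ℓ ∧ List.replicate K 0 <:+ w) →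
    (∀ w ∈ W, w.length = ℓ ∧ List.replicate K 0 <:+ w) →
    Conf K V.flatten W.flatten →
    Conf K (V.map (u ++ ·)).flatten (W.map (u ++ ·)).flatten := by
  intro V
  induction V with
  | nil =>
    intro W hlen _ _ hc
    cases W with
    | nil => simpa using hc
    | cons b T => simp at hlen
  | cons a T ih =>
    intro W hlen h1 h2 hc
    cases W with
    | nil => simp at hlen
    | cons b T₂ =>
      simp only [List.flatten_cons] at hc
      obtain ⟨hab, hT⟩ := conf_split
        (by rw [(h1 a (by simp)).1, (h2 b (by simp)).1])
        (by rw [(h1 a (by simp)).1]; exact hK)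
        (h1 a (by simp)).2 (h2 b (by simp)).2 hc
      have hrec := ih T₂ (by simpa using hlen) (fun w hw => h1 w (by simp [hw]))
        (fun w hw => h2 w (by simp [hw])) hT
      simp only [List.map_cons, List.flatten_cons]
      exact conf_append (conf_prepend u hab) hrec

lemma derived_no_conf {N K n : ℕ} {D : Finset (List ℕ)} (u : List ℕ)
    (hD0 : IsZeroError N K n D)
    (hlenD : ∀ x ∈ D, x.length = n) (hpadD : ∀ x ∈ D, List.replicate K 0 <:+ x)
    (hK : K + u.length ≤ n) :
    ∀ L₁ L₂ : List (List ℕ), L₁.length = L₂.length → 1 ≤ L₁.length →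
    (∀ w ∈ L₁, w ∈ stripPrefix u D) → (∀ w ∈ L₂, w ∈ stripPrefix u D) →
    L₁.flatten ≠ L₂.flatten →
    ∀ z, ¬ (Produces K L₁.flatten z ∧ Produces K L₂.flatten z) := by
  intro L₁ L₂ hlen hge h1 h2 hne z hz
  have hprop : ∀ w, w ∈ stripPrefix u D → w.length = n - u.length ∧
      List.replicate K 0 <:+ w := by
    intro w hw
    have hx := mem_stripPrefix.1 hw
    have hl := hlenD _ hx
    have hp := hpadD _ hx
    simp only [List.length_append] at hl
    exact ⟨by omega, suffix_of_suffix_le hp (List.suffix_append u w) (by simp; omega)⟩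
  have hconf := conf_of_produces hz.1 hz.2
  have hlift := lift_conf u (show K ≤ n - u.length by omega) L₁ L₂ hlen
    (fun w hw => hprop w (h1 w hw)) (fun w hw => hprop w (h2 w hw)) hconf
  obtain ⟨z', hz'⟩ := conf_exists hlift
  refine hD0.2 (L₁.map (u ++ ·)) (L₂.map (u ++ ·)) (by simp [hlen]) (by simpa using hge)
    ?_ ?_ ?_ z' hz'
  · intro w hw
    simp only [List.mem_map] at hw
    obtain ⟨v, hv, rfl⟩ := hw
    exact mem_stripPrefix.1 (h1 v hv)
  · intro w hw
    simp only [List.mem_map] at hw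
    obtain ⟨v, hv, rfl⟩ := hw
    exact mem_stripPrefix.1 (h2 v hv)
  · intro heq
    have hwl1 : ∀ w ∈ L₁.map (u ++ ·), w.length = n := by
      intro w hw
      simp only [List.mem_map] at hw
      obtain ⟨v, hv, rfl⟩ := hw
      have := (hprop v (h1 v hv)).1
      simp only [List.length_append]
      omega
    have hwl2 : ∀ w ∈ L₂.map (u ++ ·), w.length = n := by
      intro w hw
      simp only [List.mem_map] at hw
      obtain ⟨v, hv, rfl⟩ := hw
      have := (hprop v (h2 v hv)).1
      simp only [List.length_append]
      omega
    have hmapeq := flatten_inj (n := n) _ _ (by simp [hlen]) hwl1 hwl2 heq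
    have hinj : Function.Injective (fun v : List ℕ => u ++ v) := fun a b hab => by
      simpa using hab
    exact hne (congrArg List.flatten ((List.map_injective_iff.2 hinj) hmapeq))

lemma derived_trivial {K n : ℕ} {D : Finset (List ℕ)} (u : List ℕ)
    (hlenD : ∀ x ∈ D, x.length = n) (hpadD : ∀ x ∈ D, List.replicate K 0 <:+ x)
    (hu : u.length ≤ n) (hK : n - u.length ≤ K) :
    ∀ w ∈ stripPrefix u D, w = List.replicate (n - u.length) 0 := by
  intro w hw
  have hx := mem_stripPrefix.1 hw
  have hl := hlenD _ hx
  have hp := hpadD _ hx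
  simp only [List.length_append] at hl
  have h1 : w <:+ List.replicate K 0 := by
    refine suffix_of_suffix_le (List.suffix_append u w) hp ?_
    simp only [List.length_replicate]
    omega
  have h0 : ∀ a ∈ w, a = 0 := fun a ha => List.eq_of_mem_replicate (h1.subset ha)
  exact List.eq_replicate_iff.2 ⟨by omega, h0⟩

lemma backward_main {N K n : ℕ} (hn : K < n) {D : Finset (List ℕ)}
    (hlenD : ∀ x ∈ D, x.length = n) (hpadD : ∀ x ∈ D, List.replicate K 0 <:+ x)
    (hform : ∀ x ∈ D, (∃ v : List ℕ, x = N :: v) ∨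
      ∃ i < N, ∃ v : List ℕ, x = (i :: List.replicate K 0) ++ v)
    (hder1 : IsZeroError N K (n-1) (stripPrefix [N] D))
    (hder2 : ∀ i < N, IsZeroError N K (n-K-1) (stripPrefix (i :: List.replicate K 0) D)) :
    ∀ L₁ L₂ : List (List ℕ), L₁.length = L₂.length →
    (∀ w ∈ L₁, w ∈ D) → (∀ w ∈ L₂, w ∈ D) →
    L₁.flatten ≠ L₂.flatten → ¬ Conf K L₁.flatten L₂.flatten := by
  intro L₁
  induction L₁ with
  | nil =>
    intro L₂ hlen _ _ hne
    cases L₂ with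
    | nil => simp at hne
    | cons b T => simp at hlen
  | cons x T₁ ih =>
    intro L₂ hlen h1 h2 hne hconf
    cases L₂ with
    | nil => simp at hlen
    | cons y T₂ =>
      have hx := h1 x (by simp)
      have hy := h2 y (by simp)
      simp only [List.flatten_cons] at hconf hne
      obtain ⟨hxy, hT⟩ := conf_split (by rw [hlenD x hx, hlenD y hy])
        (by rw [hlenD x hx]; omega) (hpadD x hx) (hpadD y hy) hconf
      by_cases hexy : x = y
      · subst hexy
        have hneT : T₁.flatten ≠ T₂.flatten := fun hq => hne (by rw [hq])
        exact ih T₂ (by simpa using hlen) (fun w hw => h1 w (by simp [hw]))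
          (fun w hw => h2 w (by simp [hw])) hneT hT
      · rcases hform x hx with ⟨v, rfl⟩ | ⟨i, hi, v, rfl⟩ <;>
          rcases hform y hy with ⟨w, rfl⟩ | ⟨j, hj, w, rfl⟩
        · -- N::v vs N::w
          have hvw : v ≠ w := fun hq => hexy (by rw [hq])
          have hcv : Conf K v w := conf_strip [N] hxy
          obtain ⟨z', hz'⟩ := conf_exists hcv
          have hm1 : v ∈ stripPrefix [N] D := mem_stripPrefix.2 hx
          have hm2 : w ∈ stripPrefix [N] D := mem_stripPrefix.2 hy
          have hfl : ([v] : List (List ℕ)).flatten = v := by simp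
          have hfl2 : ([w] : List (List ℕ)).flatten = w := by simp
          refine hder1.2 [v] [w] rfl (by simp) ?_ ?_ ?_ z' ?_
          · intro w' hw'; simp at hw'; subst hw'; exact hm1
          · intro w' hw'; simp at hw'; subst hw'; exact hm2
          · rw [hfl, hfl2]; exact hvw
          · rw [hfl, hfl2]; exact hz'
        · exact (conf_N_vs_low hj hxy).elim
        · exact (conf_N_vs_low hi hxy.symm).elim
        · have hij : i = j := conf_low_eq hxy
          subst hij
          have hvw : v ≠ w := fun hq => hexy (by rw [hq])
          have hcv : Conf K v w := conf_strip (i :: List.replicate K 0) hxy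
          obtain ⟨z', hz'⟩ := conf_exists hcv
          have hm1 : v ∈ stripPrefix (i :: List.replicate K 0) D := mem_stripPrefix.2 hx
          have hm2 : w ∈ stripPrefix (i :: List.replicate K 0) D := mem_stripPrefix.2 hy
          have hfl : ([v] : List (List ℕ)).flatten = v := by simp
          have hfl2 : ([w] : List (List ℕ)).flatten = w := by simp
          refine (hder2 i hi).2 [v] [w] rfl (by simp) ?_ ?_ ?_ z' ?_
          · intro w' hw'; simp at hw'; subst hw'; exact hm1
          · intro w' hw'; simp at hw'; subst hw'; exact hm2
          · rw [hfl, hfl2]; exact hvw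
          · rw [hfl, hfl2]; exact hz'

/-- A zero-padded code `D` of length `n > K`, each codeword of which begins with the
symbol `N` or with a prefix `i ∘ 0^K` for some `i < N`, is zero-error if and only if
the derived codes `D^{⟨N⟩}` (of length `n-1`) and `D^{⟨i ∘ 0^K⟩}` for `i < N`
(of length `n-K-1`) are all zero-error. -/
theorem zero_error_iff_derived_codes_zero_error (N K n : ℕ) (hN : 1 ≤ N) (hn : K < n)
    (D : Finset (List ℕ)) (hcode : IsCode N n D) (hpad : IsZeroPadded K n D)
    (hform : ∀ x ∈ D, (∃ v : List ℕ, x = N :: v) ∨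
      ∃ i < N, ∃ v : List ℕ, x = (i :: List.replicate K 0) ++ v) :
    IsZeroError N K n D ↔
      (IsZeroError N K (n - 1) (stripPrefix [N] D) ∧
        ∀ i < N, IsZeroError N K (n - K - 1) (stripPrefix (i :: List.replicate K 0) D)) := by

  have hlenD : ∀ x ∈ D, x.length = n := fun x hx => (hcode x hx).1
  have hpadD : ∀ x ∈ D, List.replicate K 0 <:+ x := by
    intro x hx
    have := hpad x hx
    rwa [min_eq_right (le_of_lt hn)] at this
  have hleD : ∀ x ∈ D, ∀ a ∈ x, a ≤ N := fun x hx => (hcode x hx).2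
  constructor
  · intro hD0
    constructor
    · constructor
      · -- IsCode for D^{⟨N⟩}
        intro v hv
        have hx := mem_stripPrefix.1 hv
        have hl := hlenD _ hx
        simp only [List.length_append] at hl
        refine ⟨by simp at hl ⊢; omega, fun a ha => hleD _ hx a (by simp [ha])⟩
      · -- zero-error
        have := derived_no_conf (N := N) [N] hD0 hlenD hpadD (by simp; omega)
        intro L₁ L₂ a b c d e
        exact this L₁ L₂ a b c d e
    · intro i hi
      constructor
      · intro v hv
        have hx := mem_stripPrefix.1 hv
        have hl := hlenD _ hx
        simp only [List.length_append, List.length_cons, List.length_replicate] at hl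
        refine ⟨by omega, fun a ha => hleD _ hx a (by simp [ha])⟩
      · rcases le_or_gt (K + (K + 1)) n with hc | hc
        · have := derived_no_conf (N := N) (i :: List.replicate K 0) hD0 hlenD hpadD
            (by simp; omega)
          intro L₁ L₂ a b c d e
          exact this L₁ L₂ a b c d e
        · -- trivial case: all derived words are identical
          intro L₁ L₂ hlen hge hm1 hm2 hne z hz
          have htriv := derived_trivial (i :: List.replicate K 0) hlenD hpadD
            (by simp; omega) (by simp; omega)
          apply hne
          have e1 : L₁ = List.replicate L₁.length
              (List.replicate (n - (i :: List.replicate K 0).length) 0) :=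
            List.eq_replicate_iff.2 ⟨rfl, fun b hb => htriv b (hm1 b hb)⟩
          have e2 : L₂ = List.replicate L₂.length
              (List.replicate (n - (i :: List.replicate K 0).length) 0) :=
            List.eq_replicate_iff.2 ⟨rfl, fun b hb => htriv b (hm2 b hb)⟩
          rw [e1, e2, hlen]
  · rintro ⟨hder1, hder2⟩
    refine ⟨hcode, fun L₁ L₂ hlen hge h1 h2 hne z hz => ?_⟩
    exact backward_main hn hlenD hpadD hform hder1 hder2 L₁ L₂ hlen h1 h2 hne
      (conf_of_produces hz.1 hz.2)
end

section
/- For all integers N ≥ 1 and K ≥ 0, if r denotes the unique positive real root of the polynomial x^{K+1} − x^K − N, then every complex root z of this polynomial with z ≠ r satisfies |z| < r; in particular, r is the root of largest modulus. -/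
/-- If `r` is the unique positive real root of `x^{K+1} - x^K - N` (`N ≥ 1`, `K ≥ 0`),
then every complex root `z ≠ r` of this polynomial satisfies `|z| < r`; in particular,
`r` is the root of largest modulus. -/
theorem positive_root_has_largest_modulus (N K : ℕ) (hN : 1 ≤ N) (r : ℝ) (hr : 0 < r)
    (hroot : r ^ (K + 1) - r ^ K = (N : ℝ))
    (huniq : ∀ s : ℝ, 0 < s → s ^ (K + 1) - s ^ K = (N : ℝ) → s = r) :
    ∀ z : ℂ, z ^ (K + 1) - z ^ K = (N : ℂ) → z ≠ (r : ℂ) → ‖z‖ < r := by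
  intro z hz hzr
  set a := ‖z‖ with ha
  have hNpos : (0:ℝ) < N := by exact_mod_cast hN
  have hrK : (0:ℝ) < r ^ K := pow_pos hr K
  have hroot' : r ^ K * (r - 1) = N := by linear_combination hroot
  have hr1 : 1 < r := by nlinarith [hroot', hrK, hNpos]
  have hfac : z ^ K * (z - 1) = (N : ℂ) := by linear_combination hz
  have habs : a ^ K * ‖z - 1‖ = N := by
    rw [ha, ← norm_pow, ← norm_mul, hfac]
    simp
  have htri : a - 1 ≤ ‖z - 1‖ := by
    have := norm_sub_norm_le z 1
    simpa [← ha] using this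
  have ha0 : 0 ≤ a := norm_nonneg z
  have hle : a ≤ r := by
    by_contra h
    push_neg at h
    have haK : r ^ K ≤ a ^ K := pow_le_pow_left₀ hr.le h.le K
    have habs' : a ^ K * (a - 1) ≤ N := by
      have : a ^ K * (a - 1) ≤ a ^ K * ‖z - 1‖ := by
        apply mul_le_mul_of_nonneg_left htri (pow_nonneg ha0 K)
      linarith [habs ▸ this]
    nlinarith
  rcases lt_or_eq_of_le hle with h | h
  · exact h
  · -- a = r : show z must equal r, contradiction
    exfalso
    have haK : (0:ℝ) < a ^ K := by rw [h]; exact hrK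
    have h1 : ‖z - 1‖ = r - 1 := by
      apply mul_left_cancel₀ (ne_of_gt haK)
      rw [habs, h, hroot']
    have e1 : z.re * z.re + z.im * z.im = r ^ 2 := by
      have := Complex.sq_norm z
      rw [Complex.normSq_apply] at this
      rw [← ha, h] at this
      linarith [this]
    have e2 : (z.re - 1) * (z.re - 1) + z.im * z.im = (r - 1) ^ 2 := by
      have := Complex.sq_norm (z - 1)
      rw [Complex.normSq_apply] at this
      simp only [Complex.sub_re, Complex.sub_im, Complex.one_re, Complex.one_im, sub_zero] at this
      rw [h1] at this
      linarith [this]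
    have hre : z.re = r := by nlinarith
    have him : z.im = 0 := by nlinarith
    exact hzr (Complex.ext (by simp [hre]) (by simp [him]))
end

section
/- Let N ≥ 1, K ≥ 0 be integers and let (a_n) be the sequence defined by a_n = 1 for 0 ≤ n ≤ K and a_n = a_{n−1} + N·a_{n−K−1} for n > K. Then lim_{n→∞} (1/n)·log₂ a_n = log₂ r, where r is the unique positive real root of the polynomial x^{K+1} − x^K − N. -/
/-- Let `a` satisfy `a n = 1` for `0 ≤ n ≤ K` and `a n = a (n-1) + N · a (n-K-1)` for
`n > K` (with `N ≥ 1`). Then `(1/n) · log₂ (a n) → log₂ r`, where `r` is the unique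
positive real root of `x^{K+1} - x^K - N`. -/
theorem tendsto_log_recurrence_sequence (N K : ℕ) (hN : 1 ≤ N) (a : ℕ → ℕ)
    (ha0 : ∀ n ≤ K, a n = 1)
    (harec : ∀ n, K < n → a n = a (n - 1) + N * a (n - K - 1))
    (r : ℝ) (hr : 0 < r) (hroot : r ^ (K + 1) - r ^ K = (N : ℝ))
    (huniq : ∀ s : ℝ, 0 < s → s ^ (K + 1) - s ^ K = (N : ℝ) → s = r) :
    Filter.Tendsto (fun n : ℕ => (1 / n : ℝ) * Real.logb 2 (a n)) Filter.atTop
      (nhds (Real.logb 2 r)) := by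
  have hN1 : (1:ℝ) ≤ N := by exact_mod_cast hN
  have hr1 : 1 < r := by
    by_contra h
    push_neg at h
    have hK : r ^ K ≤ 1 := pow_le_one₀ hr.le h
    have h2 : r ^ (K+1) ≤ r ^ K := by
      calc r ^ (K+1) = r ^ K * r := pow_succ r K
        _ ≤ r ^ K * 1 := mul_le_mul_of_nonneg_left h (pow_pos hr K).le
        _ = r ^ K := mul_one _
    linarith
  have key : ∀ n, r ^ n ≤ r ^ K * (a n : ℝ) ∧ (a n : ℝ) ≤ r ^ n := by
    intro n
    induction n using Nat.strong_induction_on with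
    | _ n ih =>
      rcases le_or_gt n K with hnK | hnK
      · rw [ha0 n hnK]
        constructor
        · simpa using pow_le_pow_right₀ hr1.le hnK
        · simpa using one_le_pow₀ (n := n) hr1.le
      · obtain ⟨m, rfl⟩ : ∃ m, n = m + K + 1 := ⟨n - K - 1, by omega⟩
        have hrec := harec (m+K+1) (by omega)
        have h1 : m + K + 1 - 1 = m + K := by omega
        have h2 : m + K + 1 - K - 1 = m := by omega
        rw [h1, h2] at hrec
        have ih1 := ih (m+K) (by omega)
        have ih2 := ih m (by omega)
        have hid : r ^ (m+K+1) = r ^ (m+K) + (N:ℝ) * r ^ m := by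
          have h3 : r ^ (m+K+1) - r ^ (m+K) = r ^ m * (r ^ (K+1) - r ^ K) := by ring
          rw [hroot] at h3
          linarith
        have hN0 : (0:ℝ) ≤ N := by linarith
        constructor
        · rw [hrec, hid]
          push_cast
          have e1 : (N:ℝ) * r ^ m ≤ (N:ℝ) * (r ^ K * (a m : ℝ)) :=
            mul_le_mul_of_nonneg_left ih2.1 hN0
          nlinarith [ih1.1]
        · rw [hrec, hid]
          push_cast
          have e1 : (N:ℝ) * (a m : ℝ) ≤ (N:ℝ) * r ^ m :=
            mul_le_mul_of_nonneg_left ih2.2 hN0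
          linarith [ih1.2]
  have han : ∀ n, 1 ≤ a n := by
    intro n
    by_contra h
    push_neg at h
    have h0 : a n = 0 := by omega
    have hk := (key n).1
    rw [h0] at hk
    simp at hk
    nlinarith [pow_pos hr n]
  set L := Real.logb 2 r with hL
  have hL0 : 0 ≤ L := Real.logb_nonneg one_lt_two hr1.le
  have hbound : ∀ n : ℕ, 1 ≤ n →
      L - (K:ℝ) * L / n ≤ (1/n : ℝ) * Real.logb 2 (a n) ∧
      (1/n : ℝ) * Real.logb 2 (a n) ≤ L := by
    intro n hn
    have hpos : (0:ℝ) < n := by exact_mod_cast hn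
    have hapos : (0:ℝ) < (a n : ℝ) := by exact_mod_cast han n
    have hub : Real.logb 2 ((a n : ℝ)) ≤ n * L := by
      calc Real.logb 2 ((a n : ℝ)) ≤ Real.logb 2 (r ^ n) :=
            Real.logb_le_logb_of_le one_lt_two hapos (key n).2
        _ = n * L := by rw [Real.logb_pow]
    have hlb : (n:ℝ) * L - (K:ℝ) * L ≤ Real.logb 2 ((a n : ℝ)) := by
      have h1 : Real.logb 2 (r ^ n) ≤ Real.logb 2 (r ^ K * (a n : ℝ)) :=
        Real.logb_le_logb_of_le one_lt_two (pow_pos hr n) (key n).1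
      rw [Real.logb_pow, Real.logb_mul (by positivity) hapos.ne', Real.logb_pow] at h1
      linarith
    constructor
    · rw [one_div, inv_mul_eq_div, le_div_iff₀ hpos]
      have hc : (K:ℝ) * L / n * n = (K:ℝ) * L := div_mul_cancel₀ _ hpos.ne'
      nlinarith [hlb]
    · rw [one_div, inv_mul_eq_div, div_le_iff₀ hpos]
      linarith
  have hg : Filter.Tendsto (fun n : ℕ => L - (K:ℝ) * L / n) Filter.atTop (nhds L) := by
    have h0 : Filter.Tendsto (fun n : ℕ => ((K:ℝ) * L) / n) Filter.atTop (nhds 0) :=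
      tendsto_const_div_atTop_nhds_zero_nat _
    simpa using Filter.Tendsto.sub (tendsto_const_nhds (x := L)) h0
  refine tendsto_of_tendsto_of_tendsto_of_le_of_le' hg tendsto_const_nhds ?_ ?_
  · filter_upwards [Filter.eventually_ge_atTop 1] with n hn
    exact (hbound n hn).1
  · filter_upwards [Filter.eventually_ge_atTop 1] with n hn
    exact (hbound n hn).2
end

section
/- Fix a real number K ≥ 0. For every real N > 0 there is a unique real number r(N) > 1 satisfying r(N)^{K+1} − r(N)^K = N, and both the function N ↦ r(N) and the function N ↦ log₂ r(N) are strictly increasing and concave on (0, ∞). -/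
open Set Real

-- general inverse helpers
lemma aux_inv_mono {f r : ℝ → ℝ} {c : ℝ} (hf : StrictMonoOn f (Set.Ici c))
    (hr : ∀ N ∈ Set.Ioi (0:ℝ), c < r N ∧ f (r N) = N) :
    StrictMonoOn r (Set.Ioi 0) := by
  intro x hx y hy hxy
  by_contra hcon
  push_neg at hcon
  obtain ⟨hx1, hx2⟩ := hr x hx
  obtain ⟨hy1, hy2⟩ := hr y hy
  have : f (r y) ≤ f (r x) := by
    rcases eq_or_lt_of_le hcon with h | h
    · rw [h]
    · exact (hf hy1.le hx1.le h).le
  rw [hx2, hy2] at this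
  linarith

lemma aux_inv_concave {f r : ℝ → ℝ} {c : ℝ} (hf : StrictMonoOn f (Set.Ici c))
    (hconv : ConvexOn ℝ (Set.Ici c) f)
    (hr : ∀ N ∈ Set.Ioi (0:ℝ), c < r N ∧ f (r N) = N) :
    ConcaveOn ℝ (Set.Ioi 0) r := by
  refine ⟨convex_Ioi 0, ?_⟩
  intro x hx y hy a b ha hb hab
  have hx' := hr x hx
  have hy' := hr y hy
  have hM : a * x + b * y ∈ Set.Ioi (0:ℝ) := by
    rcases eq_or_lt_of_le ha with h | h
    · simp only [Set.mem_Ioi] at hy ⊢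
      have hb1 : b = 1 := by linarith
      rw [← h, hb1]; simpa using hy
    · simp only [Set.mem_Ioi] at hx hy ⊢
      nlinarith [mul_nonneg hb hy.le]
  obtain ⟨hM1, hM2⟩ := hr _ hM
  have hcomb : a • r x + b • r y ∈ Set.Ici c := by
    simp only [smul_eq_mul, Set.mem_Ici]
    have hc : a * c + b * c = c := by linear_combination c * hab
    nlinarith [mul_nonneg ha (sub_nonneg.mpr hx'.1.le), mul_nonneg hb (sub_nonneg.mpr hy'.1.le)]
  have hcv := hconv.2 (Set.mem_Ici.mpr hx'.1.le) (Set.mem_Ici.mpr hy'.1.le) ha hb hab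
  rw [hx'.2, hy'.2] at hcv
  by_contra hcon
  push_neg at hcon
  have := hf hM1.le hcomb hcon
  rw [hM2] at this
  simp only [smul_eq_mul] at this hcv
  linarith

lemma aux_f_mono (K : ℝ) (hK : 0 ≤ K) :
    StrictMonoOn (fun x : ℝ => x ^ (K + 1) - x ^ K) (Set.Ici 1) := by
  intro a ha b hb hab
  simp only [Set.mem_Ici] at ha hb
  have ha0 : (0:ℝ) < a := lt_of_lt_of_le one_pos ha
  have hb0 : (0:ℝ) < b := lt_of_lt_of_le one_pos hb
  have hfa : a ^ (K + 1) - a ^ K = a ^ K * (a - 1) := by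
    rw [Real.rpow_add_one ha0.ne']; ring
  have hfb : b ^ (K + 1) - b ^ K = b ^ K * (b - 1) := by
    rw [Real.rpow_add_one hb0.ne']; ring
  simp only [hfa, hfb]
  have h1 : a ^ K ≤ b ^ K := Real.rpow_le_rpow ha0.le hab.le hK
  have h2 : (0:ℝ) < b ^ K := Real.rpow_pos_of_pos hb0 K
  nlinarith

lemma aux_f_cont (K : ℝ) : ContinuousOn (fun x : ℝ => x ^ (K + 1) - x ^ K) (Set.Ici 1) := by
  intro x hx
  have hx0 : x ≠ 0 := by simp only [Set.mem_Ici] at hx; positivity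
  exact (((Real.continuousAt_rpow_const x (K+1) (Or.inl hx0)).sub
    (Real.continuousAt_rpow_const x K (Or.inl hx0)))).continuousWithinAt

lemma aux_f_lb (K : ℝ) (hK : 0 ≤ K) {x : ℝ} (hx : 1 ≤ x) :
    x - 1 ≤ x ^ (K + 1) - x ^ K := by
  have hx0 : (0:ℝ) < x := lt_of_lt_of_le one_pos hx
  have h1 : (1:ℝ) ≤ x ^ K := Real.one_le_rpow hx hK
  rw [Real.rpow_add_one hx0.ne']
  nlinarith

lemma aux_exists (K : ℝ) (hK : 0 ≤ K) {N : ℝ} (hN : 0 < N) :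
    ∃ x : ℝ, 1 < x ∧ x ^ (K + 1) - x ^ K = N := by
  have h12 : (1:ℝ) ≤ N + 2 := by linarith
  have hmem : N ∈ Set.Icc ((1:ℝ) ^ (K + 1) - 1 ^ K) ((N+2) ^ (K + 1) - (N+2) ^ K) := by
    constructor
    · simp [Real.one_rpow]; linarith
    · have := aux_f_lb K hK h12
      linarith
  have := intermediate_value_Icc h12 ((aux_f_cont K).mono (Set.Icc_subset_Ici_self))
  obtain ⟨x, hx, hfx⟩ := this hmem
  refine ⟨x, ?_, hfx⟩
  rcases eq_or_lt_of_le hx.1 with h | h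
  · exfalso
    rw [← h] at hfx
    simp [Real.one_rpow] at hfx
    linarith
  · exact h

lemma aux_f_convex (K : ℝ) (hK : 0 ≤ K) :
    ConvexOn ℝ (Set.Ici 1) (fun x : ℝ => x ^ (K + 1) - x ^ K) := by
  set f : ℝ → ℝ := fun x => x ^ (K + 1) - x ^ K with hf
  set g : ℝ → ℝ := fun x => (K + 1) * x ^ K - K * x ^ (K - 1) with hg
  set g2 : ℝ → ℝ := fun x => (K + 1) * (K * x ^ (K - 1)) - K * ((K - 1) * x ^ (K - 2)) with hg2
  have hfd : ∀ x ∈ Set.Ioi (0:ℝ), HasDerivAt f (g x) x := by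
    intro x hx
    have h1 := Real.hasDerivAt_rpow_const (x := x) (p := K + 1) (Or.inl (ne_of_gt hx))
    have h2 := Real.hasDerivAt_rpow_const (x := x) (p := K) (Or.inl (ne_of_gt hx))
    have := h1.sub h2
    convert this using 1
    · rfl
    · rfl
    · rfl
    simp only [hg]
    rw [show K + 1 - 1 = K by ring]
  have hgd : ∀ x ∈ Set.Ioi (1:ℝ), HasDerivAt g (g2 x) x := by
    intro x hx
    have hx0 : x ≠ 0 := by simp only [Set.mem_Ioi] at hx; positivity
    have h1 := (Real.hasDerivAt_rpow_const (x := x) (p := K) (Or.inl hx0)).const_mul (K + 1)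
    have h2 := (Real.hasDerivAt_rpow_const (x := x) (p := K - 1) (Or.inl hx0)).const_mul K
    have := h1.sub h2
    convert this using 1
    · rfl
    · rfl
    · rfl
    simp only [hg2]
    rw [show K - 1 - 1 = K - 2 by ring]
  have hderiv_eq : ∀ x ∈ Set.Ioi (0:ℝ), deriv f x = g x := fun x hx => (hfd x hx).deriv
  have hev : ∀ x ∈ Set.Ioi (1:ℝ), deriv f =ᶠ[nhds x] g := by
    intro x hx
    exact Filter.eventuallyEq_of_mem (Ioi_mem_nhds (lt_trans one_pos hx)) hderiv_eq
  refine convexOn_of_deriv2_nonneg (convex_Ici 1) (aux_f_cont K) ?_ ?_ ?_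
  · rw [interior_Ici]
    intro x hx
    exact (hfd x (show (0:ℝ) < x from lt_trans one_pos hx)).differentiableAt.differentiableWithinAt
  · rw [interior_Ici]
    intro x hx
    exact ((hgd x hx).differentiableAt.congr_of_eventuallyEq (hev x hx)).differentiableWithinAt
  · rw [interior_Ici]
    intro x hx
    have hd2 : deriv (deriv f) x = g2 x := by
      rw [(hev x hx).deriv_eq]
      exact (hgd x hx).deriv
    have : deriv^[2] f x = g2 x := by
      rw [show deriv^[2] f = deriv (deriv f) from rfl, hd2]
    rw [this]
    have hx1 : (1:ℝ) < x := hx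
    have hx0 : (0:ℝ) < x := lt_trans one_pos hx1
    have ht : (0:ℝ) < x ^ (K - 2) := Real.rpow_pos_of_pos hx0 _
    have hxk : x ^ (K - 1) = x ^ (K - 2) * x := by
      rw [← Real.rpow_add_one hx0.ne']
      rw [show K - 2 + 1 = K - 1 by ring]
    simp only [hg2, hxk]
    nlinarith [mul_nonneg hK ht.le,
      mul_nonneg (mul_nonneg (mul_nonneg hK ht.le) (by linarith : (0:ℝ) ≤ K + 1))
        (by linarith : (0:ℝ) ≤ x - 1)]

lemma aux_h_mono (K : ℝ) (hK : 0 ≤ K) :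
    StrictMonoOn (fun y : ℝ => Real.exp ((K + 1) * y) - Real.exp (K * y)) (Set.Ici 0) := by
  intro a ha b hb hab
  simp only [Set.mem_Ici] at ha hb
  have hfa : Real.exp ((K + 1) * a) - Real.exp (K * a) = Real.exp (K * a) * (Real.exp a - 1) := by
    rw [mul_sub, ← Real.exp_add]; ring_nf
  have hfb : Real.exp ((K + 1) * b) - Real.exp (K * b) = Real.exp (K * b) * (Real.exp b - 1) := by
    rw [mul_sub, ← Real.exp_add]; ring_nf
  simp only [hfa, hfb]
  have h1 : Real.exp (K * a) ≤ Real.exp (K * b) :=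
    Real.exp_le_exp.mpr (mul_le_mul_of_nonneg_left hab.le hK)
  have h2 : (0:ℝ) < Real.exp (K * b) := Real.exp_pos _
  have h3 : (1:ℝ) ≤ Real.exp a := Real.one_le_exp ha
  have h4 : Real.exp a < Real.exp b := Real.exp_lt_exp.mpr hab
  nlinarith

lemma aux_h_convex (K : ℝ) (hK : 0 ≤ K) :
    ConvexOn ℝ (Set.Ici 0) (fun y : ℝ => Real.exp ((K + 1) * y) - Real.exp (K * y)) := by
  set f : ℝ → ℝ := fun y => Real.exp ((K + 1) * y) - Real.exp (K * y) with hf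
  set g : ℝ → ℝ := fun y => Real.exp ((K + 1) * y) * (K + 1) - Real.exp (K * y) * K with hg
  set g2 : ℝ → ℝ := fun y =>
    Real.exp ((K + 1) * y) * (K + 1) * (K + 1) - Real.exp (K * y) * K * K with hg2
  have hlin : ∀ (c y : ℝ), HasDerivAt (fun y : ℝ => c * y) c y := by
    intro c y
    simpa using (hasDerivAt_id y).const_mul c
  have hfd : ∀ y : ℝ, HasDerivAt f (g y) y := by
    intro y
    exact ((hlin (K + 1) y).exp).sub ((hlin K y).exp)
  have hgd : ∀ y : ℝ, HasDerivAt g (g2 y) y := by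
    intro y
    exact (((hlin (K + 1) y).exp).mul_const (K + 1)).sub (((hlin K y).exp).mul_const K)
  have hderiv : deriv f = g := funext fun y => (hfd y).deriv
  refine convexOn_of_deriv2_nonneg (convex_Ici 0) (fun y _ => (hfd y).continuousAt.continuousWithinAt) ?_ ?_ ?_
  · exact fun y _ => (hfd y).differentiableAt.differentiableWithinAt
  · rw [hderiv]
    exact fun y _ => (hgd y).differentiableAt.differentiableWithinAt
  · rw [interior_Ici]
    intro y hy
    have hy0 : (0:ℝ) < y := hy
    have : deriv^[2] f y = g2 y := by
      rw [show deriv^[2] f = deriv (deriv f) from rfl, hderiv]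
      exact (hgd y).deriv
    rw [this]
    have h1 : Real.exp (K * y) ≤ Real.exp ((K + 1) * y) :=
      Real.exp_le_exp.mpr (by nlinarith)
    have h2 : (0:ℝ) < Real.exp (K * y) := Real.exp_pos _
    simp only [hg2]
    nlinarith [mul_le_mul_of_nonneg_right h1 (by nlinarith : (0:ℝ) ≤ (K + 1) * (K + 1))]

/-- Fix a real `K ≥ 0`. For every real `N > 0` there is a unique `r N > 1` with
`(r N)^{K+1} - (r N)^K = N` (real powers), and both `N ↦ r N` and `N ↦ log₂ (r N)` are
strictly increasing and concave on `(0, ∞)`. -/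
theorem root_mono_concave_in_N (K : ℝ) (hK : 0 ≤ K) :
    ∃ r : ℝ → ℝ,
      (∀ N : ℝ, 0 < N → (1 < r N ∧ r N ^ (K + 1) - r N ^ K = N ∧
        ∀ s : ℝ, 1 < s → s ^ (K + 1) - s ^ K = N → s = r N)) ∧
      StrictMonoOn r (Set.Ioi 0) ∧ ConcaveOn ℝ (Set.Ioi 0) r ∧
      StrictMonoOn (fun N => Real.logb 2 (r N)) (Set.Ioi 0) ∧
      ConcaveOn ℝ (Set.Ioi 0) (fun N => Real.logb 2 (r N)) := by
  have H : ∀ N : ℝ, ∃ x : ℝ, 0 < N → (1 < x ∧ x ^ (K + 1) - x ^ K = N) := by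
    intro N
    by_cases h : 0 < N
    · obtain ⟨x, hx1, hx2⟩ := aux_exists K hK h
      exact ⟨x, fun _ => ⟨hx1, hx2⟩⟩
    · exact ⟨2, fun h' => absurd h' h⟩
  choose r hr using H
  have hrN : ∀ N ∈ Set.Ioi (0:ℝ), 1 < r N ∧ (fun x : ℝ => x ^ (K + 1) - x ^ K) (r N) = N := by
    intro N hN
    exact hr N (Set.mem_Ioi.mp hN)
  have hmono := aux_inv_mono (aux_f_mono K hK) hrN
  have hlogN : ∀ N ∈ Set.Ioi (0:ℝ), 0 < Real.log (r N) ∧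
      (fun y : ℝ => Real.exp ((K + 1) * y) - Real.exp (K * y)) (Real.log (r N)) = N := by
    intro N hN
    obtain ⟨h1, h2⟩ := hr N (Set.mem_Ioi.mp hN)
    refine ⟨Real.log_pos h1, ?_⟩
    have hp : (0:ℝ) < r N := lt_trans one_pos h1
    show Real.exp ((K + 1) * Real.log (r N)) - Real.exp (K * Real.log (r N)) = N
    rw [mul_comm (K + 1), mul_comm K, ← Real.rpow_def_of_pos hp, ← Real.rpow_def_of_pos hp]
    exact h2
  have hlogc := aux_inv_concave (aux_h_mono K hK) (aux_h_convex K hK) hlogN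
  refine ⟨r, ?_, hmono, aux_inv_concave (aux_f_mono K hK) (aux_f_convex K hK) hrN, ?_, ?_⟩
  · intro N hN
    obtain ⟨h1, h2⟩ := hr N hN
    refine ⟨h1, h2, ?_⟩
    intro s hs hseq
    have heq2 : s ^ (K + 1) - s ^ K = r N ^ (K + 1) - r N ^ K := by rw [hseq, h2]
    exact (aux_f_mono K hK).injOn (Set.mem_Ici.mpr hs.le) (Set.mem_Ici.mpr h1.le) heq2
  · intro x hx y hy hxy
    exact Real.logb_lt_logb (b := 2) (by norm_num)
      (lt_trans one_pos (hr x (Set.mem_Ioi.mp hx)).1) (hmono hx hy hxy)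
  · have heq : (fun N => Real.logb 2 (r N)) = (Real.log 2)⁻¹ • (fun N => Real.log (r N)) := by
      funext N
      simp [Real.logb, div_eq_inv_mul]
    rw [heq]
    exact hlogc.smul (inv_nonneg.mpr (Real.log_nonneg one_le_two))
end

section
/- Fix a real number N > 0. For every real K ≥ 0 there is a unique real number r(K) > 1 satisfying r(K)^{K+1} − r(K)^K = N, and both the function K ↦ r(K) and the function K ↦ log₂ r(K) are strictly decreasing and convex on [0, ∞). -/
open Real Set

/-- A two-point Mahler-type inequality. -/
private lemma mahler2 {x₁ x₂ a b : ℝ} (h₁ : 0 < x₁) (h₂ : 0 < x₂)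
    (ha : 0 ≤ a) (hb : 0 ≤ b) (hab : a + b = 1) :
    x₁ ^ a * x₂ ^ b + 1 ≤ (x₁ + 1) ^ a * (x₂ + 1) ^ b := by
  have hs₁ : 0 < x₁ + 1 := by linarith
  have hs₂ : 0 < x₂ + 1 := by linarith
  have hP : 0 < (x₁ + 1) ^ a * (x₂ + 1) ^ b :=
    mul_pos (rpow_pos_of_pos hs₁ a) (rpow_pos_of_pos hs₂ b)
  have g1 : (x₁ / (x₁+1)) ^ a * (x₂ / (x₂+1)) ^ b
      ≤ a * (x₁/(x₁+1)) + b * (x₂/(x₂+1)) :=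
    Real.geom_mean_le_arith_mean2_weighted ha hb (by positivity) (by positivity) hab
  have g2 : (1 / (x₁+1)) ^ a * (1 / (x₂+1)) ^ b
      ≤ a * (1/(x₁+1)) + b * (1/(x₂+1)) :=
    Real.geom_mean_le_arith_mean2_weighted ha hb (by positivity) (by positivity) hab
  rw [Real.div_rpow h₁.le hs₁.le, Real.div_rpow h₂.le hs₂.le] at g1
  rw [Real.div_rpow zero_le_one hs₁.le, Real.div_rpow zero_le_one hs₂.le,
    Real.one_rpow, Real.one_rpow] at g2
  have hsum : a * (x₁/(x₁+1)) + b * (x₂/(x₂+1)) + (a * (1/(x₁+1)) + b * (1/(x₂+1))) = 1 := by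
    field_simp
    linear_combination (1 + x₁ + x₂ + x₁*x₂) * hab
  have hcomb : x₁ ^ a / (x₁+1) ^ a * (x₂ ^ b / (x₂+1) ^ b)
      + 1 / (x₁+1) ^ a * (1 / (x₂+1) ^ b) ≤ 1 := by linarith
  have hexp : x₁ ^ a / (x₁+1) ^ a * (x₂ ^ b / (x₂+1) ^ b)
      + 1 / (x₁+1) ^ a * (1 / (x₂+1) ^ b)
      = (x₁ ^ a * x₂ ^ b + 1) / ((x₁ + 1) ^ a * (x₂ + 1) ^ b) := by
    field_simp
  rw [hexp, div_le_one hP] at hcomb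
  exact hcomb

/-- Fix a real `N > 0`. For every real `K ≥ 0` there is a unique `r K > 1` with
`(r K)^{K+1} - (r K)^K = N` (real powers), and both `K ↦ r K` and `K ↦ log₂ (r K)` are
strictly decreasing and convex on `[0, ∞)`. -/
theorem root_anti_convex_in_K (N : ℝ) (hN : 0 < N) :
    ∃ r : ℝ → ℝ,
      (∀ K : ℝ, 0 ≤ K → (1 < r K ∧ r K ^ (K + 1) - r K ^ K = N ∧
        ∀ s : ℝ, 1 < s → s ^ (K + 1) - s ^ K = N → s = r K)) ∧
      StrictAntiOn r (Set.Ici 0) ∧ ConvexOn ℝ (Set.Ici 0) r ∧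
      StrictAntiOn (fun K => Real.logb 2 (r K)) (Set.Ici 0) ∧
      ConvexOn ℝ (Set.Ici 0) (fun K => Real.logb 2 (r K)) := by
  -- strict monotonicity of the defining function
  have fmono : ∀ K : ℝ, 0 ≤ K → StrictMonoOn (fun x : ℝ => x ^ K * (x - 1)) (Ioi 1) := by
    intro K hK x hx y hy hxy
    simp only [mem_Ioi] at hx hy
    have h1 : x ^ K * (x-1) < x ^ K * (y-1) :=
      mul_lt_mul_of_pos_left (by linarith) (rpow_pos_of_pos (by linarith) K)
    have h2 : x ^ K * (y-1) ≤ y ^ K * (y-1) :=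
      mul_le_mul_of_nonneg_right (Real.rpow_le_rpow (by linarith) hxy.le hK) (by linarith)
    simpa using lt_of_lt_of_le h1 h2
  -- existence via IVT
  have hex : ∀ K : ℝ, ∃ x : ℝ, 0 ≤ K → 1 < x ∧ x ^ K * (x - 1) = N := by
    intro K
    by_cases hK : 0 ≤ K
    · have hcont : ContinuousOn (fun x : ℝ => x ^ K * (x - 1)) (Icc 1 (N+2)) := by
        apply ContinuousOn.mul
        · intro x _
          exact (Real.continuousAt_rpow_const x K (Or.inr hK)).continuousWithinAt
        · exact (continuous_id.sub continuous_const).continuousOn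
      have h12 : (1:ℝ) ≤ N + 2 := by linarith
      have hmem : N ∈ Icc ((fun x:ℝ => x ^ K * (x-1)) 1) ((fun x:ℝ => x ^ K*(x-1)) (N+2)) := by
        constructor
        · simp [Real.one_rpow]
          positivity
        · have h1 : (1:ℝ) ≤ (N+2) ^ K := Real.one_le_rpow (by linarith) hK
          simp only
          nlinarith
      obtain ⟨x, hxmem, hxeq⟩ := intermediate_value_Icc h12 hcont hmem
      refine ⟨x, fun _ => ⟨?_, hxeq⟩⟩
      rcases eq_or_lt_of_le hxmem.1 with h|h
      · exfalso
        rw [← h] at hxeq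
        simp [Real.one_rpow] at hxeq
        linarith
      · exact h
    · exact ⟨2, fun h => absurd h hK⟩
  choose r hr using hex
  have hr1 : ∀ K : ℝ, K ∈ Ici (0:ℝ) → 1 < r K := fun K hK => (hr K hK).1
  have hreq : ∀ K : ℝ, K ∈ Ici (0:ℝ) → r K ^ K * (r K - 1) = N := fun K hK => (hr K hK).2
  have pow_sub_eq : ∀ (x K : ℝ), 0 < x → x ^ (K+1) - x ^ K = x ^ K * (x - 1) := by
    intro x K hx
    rw [Real.rpow_add_one hx.ne']
    ring
  -- characterization
  have char : ∀ K : ℝ, K ∈ Ici (0:ℝ) → ∀ t : ℝ, 1 < t → N ≤ t ^ K * (t - 1) → r K ≤ t := by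
    intro K hK t ht hNt
    by_contra h
    push_neg at h
    have this : t ^ K * (t - 1) < r K ^ K * (r K - 1) :=
      fmono K hK (mem_Ioi.2 ht) (mem_Ioi.2 (hr1 K hK)) h
    rw [hreq K hK] at this
    linarith
  -- strict antitonicity of r
  have hanti : StrictAntiOn r (Ici 0) := by
    intro K₁ hK₁ K₂ hK₂ h12
    by_contra h
    push_neg at h
    have h1 := hr1 K₁ hK₁
    have h2 := hr1 K₂ hK₂
    have key : r K₂ ^ K₁ * (r K₂ - 1) < N := by
      calc r K₂ ^ K₁ * (r K₂ - 1) < r K₂ ^ K₂ * (r K₂ - 1) := by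
            apply mul_lt_mul_of_pos_right
            · exact Real.rpow_lt_rpow_of_exponent_lt h2 h12
            · linarith
        _ = N := hreq K₂ hK₂
    rcases eq_or_lt_of_le h with he|hl
    · rw [← he, hreq K₁ hK₁] at key
      exact lt_irrefl _ key
    · have this : r K₁ ^ K₁ * (r K₁ - 1) < r K₂ ^ K₁ * (r K₂ - 1) :=
        fmono K₁ hK₁ (mem_Ioi.2 h1) (mem_Ioi.2 h2) hl
      rw [hreq K₁ hK₁] at this
      linarith
  -- log form of the equation
  have hlog : ∀ K : ℝ, K ∈ Ici (0:ℝ) → K * Real.log (r K) + Real.log (r K - 1) = Real.log N := by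
    intro K hK
    have h1 := hr1 K hK
    rw [← hreq K hK, Real.log_mul (by positivity) (by linarith : (0:ℝ) < r K - 1).ne',
      Real.log_rpow (by linarith)]
  -- the key cross inequality
  have cross : ∀ K₁ K₂ : ℝ, K₁ ∈ Ici (0:ℝ) → K₂ ∈ Ici (0:ℝ) → ∀ a b : ℝ,
      0 ≤ a → 0 ≤ b → a + b = 1 →
      Real.log N ≤ (a*K₁+b*K₂) * (a * Real.log (r K₁) + b * Real.log (r K₂))
        + (a * Real.log (r K₁ - 1) + b * Real.log (r K₂ - 1)) := by
    intro K₁ K₂ hK₁ hK₂ a b ha hb hab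
    have h1 := hr1 K₁ hK₁
    have h2 := hr1 K₂ hK₂
    have e1 := hlog K₁ hK₁
    have e2 := hlog K₂ hK₂
    have hLK : 0 ≤ (K₂ - K₁) * (Real.log (r K₁) - Real.log (r K₂)) := by
      rcases lt_trichotomy K₁ K₂ with h|h|h
      · have hrr : r K₂ < r K₁ := hanti hK₁ hK₂ h
        have : Real.log (r K₂) < Real.log (r K₁) := Real.log_lt_log (by linarith) hrr
        nlinarith
      · rw [h]; simp
      · have hrr : r K₁ < r K₂ := hanti hK₂ hK₁ h
        have : Real.log (r K₁) < Real.log (r K₂) := Real.log_lt_log (by linarith) hrr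
        nlinarith
    have hb' : b = 1 - a := by linarith
    subst hb'
    nlinarith [mul_nonneg (mul_nonneg ha hb) hLK]
  have hK0 : ∀ K₁ K₂ a b : ℝ, K₁ ∈ Ici (0:ℝ) → K₂ ∈ Ici (0:ℝ) → 0 ≤ a → 0 ≤ b →
      (0:ℝ) ≤ a*K₁+b*K₂ := fun K₁ K₂ a b h1 h2 ha hb =>
    add_nonneg (mul_nonneg ha h1) (mul_nonneg hb h2)
  -- convexity of r
  have hconv : ConvexOn ℝ (Ici 0) r := by
    refine ⟨convex_Ici 0, ?_⟩
    intro K₁ hK₁ K₂ hK₂ a b ha hb hab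
    simp only [smul_eq_mul]
    have h1 := hr1 K₁ hK₁
    have h2 := hr1 K₂ hK₂
    set t := a * r K₁ + b * r K₂ with hT
    have ht1 : 1 < t := by
      rcases eq_or_lt_of_le ha with h|h
      · have hb1 : b = 1 := by linarith
        rw [hT, ← h, hb1]; simpa using h2
      · have h3 : b * 1 ≤ b * r K₂ := by nlinarith
        have h4 : a * 1 < a * r K₁ := by nlinarith
        rw [hT]; nlinarith
    have ht0 : (0:ℝ) < t := by linarith
    have hKm : (0:ℝ) ≤ a*K₁+b*K₂ := hK0 K₁ K₂ a b hK₁ hK₂ ha hb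
    have hmemK : a*K₁+b*K₂ ∈ Ici (0:ℝ) := hKm
    have hlogt : a * Real.log (r K₁) + b * Real.log (r K₂) ≤ Real.log t := by
      have := strictConcaveOn_log_Ioi.concaveOn.2 (mem_Ioi.2 (by linarith : (0:ℝ) < r K₁))
        (mem_Ioi.2 (by linarith : (0:ℝ) < r K₂)) ha hb hab
      simpa [smul_eq_mul] using this
    have hlogt1 : a * Real.log (r K₁ - 1) + b * Real.log (r K₂ - 1) ≤ Real.log (t - 1) := by
      have := strictConcaveOn_log_Ioi.concaveOn.2 (mem_Ioi.2 (by linarith : (0:ℝ) < r K₁ - 1))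
        (mem_Ioi.2 (by linarith : (0:ℝ) < r K₂ - 1)) ha hb hab
      have heq : a • (r K₁ - 1) + b • (r K₂ - 1) = t - 1 := by
        simp only [smul_eq_mul]; rw [hT]; nlinarith
      rw [heq] at this
      simpa [smul_eq_mul] using this
    have hlN : Real.log N ≤ (a*K₁+b*K₂) * Real.log t + Real.log (t - 1) := by
      have hc := cross K₁ K₂ hK₁ hK₂ a b ha hb hab
      have := mul_le_mul_of_nonneg_left hlogt hKm
      linarith
    have hNt : N ≤ t ^ (a*K₁+b*K₂) * (t - 1) := by
      calc N = Real.exp (Real.log N) := (Real.exp_log hN).symm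
        _ ≤ Real.exp ((a*K₁+b*K₂) * Real.log t + Real.log (t - 1)) := Real.exp_le_exp.2 hlN
        _ = t ^ (a*K₁+b*K₂) * (t - 1) := by
            rw [Real.exp_add, Real.exp_log (by linarith : (0:ℝ) < t - 1),
              Real.rpow_def_of_pos ht0, mul_comm (Real.log t)]
    exact char _ hmemK t ht1 hNt
  -- key log inequality for the logb convexity
  have hlogconvkey : ∀ K₁ K₂ : ℝ, K₁ ∈ Ici (0:ℝ) → K₂ ∈ Ici (0:ℝ) → ∀ a b : ℝ,
      0 ≤ a → 0 ≤ b → a + b = 1 →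
      Real.log (r (a*K₁+b*K₂)) ≤ a * Real.log (r K₁) + b * Real.log (r K₂) := by
    intro K₁ K₂ hK₁ hK₂ a b ha hb hab
    have h1 := hr1 K₁ hK₁
    have h2 := hr1 K₂ hK₂
    have hL1 : 0 < Real.log (r K₁) := Real.log_pos h1
    have hL2 : 0 < Real.log (r K₂) := Real.log_pos h2
    set ℓ := a * Real.log (r K₁) + b * Real.log (r K₂) with hL
    have hl0 : 0 < ℓ := by
      rcases eq_or_lt_of_le ha with h|h
      · have : b = 1 := by linarith
        rw [hL, ← h, this]; simpa using hL2
      · have : 0 ≤ b * Real.log (r K₂) := mul_nonneg hb hL2.le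
        nlinarith
    have hexp1 : 1 < Real.exp ℓ := by
      calc (1:ℝ) = Real.exp 0 := Real.exp_zero.symm
        _ < Real.exp ℓ := Real.exp_lt_exp.2 hl0
    have hKm : (0:ℝ) ≤ a*K₁+b*K₂ := hK0 K₁ K₂ a b hK₁ hK₂ ha hb
    -- Mahler step
    have hmah : (r K₁ - 1) ^ a * (r K₂ - 1) ^ b + 1 ≤ r K₁ ^ a * r K₂ ^ b := by
      have := mahler2 (by linarith : (0:ℝ) < r K₁ - 1) (by linarith : (0:ℝ) < r K₂ - 1)
        ha hb hab
      simpa using this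
    have hee : Real.exp ℓ = r K₁ ^ a * r K₂ ^ b := by
      rw [hL, Real.exp_add, Real.rpow_def_of_pos (by linarith : (0:ℝ) < r K₁),
        Real.rpow_def_of_pos (by linarith : (0:ℝ) < r K₂), mul_comm (Real.log (r K₁)),
        mul_comm (Real.log (r K₂))]
    have hef : Real.exp (a * Real.log (r K₁ - 1) + b * Real.log (r K₂ - 1))
        = (r K₁ - 1) ^ a * (r K₂ - 1) ^ b := by
      rw [Real.exp_add, Real.rpow_def_of_pos (by linarith : (0:ℝ) < r K₁ - 1),
        Real.rpow_def_of_pos (by linarith : (0:ℝ) < r K₂ - 1),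
        mul_comm (Real.log (r K₁ - 1)), mul_comm (Real.log (r K₂ - 1))]
    have hphi : a * Real.log (r K₁ - 1) + b * Real.log (r K₂ - 1)
        ≤ Real.log (Real.exp ℓ - 1) := by
      have hstep : Real.exp (a * Real.log (r K₁ - 1) + b * Real.log (r K₂ - 1))
          ≤ Real.exp ℓ - 1 := by
        rw [hef, hee]
        linarith
      calc a * Real.log (r K₁ - 1) + b * Real.log (r K₂ - 1)
          = Real.log (Real.exp (a * Real.log (r K₁ - 1) + b * Real.log (r K₂ - 1))) :=
            (Real.log_exp _).symm
        _ ≤ Real.log (Real.exp ℓ - 1) :=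
            Real.log_le_log (Real.exp_pos _) hstep
    have hlN : Real.log N ≤ (a*K₁+b*K₂) * Real.log (Real.exp ℓ)
        + Real.log (Real.exp ℓ - 1) := by
      have hc := cross K₁ K₂ hK₁ hK₂ a b ha hb hab
      rw [← hL] at hc
      rw [Real.log_exp]
      linarith
    have hNt : N ≤ (Real.exp ℓ) ^ (a*K₁+b*K₂) * (Real.exp ℓ - 1) := by
      calc N = Real.exp (Real.log N) := (Real.exp_log hN).symm
        _ ≤ Real.exp ((a*K₁+b*K₂) * Real.log (Real.exp ℓ) + Real.log (Real.exp ℓ - 1)) :=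
            Real.exp_le_exp.2 hlN
        _ = (Real.exp ℓ) ^ (a*K₁+b*K₂) * (Real.exp ℓ - 1) := by
            rw [Real.exp_add, Real.exp_log (by linarith : (0:ℝ) < Real.exp ℓ - 1),
              Real.rpow_def_of_pos (Real.exp_pos ℓ), mul_comm (Real.log (Real.exp ℓ))]
    have hle : r (a*K₁+b*K₂) ≤ Real.exp ℓ := char _ (hK0 K₁ K₂ a b hK₁ hK₂ ha hb) _ hexp1 hNt
    calc Real.log (r (a*K₁+b*K₂)) ≤ Real.log (Real.exp ℓ) :=
          Real.log_le_log (by have := hr1 _ (hK0 K₁ K₂ a b hK₁ hK₂ ha hb); linarith) hle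
      _ = ℓ := Real.log_exp ℓ
  refine ⟨r, ?_, hanti, hconv, ?_, ?_⟩
  · intro K hK
    have h1 := hr1 K hK
    have h0 : (0:ℝ) < r K := by linarith
    refine ⟨h1, by rw [pow_sub_eq _ _ h0, hreq K hK], ?_⟩
    intro s hs hseq
    have hs' : s ^ K * (s - 1) = N := by rw [← pow_sub_eq _ _ (by linarith : (0:ℝ) < s), hseq]
    exact (fmono K hK).injOn (mem_Ioi.2 hs) (mem_Ioi.2 h1)
      (by show s ^ K * (s - 1) = r K ^ K * (r K - 1); rw [hs', hreq K hK])
  · intro K₁ hK₁ K₂ hK₂ h12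
    exact Real.logb_lt_logb (by norm_num) (by have := hr1 K₂ hK₂; linarith)
      (hanti hK₁ hK₂ h12)
  · refine ⟨convex_Ici 0, ?_⟩
    intro K₁ hK₁ K₂ hK₂ a b ha hb hab
    simp only [smul_eq_mul, Real.logb, div_eq_mul_inv]
    have hkey := hlogconvkey K₁ K₂ hK₁ hK₂ a b ha hb hab
    have hlog2 : (0:ℝ) < Real.log 2 := Real.log_pos (by norm_num)
    have hinv : (0:ℝ) ≤ (Real.log 2)⁻¹ := by positivity
    have hmul := mul_le_mul_of_nonneg_right hkey hinv
    nlinarith [hmul]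
end

section
/- Let x, y ∈ {0,1,…,N}^n. If there exists z ∈ ℕ^{n+K} with x ⤳ z and y ⤳ z, then there exists w ∈ {0,1,…,N}^{n+K} (i.e., a sequence all of whose entries are at most N) with x ⤳ w and y ⤳ w. Consequently, a code is a zero-error code for DTPC(N,K) if and only if it is a zero-error code for the channel DTPC(N,K;N) whose outputs are restricted to sequences with at most N particles per slot. -/
/-- Zero-error code for the restricted channel DTPC(N, K; N), whose outputs are
additionally required to have at most `N` particles per slot. -/
def IsZeroErrorRestricted (N K n : ℕ) (C : Finset (List ℕ)) : Prop :=
  IsCode N n C ∧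
  ∀ L₁ L₂ : List (List ℕ),
    L₁.length = L₂.length → 1 ≤ L₁.length →
    (∀ w ∈ L₁, w ∈ C) → (∀ w ∈ L₂, w ∈ C) →
    L₁.flatten ≠ L₂.flatten →
    ∀ z : List ℕ, ¬ ((Produces K L₁.flatten z ∧ ∀ a ∈ z, a ≤ N) ∧
      (Produces K L₂.flatten z ∧ ∀ a ∈ z, a ≤ N))

noncomputable def psum (x : List ℕ) (t : ℕ) : ℕ := ∑ i ∈ Finset.range t, x.getD i 0

lemma psum_succ (x : List ℕ) (t : ℕ) : psum x (t+1) = psum x t + x.getD t 0 :=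
  Finset.sum_range_succ _ _

lemma psum_mono (x : List ℕ) {s t : ℕ} (h : s ≤ t) : psum x s ≤ psum x t :=
  Finset.sum_le_sum_of_subset (Finset.range_subset_range.2 h)

lemma psum_stable (x : List ℕ) {t : ℕ} (h : x.length ≤ t) : psum x t = psum x x.length := by
  refine (Finset.sum_subset (Finset.range_subset_range.2 h) ?_).symm
  intro i _ hi
  exact List.getD_eq_default _ _ (by simp at hi; omega)

lemma tele (g : ℕ → ℕ) (hg : Monotone g) (a b : ℕ) {l r : ℕ} (hlr : l ≤ r) :
    ∑ t ∈ Finset.Ico l r, (min b (g (t+1)) - max a (g t)) = min b (g r) - max a (g l) := by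
  induction r, hlr using Nat.le_induction with
  | base => rw [Finset.Ico_self, Finset.sum_empty]; omega
  | succ r hlr ih =>
    rw [Finset.sum_Ico_succ_top hlr, ih]
    have h1 : g l ≤ g r := hg hlr
    have h2 : g r ≤ g (r+1) := hg (Nat.le_succ r)
    omega

lemma produces_psum {K : ℕ} {x z : List ℕ} (h : Produces K x z) (t : ℕ)
    (ht : t ≤ x.length + K) :
    psum x (t - K) ≤ psum z t ∧ psum z t ≤ psum x t := by
  obtain ⟨hlen, d, hd1, hd2⟩ := h
  have hz : psum z t = ∑ i ∈ Finset.range x.length, ∑ j ∈ Finset.range (K+1),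
      (if i + j < t then d i j else 0) := by
    unfold psum
    rw [Finset.sum_congr rfl (fun t' ht' => hd2 t' (by simp at ht'; omega))]
    rw [Finset.sum_comm]
    refine Finset.sum_congr rfl fun i _ => ?_
    rw [Finset.sum_comm]
    refine Finset.sum_congr rfl fun j _ => ?_
    rw [Finset.sum_ite_eq (Finset.range t) (i+j) (fun _ => d i j)]
    simp
  constructor
  · rw [hz]
    have key : ∀ i ∈ Finset.range x.length,
        (if i + K < t then x.getD i 0 else 0) ≤
          ∑ j ∈ Finset.range (K+1), (if i + j < t then d i j else 0) := by
      intro i hi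
      simp only [Finset.mem_range] at hi
      by_cases hit : i + K < t
      · rw [if_pos hit, ← hd1 i hi]
        refine Finset.sum_le_sum fun j hj => ?_
        simp only [Finset.mem_range] at hj
        rw [if_pos (by omega)]
      · simp [hit]
    refine le_trans (le_of_eq ?_) (Finset.sum_le_sum key)
    have hfil : Finset.range (t - K) = (Finset.range x.length).filter (fun i => i + K < t) := by
      ext i; simp [Finset.mem_filter]; omega
    rw [← Finset.sum_filter, ← hfil]; rfl
  · rw [hz]
    have key : ∀ i ∈ Finset.range x.length,
        (∑ j ∈ Finset.range (K+1), (if i + j < t then d i j else 0)) ≤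
          (if i < t then x.getD i 0 else 0) := by
      intro i hi
      simp only [Finset.mem_range] at hi
      by_cases hit : i < t
      · rw [if_pos hit, ← hd1 i hi]
        refine Finset.sum_le_sum fun j hj => ?_
        split
        · exact le_rfl
        · exact Nat.zero_le _
      · rw [if_neg hit]
        refine le_of_eq (Finset.sum_eq_zero fun j hj => ?_)
        rw [if_neg (by omega)]
    refine le_trans (Finset.sum_le_sum key) (le_of_eq ?_)
    rw [← Finset.sum_filter]
    have hfil : (Finset.range x.length).filter (fun i => i < t) = Finset.range (min x.length t) := by
      ext i; simp [Finset.mem_filter]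
    rw [hfil]
    rcases le_total x.length t with h' | h'
    · rw [min_eq_left h']
      exact (psum_stable x h').symm
    · rw [min_eq_right h']; rfl

lemma produces_construct (K : ℕ) (x : List ℕ) (W : ℕ → ℕ) (hW : Monotone W)
    (hub : ∀ t, W t ≤ psum x t) (hlb : ∀ t, psum x t ≤ W (t + K)) (m : ℕ) (hm : m = x.length) :
    Produces K x ((List.range (m + K)).map fun t => W (t+1) - W t) := by
  subst hm
  refine ⟨by simp, fun i j => min (psum x (i+1)) (W (i+j+1)) - max (psum x i) (W (i+j)), ?_, ?_⟩
  · intro i hi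
    have h1 : (∑ j ∈ Finset.range (K+1),
        (min (psum x (i+1)) (W (i+j+1)) - max (psum x i) (W (i+j)))) =
        ∑ t ∈ Finset.Ico i (i+(K+1)), (min (psum x (i+1)) (W (t+1)) - max (psum x i) (W t)) := by
      rw [Finset.sum_Ico_eq_sum_range]
      simp
    rw [h1, tele W hW _ _ (by omega)]
    have h2 := hub i
    have h3 := hlb (i+1)
    have h4 : W (i+1+K) = W (i+(K+1)) := by ring_nf
    have h5 := psum_succ x i
    omega
  · intro t ht
    have hget : ((List.range (x.length + K)).map fun t => W (t+1) - W t).getD t 0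
        = W (t+1) - W t := by
      rw [List.getD_eq_getElem _ _ (by simpa using ht)]
      simp
    rw [hget]
    have hinner : ∀ i, (∑ j ∈ Finset.range (K+1),
        if i + j = t then min (psum x (i+1)) (W (i+j+1)) - max (psum x i) (W (i+j)) else 0)
        = if i ≤ t ∧ t ≤ i + K then min (psum x (i+1)) (W (t+1)) - max (psum x i) (W t) else 0 := by
      intro i
      by_cases h : i ≤ t ∧ t ≤ i + K
      · rw [if_pos h]
        rw [Finset.sum_eq_single_of_mem (t - i) (by simp; omega)]
        · have e : i + (t - i) = t := by omega
          rw [if_pos (by omega), e]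
        · intro j _ hj
          rw [if_neg (by omega)]
      · rw [if_neg h]
        refine Finset.sum_eq_zero fun j hj => ?_
        simp only [Finset.mem_range] at hj
        rw [if_neg (by omega)]
    rw [Finset.sum_congr rfl fun i _ => hinner i, ← Finset.sum_filter]
    have hfil : (Finset.range x.length).filter (fun i => i ≤ t ∧ t ≤ i + K)
        = Finset.Ico (t - K) (min (t+1) x.length) := by
      ext i; simp [Finset.mem_filter, Finset.mem_Ico]; omega
    rw [hfil]
    have h1 : ∀ i, min (psum x (i+1)) (W (t+1)) - max (psum x i) (W t)
        = min (W (t+1)) (psum x (i+1)) - max (W t) (psum x i) := by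
      intro i; rw [min_comm, max_comm]
    rw [Finset.sum_congr rfl fun i _ => h1 i,
      tele (psum x) (fun _ _ h => psum_mono x h) (W t) (W (t+1)) (by omega)]
    have hA : psum x (t - K) ≤ W t := by
      rcases le_or_gt K t with h' | h'
      · have := hlb (t - K)
        have e : t - K + K = t := by omega
        rw [e] at this; exact this
      · have : t - K = 0 := by omega
        rw [this]
        simp [psum]
    have hB : W (t+1) ≤ psum x (min (t+1) x.length) := by
      rcases le_total (t+1) x.length with h' | h'
      · rw [min_eq_left h']; exact hub (t+1)
      · rw [min_eq_right h', ← psum_stable x h']; exact hub (t+1)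
    have hC : W t ≤ W (t+1) := hW (Nat.le_succ t)
    omega

lemma common_output (N K : ℕ) (x y z : List ℕ) (hxy : x.length = y.length)
    (hx : ∀ a ∈ x, a ≤ N) (hy : ∀ a ∈ y, a ≤ N)
    (hzx : Produces K x z) (hzy : Produces K y z) :
    ∃ w : List ℕ, (∀ a ∈ w, a ≤ N) ∧ Produces K x w ∧ Produces K y w := by
  set W : ℕ → ℕ := fun t => min (psum x t) (psum y t) with hWdef
  have hW : Monotone W := fun s t h => le_min
    (le_trans (min_le_left _ _) (psum_mono x h)) (le_trans (min_le_right _ _) (psum_mono y h))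
  have hubx : ∀ t, W t ≤ psum x t := fun t => min_le_left _ _
  have huby : ∀ t, W t ≤ psum y t := fun t => min_le_right _ _
  have cross : ∀ (u v : List ℕ), u.length = v.length → Produces K u z → Produces K v z →
      ∀ t, psum u t ≤ psum v (t + K) := by
    intro u v huv hu hv t
    rcases le_or_gt t u.length with h' | h'
    · have h1 := (produces_psum hu (t + K) (by omega)).1
      have h2 := (produces_psum hv (t + K) (by omega)).2
      have e : t + K - K = t := by omega
      rw [e] at h1
      omega
    · have e1 : psum u t = psum u u.length := psum_stable u (le_of_lt h')
      have h1 := (produces_psum hu (u.length + K) (by omega)).1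
      have h2 := (produces_psum hv (u.length + K) (by omega)).2
      have e : u.length + K - K = u.length := by omega
      rw [e] at h1
      have h3 : psum v (u.length + K) ≤ psum v (t + K) := psum_mono v (by omega)
      omega
  have hlbx : ∀ t, psum x t ≤ W (t + K) := by
    intro t
    exact le_min (psum_mono x (by omega)) (cross x y hxy hzx hzy t)
  have hlby : ∀ t, psum y t ≤ W (t + K) := by
    intro t
    exact le_min (cross y x hxy.symm hzy hzx t) (psum_mono y (by omega))
  refine ⟨(List.range (x.length + K)).map fun t => W (t+1) - W t, ?_, ?_, ?_⟩
  · intro a ha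
    simp only [List.mem_map, List.mem_range] at ha
    obtain ⟨t, _, rfl⟩ := ha
    have bx : x.getD t 0 ≤ N := by
      rcases lt_or_ge t x.length with h' | h'
      · rw [List.getD_eq_getElem _ _ h']; exact hx _ (List.getElem_mem h')
      · rw [List.getD_eq_default _ _ h']; omega
    have by' : y.getD t 0 ≤ N := by
      rcases lt_or_ge t y.length with h' | h'
      · rw [List.getD_eq_getElem _ _ h']; exact hy _ (List.getElem_mem h')
      · rw [List.getD_eq_default _ _ h']; omega
    have e1 := psum_succ x t
    have e2 := psum_succ y t
    simp only [hWdef]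
    omega
  · exact produces_construct K x W hW hubx hlbx x.length rfl
  · exact produces_construct K y W hW huby hlby x.length hxy

/-- If two input sequences over `{0, …, N}` can produce a common output through
DTPC(N, K), then they can produce a common output all of whose entries are at most `N`.
Consequently, a code is zero-error for DTPC(N, K) iff it is zero-error for the
restricted channel DTPC(N, K; N). -/
theorem restricting_output_preserves_zero_error (N K : ℕ) (hN : 1 ≤ N) :
    (∀ n : ℕ, ∀ x y : List ℕ, x.length = n → y.length = n →
      (∀ a ∈ x, a ≤ N) → (∀ a ∈ y, a ≤ N) →
      (∃ z : List ℕ, Produces K x z ∧ Produces K y z) →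
      ∃ w : List ℕ, (∀ a ∈ w, a ≤ N) ∧ Produces K x w ∧ Produces K y w) ∧
    ∀ n : ℕ, ∀ C : Finset (List ℕ),
      (IsZeroError N K n C ↔ IsZeroErrorRestricted N K n C) := by
  constructor
  · rintro n x y hxn hyn hax hay ⟨z, hz1, hz2⟩
    exact common_output N K x y z (hxn.trans hyn.symm) hax hay hz1 hz2
  · intro n C
    constructor
    · intro h
      exact ⟨h.1, fun L₁ L₂ h1 h2 h3 h4 h5 z hz => h.2 L₁ L₂ h1 h2 h3 h4 h5 z ⟨hz.1.1, hz.2.1⟩⟩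
    · intro h
      refine ⟨h.1, ?_⟩
      intro L₁ L₂ hlen hm h1 h2 hne z hz
      have hflen : ∀ L : List (List ℕ), (∀ w ∈ L, w ∈ C) → L.flatten.length = L.length * n := by
        intro L
        induction L with
        | nil => simp
        | cons a L ih =>
          intro hmem
          simp only [List.flatten_cons, List.length_append, List.length_cons]
          rw [ih (fun w hw => hmem w (List.mem_cons_of_mem a hw)),
            (h.1 a (hmem a (List.mem_cons_self))).1]
          ring
      have hent : ∀ L : List (List ℕ), (∀ w ∈ L, w ∈ C) → ∀ a ∈ L.flatten, a ≤ N := by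
        intro L hmem a ha
        obtain ⟨w, hw, haw⟩ := List.mem_flatten.1 ha
        exact (h.1 w (hmem w hw)).2 a haw
      obtain ⟨w, hwN, hw1, hw2⟩ := common_output N K L₁.flatten L₂.flatten z
        (by rw [hflen L₁ h1, hflen L₂ h2, hlen]) (hent L₁ h1) (hent L₂ h2) hz.1 hz.2
      exact h.2 L₁ L₂ hlen hm h1 h2 hne w ⟨⟨hw1, hwN⟩, hw2, hwN⟩
end

section
/- A zero-padded code C of length n for DTPC(N,K) is a zero-error code if and only if for every two distinct codewords x, y ∈ C there exists no z with x ⤳ z and y ⤳ z. -/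
open Finset in
lemma produces_split (K n : ℕ) (hK : K ≤ n) (a x z : List ℕ)
    (ha : a.length = n) (hpad : List.replicate K 0 <:+ a)
    (h : Produces K (a ++ x) z) :
    Produces K a (z.take n ++ List.replicate K 0) ∧ Produces K x (z.drop n) := by
  obtain ⟨hlen, d, hd1, hd2⟩ := h
  rw [List.length_append, ha] at hlen hd1 hd2
  -- a is zero on its last K slots
  have hagd : ∀ i, n - K ≤ i → a.getD i 0 = 0 := by
    intro i hi
    obtain ⟨p, hp⟩ := hpad
    have hplen : p.length = n - K := by
      have := congrArg List.length hp
      simp [ha] at this; omega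
    rw [← hp, List.getD_append_right _ _ _ _ (by omega)]
    simp [List.getD]
  have hdzero : ∀ i, n - K ≤ i → i < n → ∀ j ∈ range (K + 1), d i j = 0 := by
    intro i hi1 hi2 j hj
    have h0 : ∑ j ∈ range (K + 1), d i j = 0 := by
      rw [hd1 i (by omega), List.getD_append _ _ _ _ (by omega), hagd i hi1]
    exact (Finset.sum_eq_zero_iff.mp h0) j hj
  have hnz : n ≤ z.length := by omega
  have htk : (z.take n).length = n := by simp; omega
  constructor
  · refine ⟨by simp [ha]; omega, d, ?_, ?_⟩
    · intro i hi
      rw [ha] at hi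
      rw [hd1 i (by omega)]
      exact List.getD_append _ _ _ _ (by omega)
    · intro t ht
      rw [ha] at ht ⊢
      rcases lt_or_ge t n with htn | htn
      · rw [List.getD_append _ _ _ _ (by omega)]
        have h1 : (z.take n).getD t 0 = z.getD t 0 := by
          conv_rhs => rw [← List.take_append_drop n z]
          rw [List.getD_append _ _ _ _ (by omega)]
        rw [h1, hd2 t (by omega)]
        refine (Finset.sum_subset (Finset.range_subset_range.mpr (by omega)) ?_).symm
        intro i _ hi
        rw [Finset.mem_range, not_lt] at hi
        exact Finset.sum_eq_zero fun j _ => if_neg (by omega)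
      · rw [List.getD_append_right _ _ _ _ (by omega), htk]
        have : (List.replicate K (0:ℕ)).getD (t - n) 0 = 0 := by simp [List.getD]
        rw [this]
        refine (Finset.sum_eq_zero fun i hi => Finset.sum_eq_zero fun j hj => ?_).symm
        rw [Finset.mem_range] at hi hj
        show (if i + j = t then d i j else 0) = 0
        by_cases hij : i + j = t
        · rw [if_pos hij]; exact hdzero i (by omega) hi j (Finset.mem_range.mpr hj)
        · exact if_neg hij
  · refine ⟨by simp; omega, fun i j => d (n + i) j, ?_, ?_⟩
    · intro i hi
      rw [hd1 (n + i) (by omega), List.getD_append_right _ _ _ _ (by omega), ha,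
        Nat.add_sub_cancel_left]
    · intro t ht
      have h1 : (z.drop n).getD t 0 = z.getD (n + t) 0 := by
        conv_rhs => rw [← List.take_append_drop n z]
        rw [List.getD_append_right _ _ _ _ (by omega), htk, Nat.add_sub_cancel_left]
      rw [h1, hd2 (n + t) (by omega), Finset.sum_range_add]
      have h2 : ∑ i ∈ range n, ∑ j ∈ range (K + 1),
          (if i + j = n + t then d i j else 0) = 0 := by
        refine Finset.sum_eq_zero fun i hi => Finset.sum_eq_zero fun j hj => ?_
        rw [Finset.mem_range] at hi hj
        show (if i + j = n + t then d i j else 0) = 0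
        by_cases hij : i + j = n + t
        · rw [if_pos hij]; exact hdzero i (by omega) hi j (Finset.mem_range.mpr hj)
        · exact if_neg hij
      rw [h2, zero_add]
      exact Finset.sum_congr rfl fun i _ => Finset.sum_congr rfl fun j _ =>
        if_congr (by omega) rfl rfl

/-- A zero-padded code `C` of length `n` for DTPC(N, K) is zero-error if and only if no
two distinct codewords of `C` can produce the same channel output. -/
theorem zero_padded_zero_error_iff_pairwise (N K n : ℕ) (hN : 1 ≤ N)
    (C : Finset (List ℕ)) (hcode : IsCode N n C) (hpad : IsZeroPadded K n C) :
    IsZeroError N K n C ↔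
      ∀ x ∈ C, ∀ y ∈ C, x ≠ y →
        ∀ z : List ℕ, ¬ (Produces K x z ∧ Produces K y z) := by
  constructor
  · rintro ⟨-, hZE⟩ x hx y hy hxy z ⟨h1, h2⟩
    exact hZE [x] [y] rfl (by simp) (by simpa using hx) (by simpa using hy)
      (by simpa using hxy) z ⟨by simpa using h1, by simpa using h2⟩
  · intro hpair
    refine ⟨hcode, ?_⟩
    rcases le_or_gt n K with hnK | hKn
    · -- all codewords are the zero word, so distinct concatenations don't exist
      have hall : ∀ x ∈ C, x = List.replicate n 0 := by
        intro x hx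
        have h1 := hpad x hx
        rw [min_eq_left hnK] at h1
        exact (h1.eq_of_length (by simp [(hcode x hx).1])).symm
      intro L₁ L₂ hlen _ hm1 hm2 hne
      exfalso
      apply hne
      have e1 : L₁ = List.replicate L₁.length (List.replicate n 0) :=
        List.eq_replicate_iff.mpr ⟨rfl, fun b hb => hall b (hm1 b hb)⟩
      have e2 : L₂ = List.replicate L₂.length (List.replicate n 0) :=
        List.eq_replicate_iff.mpr ⟨rfl, fun b hb => hall b (hm2 b hb)⟩
      rw [e1, e2, hlen]
    · -- K < n : codewords end with K zeros; peel blocks one at a time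
      have hpadK : ∀ x ∈ C, List.replicate K 0 <:+ x := by
        intro x hx
        have := hpad x hx
        rwa [min_eq_right hKn.le] at this
      intro L₁
      induction L₁ with
      | nil => intro L₂ _ h1; simp at h1
      | cons a L₁ ih =>
        intro L₂ hlen _ hm1 hm2 hne z hz
        obtain ⟨hz1, hz2⟩ := hz
        cases L₂ with
        | nil => simp at hlen
        | cons b L₂ =>
          have ha : a.length = n := (hcode a (hm1 a (List.mem_cons_self (a := a) (l := L₁)))).1
          have hb : b.length = n := (hcode b (hm2 b (List.mem_cons_self (a := b) (l := L₂)))).1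
          obtain ⟨pa1, pa2⟩ := produces_split K n hKn.le a L₁.flatten z ha
            (hpadK a (hm1 a (List.mem_cons_self (a := a) (l := L₁)))) (by rwa [List.flatten_cons] at hz1)
          obtain ⟨pb1, pb2⟩ := produces_split K n hKn.le b L₂.flatten z hb
            (hpadK b (hm2 b (List.mem_cons_self (a := b) (l := L₂)))) (by rwa [List.flatten_cons] at hz2)
          by_cases hab : a = b
          · subst hab
            have hL₁ : L₁ ≠ [] := by
              intro h
              subst h
              have : L₂ = [] := by simpa using hlen.symm
              subst this
              exact hne rfl
            exact ih L₂ (by simpa using hlen) (List.length_pos_iff.mpr hL₁)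
              (fun w hw => hm1 w (List.mem_cons_of_mem _ hw))
              (fun w hw => hm2 w (List.mem_cons_of_mem _ hw))
              (fun h => hne (by simp [List.flatten_cons, h])) (z.drop n) ⟨pa2, pb2⟩
          · exact hpair a (hm1 a (List.mem_cons_self (a := a) (l := L₁))) b (hm2 b (List.mem_cons_self (a := b) (l := L₂)))
              hab _ ⟨pa1, pb1⟩
end

section
/- Let n > K, let u ∈ ℕ^{K+1} have weight q, and let v ∈ ℕ^{n−K−1}. Then the sequence u ∘ v can produce through DTPC(N,K) the output 0^K ∘ q ∘ v ∘ 0^K ∈ ℕ^{n+K}. Consequently, a zero-padded zero-error code of length n > K for DTPC(N,K) cannot contain two distinct codewords of the form u₁ ∘ v and u₂ ∘ v where u₁, u₂ ∈ ℕ^{K+1} have equal weight. -/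
private lemma sum_getD (l : List ℕ) : ∑ i ∈ Finset.range l.length, l.getD i 0 = l.sum := by
  induction l with
  | nil => simp
  | cons a t ih =>
    rw [List.length_cons, Finset.sum_range_succ', List.sum_cons]
    simp only [List.getD_cons_succ, List.getD_cons_zero, ih]
    omega




/-- A sequence `u ∘ v` with `u` of length `K+1` and weight `q` can produce the output
`0^K ∘ q ∘ v ∘ 0^K` through DTPC(N, K). Consequently, a zero-padded zero-error code of
length `n > K` cannot contain two distinct codewords `u₁ ∘ v` and `u₂ ∘ v` with
`u₁, u₂` of length `K+1` and of equal weight. -/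
theorem no_two_codewords_with_equal_weight_prefix (N K n : ℕ) (hN : 1 ≤ N) (hn : K < n) :
    (∀ u v : List ℕ, u.length = K + 1 → v.length = n - K - 1 →
      Produces K (u ++ v)
        (List.replicate K 0 ++ ([u.sum] ++ (v ++ List.replicate K 0)))) ∧
    ∀ C : Finset (List ℕ), IsZeroPadded K n C → IsZeroError N K n C →
      ∀ u₁ u₂ v : List ℕ, u₁.length = K + 1 → u₂.length = K + 1 → u₁.sum = u₂.sum →
        u₁ ++ v ∈ C → u₂ ++ v ∈ C → u₁ = u₂ := by
  have main : ∀ u v : List ℕ, u.length = K + 1 →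
      Produces K (u ++ v)
        (List.replicate K 0 ++ ([u.sum] ++ (v ++ List.replicate K 0))) := by
    intro u v hu
    set x := u ++ v with hxdef
    have hxl : x.length = K + 1 + v.length := by simp [hxdef, hu]
    constructor
    · simp [hxl]; omega
    refine ⟨fun i j => if i ≤ K then (if i + j = K then x.getD i 0 else 0)
        else if j = 0 then x.getD i 0 else 0, ?_, ?_⟩
    · intro i hi
      by_cases hiK : i ≤ K
      · simp only [if_pos hiK]
        rw [Finset.sum_eq_single (K - i)]
        · rw [if_pos (by omega)]
        · intro j hj hne; rw [if_neg (by omega)]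
        · intro h; exact absurd (Finset.mem_range.mpr (by omega)) h
      · simp only [if_neg hiK]
        rw [Finset.sum_eq_single 0]
        · simp
        · intro j hj hne; rw [if_neg hne]
        · intro h; exact absurd (Finset.mem_range.mpr (by omega)) h
    · intro t ht
      have key : ∀ i, (∑ j ∈ Finset.range (K + 1),
          if i + j = t then
            (if i ≤ K then (if i + j = K then x.getD i 0 else 0)
              else if j = 0 then x.getD i 0 else 0) else 0)
          = if i ≤ K then (if t = K then x.getD i 0 else 0)
            else (if i = t then x.getD i 0 else 0) := by
        intro i
        by_cases hiK : i ≤ K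
        · rw [if_pos hiK]
          by_cases htK : t = K
          · rw [if_pos htK, Finset.sum_eq_single (K - i)]
            · rw [if_pos (by omega), if_pos hiK, if_pos (by omega)]
            · intro j hj hne
              split_ifs with h1 h2 h3 <;> first | rfl | omega
            · intro h; exact absurd (Finset.mem_range.mpr (by omega)) h
          · rw [if_neg htK]
            apply Finset.sum_eq_zero
            intro j hj
            split_ifs with h1 h2 h3 <;> first | rfl | omega
        · rw [if_neg hiK]
          by_cases hit : i = t
          · rw [if_pos hit, Finset.sum_eq_single 0]
            · rw [if_pos (by omega), if_neg hiK, if_pos rfl]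
            · intro j hj hne
              split_ifs with h1 h2 h3 <;> first | rfl | omega
            · intro h; exact absurd (Finset.mem_range.mpr (by omega)) h
          · rw [if_neg hit]
            apply Finset.sum_eq_zero
            intro j hj
            split_ifs with h1 h2 h3 <;> first | rfl | omega
      simp only [key]
      -- RHS computation
      have husum : ∑ i ∈ Finset.range (K + 1), x.getD i 0 = u.sum := by
        rw [← sum_getD u, hu]
        apply Finset.sum_congr rfl
        intro i hi
        simp only [Finset.mem_range] at hi
        rw [hxdef, List.getD_append _ _ _ _ (by omega : i < u.length)]
      -- z getD computation
      have hzlen : (List.replicate K 0 : List ℕ).length = K := List.length_replicate ..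
      rcases lt_trichotomy t K with h1 | h1 | h1
      · -- t < K
        rw [List.getD_append _ _ _ _ (by omega),
          Finset.sum_eq_zero (fun i hi => by
            split_ifs with h2 h3 h4 <;> first | rfl | omega)]
        simp [List.getD_eq_getElem?_getD, List.getElem?_replicate]
        split <;> rfl
      · -- t = K
        rw [h1]
        rw [List.getD_append_right _ _ _ _ (by omega), hzlen, Nat.sub_self]
        simp only [List.cons_append, List.getD_cons_zero]
        rw [← husum]
        symm
        simp only [if_true]
        trans ((∑ i ∈ Finset.range (K + 1),
          if i ≤ K then x.getD i 0
            else (if i = K then x.getD i 0 else 0)) : ℕ)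
        · refine (Finset.sum_subset (Finset.range_subset_range.mpr
            (by omega : K + 1 ≤ x.length)) ?_).symm
          intro i hi hni
          simp only [Finset.mem_range] at hi hni
          split_ifs <;> first | rfl | omega
        · apply Finset.sum_congr rfl
          intro i hi
          simp only [Finset.mem_range] at hi
          split_ifs <;> first | rfl | omega
      · -- t > K
        have hsingle : (∑ i ∈ Finset.range x.length,
            if i ≤ K then (if t = K then x.getD i 0 else 0)
              else (if i = t then x.getD i 0 else 0))
            = ∑ i ∈ Finset.range x.length, (if i = t then x.getD i 0 else 0) := by
          apply Finset.sum_congr rfl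
          intro i hi
          split_ifs with h2 h3 h4 <;> first | rfl | omega
        rw [hsingle, Finset.sum_ite_eq' (Finset.range x.length) t]
        by_cases h2 : t < x.length
        · rw [if_pos (Finset.mem_range.mpr h2)]
          -- z.getD t = v.getD (t - K - 1)
          rw [List.getD_append_right _ _ _ _ (by omega), hzlen]
          have h3 : t - K = (t - K - 1) + 1 := by omega
          rw [h3]
          simp only [List.cons_append, List.getD_cons_succ, List.nil_append]
          rw [List.getD_append _ _ _ _ (by omega : t - K - 1 < v.length)]
          rw [hxdef, List.getD_append_right _ _ _ _ (by omega : u.length ≤ t), hu,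
            Nat.sub_sub]
        · rw [if_neg (by simp; omega)]
          rw [List.getD_append_right _ _ _ _ (by omega), hzlen]
          have h3 : t - K = (t - K - 1) + 1 := by omega
          rw [h3]
          simp only [List.cons_append, List.getD_cons_succ, List.nil_append]
          rw [List.getD_append_right _ _ _ _ (by omega : v.length ≤ t - K - 1)]
          simp [List.getD_eq_getElem?_getD, List.getElem?_replicate]
          split <;> rfl
  refine ⟨fun u v hu _ => main u v hu, ?_⟩
  intro C hpad ⟨hcode, hze⟩ u₁ u₂ v h1 h2 hsum m1 m2
  by_contra hne
  have P1 := main u₁ v h1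
  have P2 := main u₂ v h2
  rw [← hsum] at P2
  exact hze [u₁ ++ v] [u₂ ++ v] rfl (by simp) (by simpa) (by simpa)
    (by simpa using hne)
    (List.replicate K 0 ++ ([u₁.sum] ++ (v ++ List.replicate K 0)))
    ⟨by simpa using P1, by simpa using P2⟩
end

section
/- Let n > K, let x ∈ C_{N,K}(n), and let y ∈ ℕ^{n+K} be a sequence with x ⤳ y. Put q = y_1 + y_2 + ⋯ + y_{K+1}. If q < N, then (x_1,…,x_{K+1}) = (q, 0, …, 0); and if q ≥ N, then x_1 = N. (This is the correctness of one step of the decoding algorithm for the codes C_{N,K}.) -/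
lemma take_sum_eq (l : List ℕ) (m : ℕ) (h : m ≤ l.length) :
    (l.take m).sum = ∑ t ∈ Finset.range m, l.getD t 0 := by
  induction m with
  | zero => simp
  | succ k ih =>
    rw [Finset.sum_range_succ, ← ih (by omega), List.take_succ, List.sum_append,
      List.getElem?_eq_getElem (by omega : k < l.length)]
    simp [List.getD, List.getElem?_eq_getElem (by omega : k < l.length)]

/-- Correctness of one step of the decoding algorithm for the codes `C_{N,K}`:
if `x ∈ C_{N,K}(n)` (`n > K`) produced the output `y` and `q` is the total number of
particles received in the first `K+1` slots, then `q < N` implies that `x` begins with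
`q ∘ 0^K`, while `q ≥ N` implies that the first symbol of `x` is `N`. -/
theorem decoding_step_correct (N K n : ℕ) (hN : 1 ≤ N) (hn : K < n)
    (x : List ℕ) (hx : x ∈ CNK N K n) (y : List ℕ) (hxy : Produces K x y)
    (q : ℕ) (hq : q = (y.take (K + 1)).sum) :
    (q < N → x.take (K + 1) = q :: List.replicate K 0) ∧
      (N ≤ q → x.headI = N) := by
  obtain ⟨hlenz, d, hd, hz⟩ := hxy
  rw [CNK, dif_neg (by omega)] at hx
  simp only [Finset.mem_union, Finset.mem_image, Finset.mem_biUnion, Finset.mem_range] at hx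
  have hxpos : 1 ≤ x.length := by
    rcases hx with ⟨v, _, rfl⟩ | ⟨i, hi, v, _, rfl⟩ <;> simp
  have hq' : q = ∑ i ∈ Finset.range x.length, ∑ j ∈ Finset.range (K + 1),
      if i + j ≤ K then d i j else 0 := by
    rw [hq, take_sum_eq _ _ (by omega)]
    rw [Finset.sum_congr rfl fun t ht => hz t (by simp at ht; omega)]
    rw [Finset.sum_comm]
    refine Finset.sum_congr rfl fun i _ => ?_
    rw [Finset.sum_comm]
    refine Finset.sum_congr rfl fun j _ => ?_
    rw [Finset.sum_ite_eq (Finset.range (K + 1)) (i + j) (fun _ => d i j)]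
    simp only [Finset.mem_range]
    congr 1
    simp [Nat.lt_succ_iff]
  rcases hx with ⟨v, _, rfl⟩ | ⟨i, hi, v, _, rfl⟩
  · -- x = N :: v, show N ≤ q
    have hNq : N ≤ q := by
      have h0 : (∑ j ∈ Finset.range (K + 1), if 0 + j ≤ K then d 0 j else 0) ≤ q := by
        rw [hq']
        exact Finset.single_le_sum (f := fun i => ∑ j ∈ Finset.range (K + 1),
          if i + j ≤ K then d i j else 0) (fun _ _ => Nat.zero_le _)
          (Finset.mem_range.mpr (by omega))
      have h1 : (∑ j ∈ Finset.range (K + 1), if 0 + j ≤ K then d 0 j else 0)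
          = ∑ j ∈ Finset.range (K + 1), d 0 j := by
        refine Finset.sum_congr rfl fun j hj => ?_
        simp at hj
        rw [if_pos (by omega)]
      rw [h1, hd 0 (by omega)] at h0
      simpa using h0
    exact ⟨fun h => absurd h (by omega), fun _ => rfl⟩
  · -- x = i :: replicate K 0 ++ v
    have hqi : q = i := by
      rw [hq', Finset.sum_eq_single 0]
      · have h1 : (∑ j ∈ Finset.range (K + 1), if 0 + j ≤ K then d 0 j else 0)
            = ∑ j ∈ Finset.range (K + 1), d 0 j := by
          refine Finset.sum_congr rfl fun j hj => ?_
          simp at hj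
          rw [if_pos (by omega)]
        rw [h1, hd 0 (by simp)]
        rfl
      · intro b hb hb0
        rcases Nat.lt_or_ge K b with hKb | hbK
        · refine Finset.sum_eq_zero fun j _ => if_neg (by omega)
        · -- 1 ≤ b ≤ K : x.getD b 0 = 0
          have hb1 : 1 ≤ b := by omega
          have hx0 : ((i :: List.replicate K 0) ++ v).getD b 0 = 0 := by
            have : ((i :: List.replicate K 0) ++ v).getD b 0
                = (i :: List.replicate K 0).getD b 0 := by
              rw [List.getD_append _ _ _ _ (by simp; omega)]
            rw [this]
            cases b with
            | zero => omega
            | succ c =>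
              simp [List.getD]
          have hsum0 := hd b (by simp at hb ⊢; omega)
          rw [hx0] at hsum0
          refine Finset.sum_eq_zero fun j hj => ?_
          simp [Finset.sum_eq_zero_iff.mp hsum0 j hj]
      · intro h; simp at h
    constructor
    · intro _
      rw [hqi]
      have : K + 1 = (i :: List.replicate K 0).length := by simp
      rw [this, List.take_left]
    · intro h; omega
end
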